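/- arXiv:2410.10788 — 6 statements merged into one kernel-verified Lean document; each statement's English description precedes it below -/
import Mathlib

section
/- Let I be a finite set of points in ℝ² with |I| odd. Then the LP yolk radius of I is at least one half of the yolk radius of I. -/
open scoped RealInnerProductSpace
open Real

noncomputable section

/-- Points of Euclidean space `ℝ^k`. -/
abbrev Pt (k : ℕ) := EuclideanSpace ℝ (Fin k)

/-- `(a, b)` (with `‖a‖ = 1`) is a median hyperplane for the finite set of ideal points `I`:
at least `|I|/2` points are on each closed side. -/
def IsMedianHyperplane {k : ℕ} (I : Finset (Pt k)) (a : Pt k) (b : ℝ) : Prop :=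
  ‖a‖ = 1 ∧
    (I.card : ℝ) / 2 ≤ ((I.filter fun x => ⟪a, x⟫ ≤ b).card : ℝ) ∧
    (I.card : ℝ) / 2 ≤ ((I.filter fun x => b ≤ ⟪a, x⟫).card : ℝ)

/-- A limiting median hyperplane for `I ⊆ ℝ^k` is a median hyperplane containing at least
`k` points of `I`. -/
def IsLimitingMedianHyperplane {k : ℕ} (I : Finset (Pt k)) (a : Pt k) (b : ℝ) : Prop :=
  IsMedianHyperplane I a b ∧ k ≤ (I.filter fun x => ⟪a, x⟫ = b).card

/-- The yolk radius: infimum of `r ≥ 0` such that some closed ball `B(c,r)` intersects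
every median hyperplane of `I` (the ball `B(c,r)` meets `H(a,b)` iff `|⟪a,c⟫ - b| ≤ r`). -/
def yolkRadius {k : ℕ} (I : Finset (Pt k)) : ℝ :=
  sInf {r : ℝ | 0 ≤ r ∧ ∃ c : Pt k, ∀ a b, IsMedianHyperplane I a b → |⟪a, c⟫ - b| ≤ r}

/-- The LP yolk radius: infimum of `r ≥ 0` such that some closed ball `B(c,r)` intersects
every limiting median hyperplane of `I`. -/
def lpYolkRadius {k : ℕ} (I : Finset (Pt k)) : ℝ :=
  sInf {r : ℝ | 0 ≤ r ∧ ∃ c : Pt k, ∀ a b, IsLimitingMedianHyperplane I a b → |⟪a, c⟫ - b| ≤ r}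

/-- `B(c,r)` is a yolk of `I`: it intersects every median hyperplane, and every closed ball
intersecting every median hyperplane has radius at least `r`. -/
def IsYolk {k : ℕ} (I : Finset (Pt k)) (c : Pt k) (r : ℝ) : Prop :=
  (∀ a b, IsMedianHyperplane I a b → |⟪a, c⟫ - b| ≤ r) ∧
  ∀ (c' : Pt k) (r' : ℝ),
    (∀ a b, IsMedianHyperplane I a b → |⟪a, c'⟫ - b| ≤ r') → r ≤ r'

/-- `B(c,r)` is an LP yolk of `I`: it intersects every limiting median hyperplane, and every
closed ball intersecting every limiting median hyperplane has radius at least `r`. -/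
def IsLPYolk {k : ℕ} (I : Finset (Pt k)) (c : Pt k) (r : ℝ) : Prop :=
  (∀ a b, IsLimitingMedianHyperplane I a b → |⟪a, c⟫ - b| ≤ r) ∧
  ∀ (c' : Pt k) (r' : ℝ),
    (∀ a b, IsLimitingMedianHyperplane I a b → |⟪a, c'⟫ - b| ≤ r') → r ≤ r'

set_option maxHeartbeats 1600000

namespace YolkAux

def dirv (φ : ℝ) : Pt 2 := (WithLp.equiv 2 (Fin 2 → ℝ)).symm ![Real.cos φ, Real.sin φ]

lemma norm_dirv (φ : ℝ) : ‖dirv φ‖ = 1 := by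
  simp [dirv, EuclideanSpace.norm_eq, Fin.sum_univ_two]

def prj (p : Pt 2) (φ : ℝ) : ℝ := Real.cos φ * p 0 + Real.sin φ * p 1

lemma inner_dirv' (φ : ℝ) (p : Pt 2) : ⟪dirv φ, p⟫ = prj p φ := by
  simp [dirv, prj, PiLp.inner_apply, Fin.sum_univ_two, RCLike.inner_apply]; ring

lemma prj_sub (p q : Pt 2) (φ : ℝ) : prj (p - q) φ = prj p φ - prj q φ := by
  simp [prj]; ring

lemma prj_smul_sub (μ : ℝ) (v : Pt 2) (φ : ℝ) : prj (μ • v) φ = μ * prj v φ := by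
  simp [prj]; ring

lemma abs_prj_le_norm (p : Pt 2) (φ : ℝ) : |prj p φ| ≤ ‖p‖ := by
  rw [← inner_dirv']
  calc |⟪dirv φ, p⟫| ≤ ‖dirv φ‖ * ‖p‖ := abs_real_inner_le_norm _ _
  _ = ‖p‖ := by rw [norm_dirv]; ring

lemma prj_continuous (p : Pt 2) : Continuous (prj p) := by
  unfold prj; fun_prop

lemma prj_polar (v : Pt 2) (γ : ℝ) (h0 : v 0 = ‖v‖ * Real.cos γ)
    (h1 : v 1 = ‖v‖ * Real.sin γ) (φ : ℝ) : prj v φ = ‖v‖ * Real.cos (φ - γ) := by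
  simp [prj, h0, h1, Real.cos_sub]; ring

lemma exists_angle (a : Pt 2) (ha : ‖a‖ = 1) : ∃ φ, a = dirv φ := by
  set z : ℂ := ⟨a 0, a 1⟩ with hz
  have habs : ‖z‖ = 1 := by
    rw [show ‖z‖ = √(Complex.normSq z) from rfl, hz, Complex.normSq_mk]
    rw [EuclideanSpace.norm_eq, Fin.sum_univ_two] at ha
    rw [show a 0 * a 0 + a 1 * a 1 = a 0^2 + a 1^2 by ring]
    simpa [sq_abs] using ha
  have hz0 : z ≠ 0 := by
    intro h; rw [h] at habs; simp at habs
  refine ⟨z.arg, ?_⟩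
  have hc := Complex.cos_arg hz0
  have hs := Complex.sin_arg z
  rw [habs] at hc hs
  ext i
  fin_cases i
  · show a 0 = dirv z.arg 0
    have := hc.symm; simpa [dirv] using this
  · show a 1 = dirv z.arg 1
    have := hs.symm; simpa [dirv] using this

lemma exists_polar (v : Pt 2) (hv : v ≠ 0) :
    ∃ γ, 0 < ‖v‖ ∧ v 0 = ‖v‖ * Real.cos γ ∧ v 1 = ‖v‖ * Real.sin γ := by
  set z : ℂ := ⟨v 0, v 1⟩ with hz
  have habs : ‖z‖ = ‖v‖ := by
    rw [show ‖z‖ = √(Complex.normSq z) from rfl, hz, Complex.normSq_mk, EuclideanSpace.norm_eq, Fin.sum_univ_two]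
    rw [show v 0 * v 0 + v 1 * v 1 = v 0^2 + v 1^2 by ring]
    simp [sq_abs]
  have hn : 0 < ‖v‖ := norm_pos_iff.mpr hv
  have hz0 : z ≠ 0 := by
    intro h
    rw [h] at habs; simp at habs; rw [← habs] at hn; simp at hn
  have hc := Complex.cos_arg hz0
  have hs := Complex.sin_arg z
  rw [habs] at hc hs
  refine ⟨z.arg, hn, ?_, ?_⟩
  · field_simp at hc; rw [show v 0 = z.re from rfl, ← hc]; ring
  · field_simp at hs; rw [show v 1 = z.im from rfl, ← hs]; ring

variable {I : Finset (Pt 2)}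

lemma half_lt {n k : ℕ} (hodd : Odd n) (h : (n : ℝ) / 2 ≤ (k : ℝ)) : n + 1 ≤ 2 * k := by
  have h2 : (n : ℝ) ≤ 2 * k := by linarith
  have h3 : n ≤ 2 * k := by exact_mod_cast h2
  rcases hodd with ⟨m, hm⟩
  omega

lemma median_value_unique (hodd : Odd I.card) {a : Pt 2} {b b' : ℝ}
    (h : IsMedianHyperplane I a b) (h' : IsMedianHyperplane I a b') : b = b' := by
  classical
  by_contra hne
  wlog hlt : b < b' generalizing b b'
  · exact this h' h (Ne.symm hne) (lt_of_le_of_ne (not_lt.mp hlt) (Ne.symm hne))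
  have hA := half_lt hodd h.2.1
  have hB := half_lt hodd h'.2.2
  have hdisj : Disjoint (I.filter fun x => ⟪a, x⟫ ≤ b) (I.filter fun x => b' ≤ ⟪a, x⟫) := by
    rw [Finset.disjoint_left]
    intro x hx1 hx2
    rw [Finset.mem_filter] at hx1 hx2
    exact absurd (le_trans hx2.2 hx1.2) (not_le.mpr hlt)
  have hcard := Finset.card_union_of_disjoint hdisj
  have hsub : ((I.filter fun x => ⟪a, x⟫ ≤ b) ∪ (I.filter fun x => b' ≤ ⟪a, x⟫)) ⊆ I := by
    intro x hx; rw [Finset.mem_union] at hx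
    rcases hx with hx | hx <;> exact (Finset.mem_filter.mp hx).1
  have := Finset.card_le_card hsub
  omega

lemma median_point_exists (hodd : Odd I.card) {a : Pt 2} {b : ℝ}
    (h : IsMedianHyperplane I a b) : ∃ p ∈ I, ⟪a, p⟫ = b := by
  classical
  have hA := half_lt hodd h.2.1
  have hB := half_lt hodd h.2.2
  have hunion : ((I.filter fun x => ⟪a, x⟫ ≤ b) ∪ (I.filter fun x => b ≤ ⟪a, x⟫)) = I := by
    apply Finset.Subset.antisymm
    · intro x hx; rw [Finset.mem_union] at hx
      rcases hx with hx | hx <;> exact (Finset.mem_filter.mp hx).1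
    · intro x hx; rw [Finset.mem_union]
      rcases le_total (⟪a, x⟫ : ℝ) b with h1 | h1
      · exact Or.inl (Finset.mem_filter.mpr ⟨hx, h1⟩)
      · exact Or.inr (Finset.mem_filter.mpr ⟨hx, h1⟩)
  have hcui := Finset.card_union_add_card_inter (I.filter fun x => ⟪a, x⟫ ≤ b)
    (I.filter fun x => b ≤ ⟪a, x⟫)
  rw [hunion] at hcui
  have hint : ((I.filter fun x => ⟪a, x⟫ ≤ b) ∩ (I.filter fun x => b ≤ ⟪a, x⟫)).Nonempty := by
    rw [← Finset.card_pos]; omega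
  obtain ⟨p, hp⟩ := hint
  rw [Finset.mem_inter, Finset.mem_filter, Finset.mem_filter] at hp
  exact ⟨p, hp.1.1, le_antisymm hp.1.2 hp.2.2⟩

lemma median_neg {a : Pt 2} {b : ℝ} (h : IsMedianHyperplane I a b) :
    IsMedianHyperplane I (-a) (-b) := by
  obtain ⟨hn, h1, h2⟩ := h
  refine ⟨by rw [norm_neg]; exact hn, ?_, ?_⟩
  · have : (I.filter fun x => ⟪-a, x⟫ ≤ -b) = (I.filter fun x => b ≤ ⟪a, x⟫) := by
      apply Finset.filter_congr; intro x _; simp [inner_neg_left]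
    rw [this]; exact h2
  · have : (I.filter fun x => -b ≤ ⟪-a, x⟫) = (I.filter fun x => ⟪a, x⟫ ≤ b) := by
      apply Finset.filter_congr; intro x _; simp [inner_neg_left]
    rw [this]; exact h1

lemma abs_cos_add_int_mul_pi (x : ℝ) (k : ℤ) : |Real.cos (x + k * Real.pi)| = |Real.cos x| := by
  have h1 : Real.cos (x + k * Real.pi) = Real.cos x * Real.cos (k * Real.pi) := by
    rw [Real.cos_add, Real.sin_int_mul_pi]; ring
  have h2 : |Real.cos (k * Real.pi)| = 1 := by
    have hs : Real.sin (k * Real.pi) = 0 := Real.sin_int_mul_pi k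
    have h3 := Real.sin_sq_add_cos_sq (k * Real.pi)
    rw [hs] at h3
    nlinarith [abs_nonneg (Real.cos (k * Real.pi)), sq_abs (Real.cos (k * Real.pi))]
  rw [h1, abs_mul, h2, mul_one]

lemma abs_cos_le_max {θ θ₁ θ₂ : ℝ} (h1 : θ₁ ≤ θ) (h2 : θ ≤ θ₂) (h0 : 0 ≤ θ₁) (hπ : θ₂ ≤ Real.pi) :
    |Real.cos θ| ≤ max |Real.cos θ₁| |Real.cos θ₂| := by
  have ha : Real.cos θ ≤ Real.cos θ₁ :=
    Real.cos_le_cos_of_nonneg_of_le_pi h0 (le_trans h2 hπ) h1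
  have hb : Real.cos θ₂ ≤ Real.cos θ :=
    Real.cos_le_cos_of_nonneg_of_le_pi (le_trans h0 h1) hπ h2
  rw [abs_le]
  have m1 := le_max_left |Real.cos θ₁| |Real.cos θ₂|
  have m2 := le_max_right |Real.cos θ₁| |Real.cos θ₂|
  have n1 := le_abs_self (Real.cos θ₁)
  have n2 := neg_abs_le (Real.cos θ₂)
  constructor <;> [linarith; linarith]

lemma cos_ge_of_le_pi_div_six {y : ℝ} (h0 : 0 ≤ y) (h : y ≤ Real.pi / 6) :
    Real.sqrt 3 / 2 ≤ Real.cos y := by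
  have := Real.cos_le_cos_of_nonneg_of_le_pi h0 (by linarith [Real.pi_pos] : (Real.pi/6:ℝ) ≤ Real.pi) h
  rw [Real.cos_pi_div_six] at this
  exact this

lemma trig_key {x : ℝ} (h1 : Real.pi / 3 ≤ x) (h2 : x ≤ Real.pi / 2) :
    1 - Real.sin x ≤ 2 * Real.sin x * Real.cos x := by
  have hpi := Real.pi_pos
  set y := Real.pi / 2 - x with hy
  have hy0 : 0 ≤ y := by rw [hy]; linarith
  have hy6 : y ≤ Real.pi / 6 := by rw [hy]; linarith
  have hsx : Real.sin x = Real.cos y := by rw [hy, Real.cos_pi_div_two_sub]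
  have hcx : Real.cos x = Real.sin y := by rw [hy, Real.sin_pi_div_two_sub]
  rw [hsx, hcx]
  -- goal : 1 - cos y ≤ 2 cos y sin y
  have e1 : 1 - Real.cos y = 2 * Real.sin (y/2)^2 := by
    have := Real.sin_sq_eq_half_sub (y/2)
    rw [show 2 * (y/2) = y by ring] at this
    linarith
  have e2 : Real.sin y = 2 * Real.sin (y/2) * Real.cos (y/2) := by
    have := Real.sin_two_mul (y/2)
    rw [show 2 * (y/2) = y by ring] at this
    exact this
  have hs0 : 0 ≤ Real.sin (y/2) := Real.sin_nonneg_of_nonneg_of_le_pi (by linarith) (by linarith)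
  have hshalf : Real.sin (y/2) ≤ 1/2 := by
    have : Real.sin (y/2) = Real.cos (Real.pi/2 - y/2) := (Real.cos_pi_div_two_sub _).symm
    rw [this]
    have h3 : Real.cos (Real.pi/2 - y/2) ≤ Real.cos (Real.pi/3) :=
      Real.cos_le_cos_of_nonneg_of_le_pi (by linarith) (by linarith) (by linarith)
    rw [Real.cos_pi_div_three] at h3
    exact h3
  have hcy : Real.sqrt 3 / 2 ≤ Real.cos y := cos_ge_of_le_pi_div_six hy0 hy6
  have hcy2 : Real.sqrt 3 / 2 ≤ Real.cos (y/2) := cos_ge_of_le_pi_div_six (by linarith) (by linarith)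
  have h3 : (Real.sqrt 3)^2 = 3 := Real.sq_sqrt (by norm_num)
  have hkey : Real.sin (y/2) ≤ 2 * Real.cos y * Real.cos (y/2) := by
    nlinarith [Real.sqrt_nonneg 3]
  rw [e1, e2]
  nlinarith [hs0, hkey]

lemma sin_addsub (A B : ℝ) :
    Real.sin (A + B) + Real.sin (A - B) = 2 * Real.sin A * Real.cos B := by
  rw [Real.sin_add, Real.sin_sub]; ring

lemma interp_aux {w0 w1 d u φ r : ℝ} (hd : d ≤ φ) (hu : φ ≤ u) (hlen : u - d < Real.pi)
    (h1 : |Real.cos d * w0 + Real.sin d * w1| ≤ r) (h2 : |Real.cos u * w0 + Real.sin u * w1| ≤ r)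
    (hr : 0 ≤ r) :
    |Real.cos φ * w0 + Real.sin φ * w1| ≤ r / Real.cos ((u - d) / 2) := by
  rcases eq_or_lt_of_le (le_trans hd hu) with hdu | hdu
  · -- d = u, so φ = d
    have hφ : φ = d := le_antisymm (by rw [hdu]; exact hu) hd
    rw [hφ, ← hdu]
    norm_num [Real.cos_zero]
    exact h1
  · set A := (u - d) / 2 with hA
    have hA0 : 0 < A := by rw [hA]; linarith
    have hA2 : A < Real.pi / 2 := by rw [hA]; linarith
    have hcosA : 0 < Real.cos A := Real.cos_pos_of_mem_Ioo ⟨by linarith, hA2⟩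
    have hsinA : 0 < Real.sin A := Real.sin_pos_of_pos_of_lt_pi hA0 (by linarith [Real.pi_pos])
    have key : Real.sin (u - d) * (Real.cos φ * w0 + Real.sin φ * w1)
        = Real.sin (u - φ) * (Real.cos d * w0 + Real.sin d * w1)
          + Real.sin (φ - d) * (Real.cos u * w0 + Real.sin u * w1) := by
      simp only [Real.sin_sub]; ring
    have hsud : Real.sin (u - d) = 2 * Real.sin A * Real.cos A := by
      rw [hA, ← Real.sin_two_mul]; ring_nf
    have hsum : Real.sin (u - φ) + Real.sin (φ - d) ≤ 2 * Real.sin A := by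
      have hexp : Real.sin (u - φ) + Real.sin (φ - d)
          = 2 * Real.sin A * Real.cos ((u + d)/2 - φ) := by
        have h := sin_addsub A ((u + d)/2 - φ)
        have e1 : A + ((u + d)/2 - φ) = u - φ := by rw [hA]; ring
        have e2 : A - ((u + d)/2 - φ) = φ - d := by rw [hA]; ring
        rw [e1, e2] at h
        exact h
      rw [hexp]
      nlinarith [Real.cos_le_one ((u + d)/2 - φ), hsinA]
    have hs1 : 0 ≤ Real.sin (u - φ) :=
      Real.sin_nonneg_of_nonneg_of_le_pi (by linarith) (by linarith)
    have hs2 : 0 ≤ Real.sin (φ - d) :=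
      Real.sin_nonneg_of_nonneg_of_le_pi (by linarith) (by linarith)
    have habs : Real.sin (u - d) * |Real.cos φ * w0 + Real.sin φ * w1|
        ≤ 2 * Real.sin A * r := by
      have := abs_le.mp h1
      have := abs_le.mp h2
      calc Real.sin (u - d) * |Real.cos φ * w0 + Real.sin φ * w1|
          = |Real.sin (u - d) * (Real.cos φ * w0 + Real.sin φ * w1)| := by
            rw [abs_mul, abs_of_nonneg (by nlinarith : (0:ℝ) ≤ Real.sin (u - d))]
      _ = |Real.sin (u - φ) * (Real.cos d * w0 + Real.sin d * w1)
          + Real.sin (φ - d) * (Real.cos u * w0 + Real.sin u * w1)| := by rw [key]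
      _ ≤ |Real.sin (u - φ) * (Real.cos d * w0 + Real.sin d * w1)|
          + |Real.sin (φ - d) * (Real.cos u * w0 + Real.sin u * w1)| := abs_add_le _ _
      _ ≤ Real.sin (u - φ) * r + Real.sin (φ - d) * r := by
            rw [abs_mul, abs_mul, abs_of_nonneg hs1, abs_of_nonneg hs2]
            have := mul_le_mul_of_nonneg_left h1 hs1
            have := mul_le_mul_of_nonneg_left h2 hs2
            nlinarith
      _ = (Real.sin (u - φ) + Real.sin (φ - d)) * r := by ring
      _ ≤ 2 * Real.sin A * r := by nlinarith
    rw [hsud] at habs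
    rw [le_div_iff₀ hcosA]
    nlinarith [abs_nonneg (Real.cos φ * w0 + Real.sin φ * w1)]

/-- zeros of prj w bracketing φ -/
lemma zero_bracket (w : Pt 2) (hw : w ≠ 0) (φ : ℝ) :
    ∃ zm zp, zm ≤ φ ∧ φ ≤ zp ∧ zp ≤ zm + Real.pi ∧ prj w zm = 0 ∧ prj w zp = 0 ∧
      (∀ ψ, prj w ψ = 0 → (ψ ≤ φ → ψ ≤ zm) ∧ (φ ≤ ψ → zp ≤ ψ)) := by
  obtain ⟨γ, hρ, h0, h1⟩ := exists_polar w hw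
  have hπ := Real.pi_pos
  have hzero : ∀ ψ, prj w ψ = 0 ↔ ∃ k : ℤ, ψ = γ + Real.pi/2 + k * Real.pi := by
    intro ψ
    rw [prj_polar w γ h0 h1 ψ, mul_eq_zero]
    constructor
    · rintro (h | h)
      · exact absurd h (ne_of_gt hρ)
      · obtain ⟨k, hk⟩ := Real.cos_eq_zero_iff.mp h
        exact ⟨k, by linarith [hk]⟩
    · rintro ⟨k, hk⟩
      right
      rw [hk]
      rw [show γ + Real.pi/2 + k * Real.pi - γ = (2 * (k:ℝ) + 1) * Real.pi / 2 by ring]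
      exact Real.cos_eq_zero_iff.mpr ⟨k, rfl⟩
  set c := γ + Real.pi/2 with hc
  set θ := (φ - c) / Real.pi with hθ
  have hθπ : θ * Real.pi = φ - c := by rw [hθ]; field_simp
  refine ⟨c + ⌊θ⌋ * Real.pi, c + ⌈θ⌉ * Real.pi, ?_, ?_, ?_, ?_, ?_, ?_⟩
  · have := Int.floor_le θ
    nlinarith
  · have := Int.le_ceil θ
    nlinarith
  · have := Int.ceil_le_floor_add_one θ
    have h2 : (⌈θ⌉:ℝ) ≤ (⌊θ⌋:ℝ) + 1 := by exact_mod_cast this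
    nlinarith
  · exact (hzero _).mpr ⟨⌊θ⌋, by rw [hc]⟩
  · exact (hzero _).mpr ⟨⌈θ⌉, by rw [hc]⟩
  · intro ψ hψ
    obtain ⟨m, hm⟩ := (hzero ψ).mp hψ
    constructor
    · intro hle
      have : (m:ℝ) * Real.pi ≤ θ * Real.pi := by
        rw [hm] at hle; nlinarith
      have hm' : (m:ℝ) ≤ θ := by
        by_contra hcon
        push_neg at hcon
        nlinarith
      have h5 := Int.le_floor.mpr hm'
      have h6 : (m:ℝ) ≤ (⌊θ⌋:ℝ) := by exact_mod_cast h5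
      rw [hm]
      nlinarith
    · intro hle
      have : θ * Real.pi ≤ (m:ℝ) * Real.pi := by
        rw [hm] at hle; nlinarith
      have hm' : θ ≤ (m:ℝ) := by
        by_contra hcon
        push_neg at hcon
        nlinarith
      have h5 := Int.ceil_le.mpr hm'
      have h6 : (⌈θ⌉:ℝ) ≤ (m:ℝ) := by exact_mod_cast h5
      rw [hm]
      nlinarith


def Med (I : Finset (Pt 2)) (pvt : Pt 2) (φ : ℝ) : Prop :=
  IsMedianHyperplane I (dirv φ) (prj pvt φ)

def Lim (I : Finset (Pt 2)) (pvt : Pt 2) (φ : ℝ) : Prop :=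
  IsLimitingMedianHyperplane I (dirv φ) (prj pvt φ)

/-- sign persistence: no zero of `prj w` strictly between, weak sign persists -/
lemma sign_persist {w : Pt 2} {zm zp φ ψ : ℝ} (hzm : zm ≤ φ) (hzp : φ ≤ zp)
    (hψ1 : zm ≤ ψ) (hψ2 : ψ ≤ zp)
    (hmin : ∀ ξ, prj w ξ = 0 → (ξ ≤ φ → ξ ≤ zm) ∧ (φ ≤ ξ → zp ≤ ξ))
    (hneg : prj w φ < 0) : prj w ψ ≤ 0 := by
  by_contra hpos
  push_neg at hpos
  have hne : φ ≠ ψ := by intro h; rw [h] at hneg; linarith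
  have hcont := (prj_continuous w).continuousOn (s := Set.Icc (min φ ψ) (max φ ψ))
  rcases lt_or_gt_of_ne hne with hlt | hlt
  · -- φ < ψ, prj w φ < 0 < prj w ψ
    have := intermediate_value_Ioo (le_of_lt hlt) ((prj_continuous w).continuousOn)
    have h0 : (0:ℝ) ∈ Set.Ioo (prj w φ) (prj w ψ) := ⟨hneg, hpos⟩
    obtain ⟨ξ, hξmem, hξ0⟩ := this h0
    have h1 := (hmin ξ hξ0).1
    have h2 := (hmin ξ hξ0).2
    rcases le_total ξ φ with h | h
    · have := h1 h; linarith [hξmem.1]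
    · have := h2 h; linarith [hξmem.2]
  · have := intermediate_value_Ioo' (le_of_lt hlt) ((prj_continuous w).continuousOn)
    have h0 : (0:ℝ) ∈ Set.Ioo (prj w φ) (prj w ψ) := ⟨hneg, hpos⟩
    obtain ⟨ξ, hξmem, hξ0⟩ := this h0
    have h1 := (hmin ξ hξ0).1
    have h2 := (hmin ξ hξ0).2
    rcases le_total ξ φ with h | h
    · have := h1 h; linarith [hξmem.1]
    · have := h2 h; linarith [hξmem.2]


lemma bracket (hn : 2 ≤ I.card) {pvt : Pt 2} (hpvt : pvt ∈ I) {φ : ℝ}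
    (hmed : Med I pvt φ) :
    ∃ d u, d ≤ φ ∧ φ ≤ u ∧ u - d ≤ Real.pi ∧
      (∀ ψ, d ≤ ψ → ψ ≤ u → Med I pvt ψ) ∧ Lim I pvt d ∧ Lim I pvt u ∧
      (∀ ψ q, d < ψ → ψ < u → q ∈ I → prj q ψ = prj pvt ψ → q = pvt) := by
  classical
  have hπ := Real.pi_pos
  by_cases hlim : ∃ q ∈ I, q ≠ pvt ∧ prj q φ = prj pvt φ
  · obtain ⟨q, hqI, hqne, hqeq⟩ := hlim
    refine ⟨φ, φ, le_refl _, le_refl _, by linarith, ?_, ?_, ?_, ?_⟩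
    · intro ψ h1 h2
      have : ψ = φ := le_antisymm h2 h1
      rw [this]; exact hmed
    · refine ⟨hmed, ?_⟩
      apply Finset.one_lt_card.mpr
      refine ⟨q, ?_, pvt, ?_, hqne⟩
      · rw [Finset.mem_filter]; exact ⟨hqI, by rw [inner_dirv']; exact hqeq⟩
      · rw [Finset.mem_filter]; exact ⟨hpvt, by rw [inner_dirv']⟩
    · refine ⟨hmed, ?_⟩
      apply Finset.one_lt_card.mpr
      refine ⟨q, ?_, pvt, ?_, hqne⟩
      · rw [Finset.mem_filter]; exact ⟨hqI, by rw [inner_dirv']; exact hqeq⟩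
      · rw [Finset.mem_filter]; exact ⟨hpvt, by rw [inner_dirv']⟩
    · intro ψ q' h1 h2 _ _
      exact absurd (lt_trans h1 h2) (lt_irrefl _)
  · push_neg at hlim
    set J := I.erase pvt with hJdef
    have hJ : J.Nonempty := by
      rw [← Finset.card_pos, Finset.card_erase_of_mem hpvt]
      omega
    have H : ∀ q ∈ J, ∃ zm zp, zm ≤ φ ∧ φ ≤ zp ∧ zp ≤ zm + Real.pi ∧
        prj (q - pvt) zm = 0 ∧ prj (q - pvt) zp = 0 ∧
        (∀ ψ, prj (q - pvt) ψ = 0 → (ψ ≤ φ → ψ ≤ zm) ∧ (φ ≤ ψ → zp ≤ ψ)) := by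
      intro q hq
      have hne : q ≠ pvt := (Finset.mem_erase.mp hq).1
      exact zero_bracket (q - pvt) (sub_ne_zero.mpr hne) φ
    choose! zm zp h1 h2 h3 h4 h5 h6 using H
    set d := J.sup' hJ zm with hd
    set u := J.inf' hJ zp with hu
    have hdφ : d ≤ φ := Finset.sup'_le hJ zm h1
    have hφu : φ ≤ u := Finset.le_inf' hJ zp h2
    obtain ⟨q₀, hq₀J, hq₀⟩ := Finset.exists_mem_eq_sup' hJ zm
    obtain ⟨q₁, hq₁J, hq₁⟩ := Finset.exists_mem_eq_inf' hJ zp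
    have hdu : u - d ≤ Real.pi := by
      have hud : u ≤ zp q₀ := Finset.inf'_le zp hq₀J
      have := h3 q₀ hq₀J
      rw [hd, hq₀]
      linarith
    -- membership bounds
    have hdzm : ∀ q ∈ J, zm q ≤ d := fun q hq => Finset.le_sup' zm hq
    have huzp : ∀ q ∈ J, u ≤ zp q := fun q hq => Finset.inf'_le zp hq
    -- median persistence
    have hpers : ∀ ψ, d ≤ ψ → ψ ≤ u → Med I pvt ψ := by
      intro ψ hψ1 hψ2
      refine ⟨norm_dirv ψ, ?_, ?_⟩
      · have hsub : (I.filter fun x => ⟪dirv φ, x⟫ ≤ prj pvt φ) ⊆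
            (I.filter fun x => ⟪dirv ψ, x⟫ ≤ prj pvt ψ) := by
          intro x hx
          rw [Finset.mem_filter] at hx ⊢
          obtain ⟨hxI, hxle⟩ := hx
          refine ⟨hxI, ?_⟩
          rw [inner_dirv'] at hxle ⊢
          by_cases hxp : x = pvt
          · rw [hxp]
          · have hstrict : prj x φ < prj pvt φ :=
              lt_of_le_of_ne hxle (hlim x hxI hxp)
            have hn : prj (x - pvt) φ < 0 := by rw [prj_sub]; linarith
            have hxJ : x ∈ J := Finset.mem_erase.mpr ⟨hxp, hxI⟩
            have := sign_persist (w := x - pvt)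
              ((h1 x hxJ)) ((h2 x hxJ))
              (le_trans (hdzm x hxJ) hψ1) (le_trans hψ2 (huzp x hxJ))
              (h6 x hxJ) hn
            rw [prj_sub] at this; linarith
        calc ((I.card : ℝ)) / 2 ≤ _ := hmed.2.1
        _ ≤ _ := by exact_mod_cast Finset.card_le_card hsub
      · have hsub : (I.filter fun x => prj pvt φ ≤ ⟪dirv φ, x⟫) ⊆
            (I.filter fun x => prj pvt ψ ≤ ⟪dirv ψ, x⟫) := by
          intro x hx
          rw [Finset.mem_filter] at hx ⊢
          obtain ⟨hxI, hxle⟩ := hx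
          refine ⟨hxI, ?_⟩
          rw [inner_dirv'] at hxle ⊢
          by_cases hxp : x = pvt
          · rw [hxp]
          · have hstrict : prj pvt φ < prj x φ :=
              lt_of_le_of_ne hxle (fun h => (hlim x hxI hxp) h.symm)
            have hn : prj (pvt - x) φ < 0 := by rw [prj_sub]; linarith
            have hxJ : x ∈ J := Finset.mem_erase.mpr ⟨hxp, hxI⟩
            have hzeros : ∀ ξ, prj (pvt - x) ξ = 0 → (ξ ≤ φ → ξ ≤ zm x) ∧ (φ ≤ ξ → zp x ≤ ξ) := by
              intro ξ hξ
              apply h6 x hxJ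
              rw [prj_sub] at hξ ⊢
              linarith
            have := sign_persist (w := pvt - x)
              ((h1 x hxJ)) ((h2 x hxJ))
              (le_trans (hdzm x hxJ) hψ1) (le_trans hψ2 (huzp x hxJ))
              hzeros hn
            rw [prj_sub] at this; linarith
        calc ((I.card : ℝ)) / 2 ≤ _ := hmed.2.2
        _ ≤ _ := by exact_mod_cast Finset.card_le_card hsub
    refine ⟨d, u, hdφ, hφu, hdu, hpers, ?_, ?_, ?_⟩
    · refine ⟨hpers d (le_refl _) (by linarith), ?_⟩
      apply Finset.one_lt_card.mpr
      have hq₀ne : q₀ ≠ pvt := (Finset.mem_erase.mp hq₀J).1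
      have hq₀I : q₀ ∈ I := (Finset.mem_erase.mp hq₀J).2
      have hz : prj (q₀ - pvt) d = 0 := by rw [hd, hq₀]; exact h4 q₀ hq₀J
      rw [prj_sub] at hz
      refine ⟨q₀, ?_, pvt, ?_, hq₀ne⟩
      · rw [Finset.mem_filter]; exact ⟨hq₀I, by rw [inner_dirv']; linarith⟩
      · rw [Finset.mem_filter]; exact ⟨hpvt, by rw [inner_dirv']⟩
    · refine ⟨hpers u (by linarith) (le_refl _), ?_⟩
      apply Finset.one_lt_card.mpr
      have hq₁ne : q₁ ≠ pvt := (Finset.mem_erase.mp hq₁J).1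
      have hq₁I : q₁ ∈ I := (Finset.mem_erase.mp hq₁J).2
      have hz : prj (q₁ - pvt) u = 0 := by rw [hu, hq₁]; exact h5 q₁ hq₁J
      rw [prj_sub] at hz
      refine ⟨q₁, ?_, pvt, ?_, hq₁ne⟩
      · rw [Finset.mem_filter]; exact ⟨hq₁I, by rw [inner_dirv']; linarith⟩
      · rw [Finset.mem_filter]; exact ⟨hpvt, by rw [inner_dirv']⟩
    · intro ψ q hψ1 hψ2 hqI hqeq
      by_contra hqne
      have hqJ : q ∈ J := Finset.mem_erase.mpr ⟨hqne, hqI⟩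
      have hz : prj (q - pvt) ψ = 0 := by rw [prj_sub]; linarith
      rcases le_total ψ φ with h | h
      · have := (h6 q hqJ ψ hz).1 h
        have := hdzm q hqJ
        linarith
      · have := (h6 q hqJ ψ hz).2 h
        have := huzp q hqJ
        linarith

lemma dirv_add_pi (ψ : ℝ) : dirv (ψ + Real.pi) = -dirv ψ := by
  ext i
  fin_cases i <;> simp [dirv, Real.cos_add, Real.sin_add]

lemma prj_add_pi (p : Pt 2) (ψ : ℝ) : prj p (ψ + Real.pi) = -prj p ψ := by
  simp [prj, Real.cos_add, Real.sin_add]; ring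

lemma median_neg_iff {a : Pt 2} {b : ℝ} :
    IsMedianHyperplane I (-a) (-b) ↔ IsMedianHyperplane I a b := by
  constructor
  · intro h; have := median_neg h; simpa using this
  · exact median_neg

lemma med_shift_one (pvt : Pt 2) (ψ : ℝ) : Med I pvt (ψ + Real.pi) ↔ Med I pvt ψ := by
  unfold Med
  rw [dirv_add_pi, prj_add_pi]
  exact median_neg_iff

lemma med_translate (pvt : Pt 2) (k : ℤ) (ψ : ℝ) :
    Med I pvt (ψ + k * Real.pi) ↔ Med I pvt ψ := by
  induction k using Int.induction_on generalizing ψ with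
  | zero => simp
  | succ n ih =>
    have e : ψ + ((n:ℤ)+1:ℤ) * Real.pi = (ψ + (n:ℤ) * Real.pi) + Real.pi := by
      push_cast; ring
    rw [e, med_shift_one, ih]
  | pred n ih =>
    have e : ψ + (-(n:ℤ)-1:ℤ) * Real.pi + Real.pi = ψ + (-(n:ℤ):ℤ) * Real.pi := by
      push_cast; ring
    rw [← med_shift_one, e, ih]

lemma med_shift_sub (pvt : Pt 2) (k : ℤ) (ψ : ℝ) :
    Med I pvt (ψ - k * Real.pi) ↔ Med I pvt ψ := by
  have := med_translate (I := I) pvt k (ψ - k * Real.pi)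
  rw [sub_add_cancel] at this
  rw [this]


lemma gap (hodd : Odd I.card) {pvt₀ pvt' : Pt 2} {s t d u φ : ℝ}
    (hMedLong : ∀ ψ, s ≤ ψ → ψ ≤ t → Med I pvt₀ ψ)
    (hΛ1 : 0 < t - s)
    (hne : pvt' ≠ pvt₀) (hpvt₀I : pvt₀ ∈ I)
    (hdφ : d ≤ φ) (hφu : φ ≤ u) (hdu : u - d ≤ Real.pi)
    (hpers : ∀ ψ, d ≤ ψ → ψ ≤ u → Med I pvt' ψ)
    (hnc : ∀ ψ q, d < ψ → ψ < u → q ∈ I → prj q ψ = prj pvt' ψ → q = pvt')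
    (hbφ : prj pvt₀ φ ≠ prj pvt' φ) :
    ∃ k : ℤ, t + k * Real.pi ≤ d ∧ u ≤ s + (k+1) * Real.pi := by
  have hπ := Real.pi_pos
  -- step 1 : φ is in no translate of [s,t]
  have step1 : ∀ k : ℤ, ¬(s ≤ φ - k * Real.pi ∧ φ - k * Real.pi ≤ t) := by
    rintro k ⟨hk1, hk2⟩
    have hMedφ : Med I pvt₀ φ := by
      rw [← med_shift_sub pvt₀ k φ]
      exact hMedLong _ hk1 hk2
    have hMedφ' : Med I pvt' φ := hpers φ hdφ hφu
    exact hbφ (median_value_unique hodd hMedφ hMedφ')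
  -- step 2 : no point of (d,u) is in a translate of [s,t]
  have step2 : ∀ (k : ℤ) ψ, d < ψ → ψ < u → ¬(s ≤ ψ - k * Real.pi ∧ ψ - k * Real.pi ≤ t) := by
    rintro k ψ hψ1 hψ2 ⟨hk1, hk2⟩
    have hMedψ : Med I pvt₀ ψ := by
      rw [← med_shift_sub pvt₀ k ψ]
      exact hMedLong _ hk1 hk2
    have hMedψ' : Med I pvt' ψ := hpers ψ (le_of_lt hψ1) (le_of_lt hψ2)
    have heq : prj pvt₀ ψ = prj pvt' ψ := median_value_unique hodd hMedψ hMedψ'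
    exact hne (hnc ψ pvt₀ hψ1 hψ2 hpvt₀I heq).symm
  set k := ⌊(d - s) / Real.pi⌋ with hk
  have hk1 : s + k * Real.pi ≤ d := by
    have h := Int.floor_le ((d - s) / Real.pi)
    have : (k:ℝ) * Real.pi ≤ (d - s) := by
      rw [hk]
      calc (⌊(d - s) / Real.pi⌋ : ℝ) * Real.pi ≤ ((d-s)/Real.pi) * Real.pi := by nlinarith
      _ = d - s := by field_simp
    linarith
  have hk2 : d < s + ((k:ℝ)+1) * Real.pi := by
    have h := Int.lt_floor_add_one ((d - s) / Real.pi)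
    have : (d - s) < ((k:ℝ)+1) * Real.pi := by
      rw [hk]
      calc d - s = ((d-s)/Real.pi) * Real.pi := by field_simp
      _ < ((⌊(d - s) / Real.pi⌋ : ℝ)+1) * Real.pi := by push_cast; nlinarith
    linarith
  refine ⟨k, ?_, ?_⟩
  · -- t + kπ ≤ d
    by_contra hA
    push_neg at hA
    have hφs : s ≤ φ - k * Real.pi := by linarith
    have hφt : φ - k * Real.pi > t := by
      rcases lt_or_ge t (φ - k * Real.pi) with h | h
      · exact h
      · exact absurd ⟨hφs, h⟩ (step1 k)
    set ψ := (d + (t + k * Real.pi)) / 2 with hψ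
    have c1 : d < ψ := by rw [hψ]; linarith
    have c2 : ψ < t + k * Real.pi := by rw [hψ]; linarith
    have c3 : ψ < u := by linarith
    have c4 : s ≤ ψ - k * Real.pi := by linarith
    have c5 : ψ - k * Real.pi ≤ t := by linarith
    exact step2 k ψ c1 c3 ⟨c4, c5⟩
  · -- u ≤ s + (k+1)π
    by_contra hB
    push_neg at hB
    rcases le_or_gt φ (s + ((k:ℝ)+1) * Real.pi) with hφcase | hφcase
    · set ψ := ((s + ((k:ℝ)+1) * Real.pi) + min u (t + ((k:ℝ)+1) * Real.pi)) / 2 with hψ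
      have hmin : s + ((k:ℝ)+1) * Real.pi < min u (t + ((k:ℝ)+1) * Real.pi) := by
        apply lt_min
        · push_cast at hB ⊢; linarith
        · linarith
      have c1 : d < ψ := by
        have : d ≤ φ := hdφ
        have h2 : ψ > s + ((k:ℝ)+1) * Real.pi := by
          rw [hψ]; linarith [hmin]
        linarith
      have c2 : ψ < u := by
        have h2 : ψ < min u (t + ((k:ℝ)+1) * Real.pi) := by rw [hψ]; linarith [hmin]
        exact lt_of_lt_of_le h2 (min_le_left _ _)
      have c4 : s ≤ ψ - ((k:ℤ)+1:ℤ) * Real.pi := by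
        have h2 : ψ > s + ((k:ℝ)+1) * Real.pi := by rw [hψ]; linarith [hmin]
        push_cast; linarith
      have c5 : ψ - ((k:ℤ)+1:ℤ) * Real.pi ≤ t := by
        have h2 : ψ < min u (t + ((k:ℝ)+1) * Real.pi) := by rw [hψ]; linarith [hmin]
        have := lt_of_lt_of_le h2 (min_le_right _ _)
        push_cast; linarith
      exact step2 (k+1) ψ c1 c2 ⟨c4, c5⟩
    · have hφt : φ - ((k:ℤ)+1:ℤ) * Real.pi > t := by
        rcases lt_or_ge t (φ - ((k:ℤ)+1:ℤ) * Real.pi) with h | h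
        · exact h
        · exfalso
          apply step1 ((k:ℤ)+1)
          constructor
          · push_cast; linarith
          · exact h
      set ψ := ((s + ((k:ℝ)+1) * Real.pi) + (t + ((k:ℝ)+1) * Real.pi)) / 2 with hψ
      have c1 : d < ψ := by rw [hψ]; linarith
      have c2 : ψ < u := by
        have : ψ < t + ((k:ℝ)+1) * Real.pi := by rw [hψ]; linarith
        have hφ' : t + ((k:ℝ)+1) * Real.pi < φ := by push_cast at hφt; linarith
        linarith
      have c4 : s ≤ ψ - ((k:ℤ)+1:ℤ) * Real.pi := by push_cast; rw [hψ]; push_cast; linarith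
      have c5 : ψ - ((k:ℤ)+1:ℤ) * Real.pi ≤ t := by push_cast; rw [hψ]; push_cast; linarith
      exact step2 (k+1) ψ c1 c2 ⟨c4, c5⟩

lemma interp (w : Pt 2) {d u φ r : ℝ} (hd : d ≤ φ) (hu : φ ≤ u) (hlen : u - d < Real.pi)
    (h1 : |prj w d| ≤ r) (h2 : |prj w u| ≤ r) (hr : 0 ≤ r) :
    |prj w φ| ≤ r / Real.cos ((u - d) / 2) := by
  have := interp_aux (w0 := w 0) (w1 := w 1) hd hu hlen
    (by simpa [prj] using h1) (by simpa [prj] using h2) hr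
  simpa [prj] using this

lemma core (I : Finset (Pt 2)) (hodd : Odd I.card) (c' : Pt 2) (r : ℝ) (hr : 0 ≤ r)
    (hlp : ∀ a b, IsLimitingMedianHyperplane I a b → |⟪a, c'⟫ - b| ≤ r) :
    ∃ c : Pt 2, ∀ a b, IsMedianHyperplane I a b → |⟪a, c⟫ - b| ≤ 2 * r := by
  classical
  have hπ := Real.pi_pos
  by_cases hsmall : I.card ≤ 1
  · have hcard : I.card = 1 := by rcases hodd with ⟨m, hm⟩; omega
    obtain ⟨p, hp⟩ := Finset.card_eq_one.mp hcard
    refine ⟨p, fun a b hab => ?_⟩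
    obtain ⟨q, hqI, hq⟩ := median_point_exists hodd hab
    rw [hp, Finset.mem_singleton] at hqI
    have hb : ⟪a, p⟫ = b := by rw [← hqI]; exact hq
    rw [hb]
    simp
    linarith
  push_neg at hsmall
  have hn2 : 2 ≤ I.card := hsmall
  have hlp' : ∀ (pvt : Pt 2) (ψ : ℝ), Lim I pvt ψ → |prj (c' - pvt) ψ| ≤ r := by
    intro pvt ψ hL
    have h := hlp (dirv ψ) (prj pvt ψ) hL
    rw [inner_dirv'] at h
    rw [prj_sub]
    exact h
  by_cases hLong : ∃ pvt₀ ∈ I, ∃ s t : ℝ, Lim I pvt₀ s ∧ Lim I pvt₀ t ∧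
      2 * Real.pi / 3 < t - s ∧ t - s ≤ Real.pi ∧ (∀ ψ, s ≤ ψ → ψ ≤ t → Med I pvt₀ ψ)
  · -- LONG case
    obtain ⟨pvt₀, hpvt₀I, s, t, hLs, hLt, hΛ1, hΛ2, hMedLong⟩ := hLong
    set v := c' - pvt₀ with hv
    set ρ := ‖v‖ with hρdef
    set x := (t - s) / 2 with hx
    have hx1 : Real.pi / 3 < x := by rw [hx]; linarith
    have hx2 : x ≤ Real.pi / 2 := by rw [hx]; linarith
    have hsin34 : Real.sqrt 3 / 2 ≤ Real.sin x := by
      have e : Real.sin x = Real.cos (Real.pi/2 - x) := (Real.cos_pi_div_two_sub x).symm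
      rw [e]
      have := Real.cos_le_cos_of_nonneg_of_le_pi
        (by linarith : (0:ℝ) ≤ Real.pi/2 - x) (by linarith : Real.pi/6 ≤ Real.pi)
        (by linarith : Real.pi/2 - x ≤ Real.pi/6)
      rw [Real.cos_pi_div_six] at this
      exact this
    have hsqrt3 : (1:ℝ) < Real.sqrt 3 := by
      nlinarith [Real.sq_sqrt (by norm_num : (3:ℝ) ≥ 0), Real.sqrt_nonneg 3]
    have hsinhalf : 1/2 < Real.sin x := by nlinarith
    have hsinpos : 0 < Real.sin x := by linarith
    have hsin1 : Real.sin x ≤ 1 := Real.sin_le_one x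
    have hvs := hlp' pvt₀ s hLs
    have hvt := hlp' pvt₀ t hLt
    by_cases hρ2 : ρ ≤ 2 * r
    · -- small ρ : center c' works
      refine ⟨c', fun a b hab => ?_⟩
      obtain ⟨φ, rfl⟩ := exists_angle a hab.1
      by_cases hb : prj pvt₀ φ = b
      · rw [inner_dirv', ← hb, ← prj_sub]
        calc |prj (c' - pvt₀) φ| ≤ ‖c' - pvt₀‖ := abs_prj_le_norm _ _
        _ ≤ 2 * r := hρ2
      · obtain ⟨pvt', hpvt'I, hpvt'b⟩ := median_point_exists hodd hab
        rw [inner_dirv'] at hpvt'b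
        subst hpvt'b
        have hne : pvt' ≠ pvt₀ := fun h => hb (by rw [h])
        have hmed : Med I pvt' φ := hab
        obtain ⟨d, u, hdφ, hφu, hdu, hpers, hLd, hLu, hnc⟩ := bracket hn2 hpvt'I hmed
        obtain ⟨k, hk1, hk2⟩ := gap hodd hMedLong (by linarith) hne hpvt₀I hdφ hφu hdu hpers hnc hb
        have hud : u - d ≤ Real.pi - (t - s) := by push_cast at hk2; linarith
        have h1 := hlp' pvt' d hLd
        have h2 := hlp' pvt' u hLu
        have h3 := interp (c' - pvt') hdφ hφu (by linarith) h1 h2 hr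
        have hcos : (1:ℝ)/2 ≤ Real.cos ((u - d)/2) := by
          have hm := Real.cos_le_cos_of_nonneg_of_le_pi
            (by linarith : (0:ℝ) ≤ (u-d)/2) (by linarith : Real.pi/3 ≤ Real.pi)
            (by linarith : (u-d)/2 ≤ Real.pi/3)
          rw [Real.cos_pi_div_three] at hm
          exact hm
        rw [inner_dirv', ← prj_sub]
        calc |prj (c' - pvt') φ| ≤ r / Real.cos ((u - d)/2) := h3
        _ ≤ 2 * r := by rw [div_le_iff₀ (by linarith)]; nlinarith
    · push_neg at hρ2
      have hρ0 : 0 < ρ := by linarith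
      have hv0 : v ≠ 0 := by rw [← norm_pos_iff]; exact hρ0
      obtain ⟨γ, _, hpol0, hpol1⟩ := exists_polar v hv0
      have hprjv : ∀ ψ, prj v ψ = ρ * Real.cos (ψ - γ) := prj_polar v γ hpol0 hpol1
      set m := ⌊(γ - s)/Real.pi⌋ with hm
      set γ' := γ - m * Real.pi with hγ'
      have hγ's : s ≤ γ' := by
        have h := Int.floor_le ((γ - s)/Real.pi)
        have : (m:ℝ) * Real.pi ≤ γ - s := by
          rw [hm]
          calc (⌊(γ - s)/Real.pi⌋:ℝ) * Real.pi ≤ ((γ-s)/Real.pi) * Real.pi := by nlinarith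
          _ = γ - s := by field_simp
        rw [hγ']; linarith
      have hγ'sπ : γ' < s + Real.pi := by
        have h := Int.lt_floor_add_one ((γ - s)/Real.pi)
        have : γ - s < ((m:ℝ)+1) * Real.pi := by
          rw [hm]
          calc γ - s = ((γ-s)/Real.pi) * Real.pi := by field_simp
          _ < ((⌊(γ - s)/Real.pi⌋:ℝ)+1) * Real.pi := by push_cast; nlinarith
        rw [hγ']; linarith
      -- |prj v ψ| = ρ |cos (ψ - γ' - (k-m)π«)| machinery
      have habs : ∀ ψ : ℝ, |prj v ψ| = ρ * |Real.cos (ψ - γ)| := by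
        intro ψ
        rw [hprjv ψ, abs_mul, abs_of_pos hρ0]
      have hshift : ∀ ψ : ℝ, ∀ k : ℤ, |Real.cos (ψ - γ' - k * Real.pi)| = |Real.cos (ψ - γ)| := by
        intro ψ k
        have e : ψ - γ = (ψ - γ' - k * Real.pi) + ((k - m):ℤ) * Real.pi := by
          rw [hγ']; push_cast; ring
        rw [e, abs_cos_add_int_mul_pi]
      have hcs : ρ * |Real.cos (s - γ')| ≤ r := by
        have e : |Real.cos (s - γ')| = |Real.cos (s - γ)| := by
          have := hshift s 0
          simpa using this
        rw [e, ← habs s]; exact hvs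
      have hct : ρ * |Real.cos (t - γ')| ≤ r := by
        have e : |Real.cos (t - γ')| = |Real.cos (t - γ)| := by
          have := hshift t 0
          simpa using this
        rw [e, ← habs t]; exact hvt
      have hγ't : γ' ≤ t := by
        by_contra hcon
        push_neg at hcon
        have h1 : γ' - t < Real.pi/3 := by linarith
        have h2 : Real.cos (γ' - t) ≥ 1/2 := by
          have hm2 := Real.cos_le_cos_of_nonneg_of_le_pi
            (by linarith : (0:ℝ) ≤ γ' - t) (by linarith : Real.pi/3 ≤ Real.pi)
            (by linarith : γ' - t ≤ Real.pi/3)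
          rw [Real.cos_pi_div_three] at hm2
          linarith
        have h3 : |Real.cos (t - γ')| ≥ 1/2 := by
          rw [show t - γ' = -(γ' - t) by ring, Real.cos_neg]
          calc (1:ℝ)/2 ≤ Real.cos (γ' - t) := h2
          _ ≤ |Real.cos (γ' - t)| := le_abs_self _
        nlinarith
      have hρcosx : ρ * Real.cos x ≤ r := by
        have hcosx0 : 0 ≤ Real.cos x :=
          Real.cos_nonneg_of_mem_Icc ⟨by linarith, hx2⟩
        rcases le_total (γ' - s) x with hcase | hcase
        · have h2 : Real.cos x ≤ Real.cos (γ' - s) :=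
            Real.cos_le_cos_of_nonneg_of_le_pi (by linarith) (by linarith) hcase
          have h3 : Real.cos (γ' - s) ≤ |Real.cos (s - γ')| := by
            rw [show s - γ' = -(γ' - s) by ring, Real.cos_neg]
            exact le_abs_self _
          nlinarith
        · have hc2 : t - γ' ≤ x := by rw [hx] at *; linarith
          have h2 : Real.cos x ≤ Real.cos (t - γ') :=
            Real.cos_le_cos_of_nonneg_of_le_pi (by linarith) (by linarith) hc2
          have h3 : Real.cos (t - γ') ≤ |Real.cos (t - γ')| := le_abs_self _
          nlinarith
      have hII : ∀ (ψ : ℝ) (k : ℤ), t ≤ ψ - k * Real.pi → ψ - k * Real.pi ≤ s + Real.pi →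
          |prj v ψ| ≤ r := by
        intro ψ k hk1 hk2
        have hbound := abs_cos_le_max (θ := ψ - k * Real.pi - γ') (θ₁ := t - γ')
          (θ₂ := s + Real.pi - γ') (by linarith) (by linarith) (by linarith) (by linarith)
        have e1 : |Real.cos (s + Real.pi - γ')| = |Real.cos (s - γ')| := by
          have := abs_cos_add_int_mul_pi (s - γ') 1
          rw [show (s - γ') + (1:ℤ) * Real.pi = s + Real.pi - γ' by push_cast; ring] at this
          exact this
        rw [e1] at hbound
        have e2 : |Real.cos (ψ - k * Real.pi - γ')| = |Real.cos (ψ - γ)| := by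
          have e3 : ψ - γ = (ψ - k * Real.pi - γ') + ((k - m):ℤ) * Real.pi := by
            rw [hγ']; push_cast; ring
          rw [e3, abs_cos_add_int_mul_pi]
        rw [e2] at hbound
        rw [habs ψ]
        rcases max_cases |Real.cos (t - γ')| |Real.cos (s - γ')| with ⟨hmax, _⟩ | ⟨hmax, _⟩ <;>
          rw [hmax] at hbound <;> nlinarith
      obtain ⟨μ, hμ⟩ : ∃ μ : ℝ, μ = 1 / Real.sin x - 1 := ⟨_, rfl⟩
      have hμ0 : 0 ≤ μ := by
        rw [hμ]
        have : 1 ≤ 1 / Real.sin x := by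
          rw [le_div_iff₀ hsinpos]; linarith
        linarith
      have hμ1 : μ ≤ 1 := by
        rw [hμ]
        have : 1 / Real.sin x ≤ 2 := by
          rw [div_le_iff₀ hsinpos]; linarith
        linarith
      refine ⟨c' - (1 - μ) • v, fun a b hab => ?_⟩
      obtain ⟨φ, rfl⟩ := exists_angle a hab.1
      have hcdecomp : ∀ q : Pt 2, prj (c' - (1 - μ) • v - q) φ
          = prj (c' - q) φ - (1 - μ) * prj v φ := by
        intro q
        rw [show c' - (1 - μ) • v - q = (c' - q) - (1 - μ) • v by abel]
        rw [prj_sub, prj_smul_sub]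
      by_cases hb : prj pvt₀ φ = b
      · rw [inner_dirv', ← hb, ← prj_sub]
        have e : prj (c' - (1 - μ) • v - pvt₀) φ = μ * prj v φ := by
          rw [hcdecomp pvt₀, ← hv]
          ring
        rw [e, abs_mul, abs_of_nonneg hμ0]
        have hbnd : |prj v φ| ≤ ρ := abs_prj_le_norm _ _
        have tk := trig_key (le_of_lt hx1) hx2
        have key : (1 - Real.sin x) * ρ ≤ 2 * r * Real.sin x := by
          nlinarith [mul_le_mul_of_nonneg_right tk (le_of_lt hρ0),
            mul_le_mul_of_nonneg_left hρcosx (by linarith : (0:ℝ) ≤ 2 * Real.sin x)]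
        have hμρ : μ * ρ ≤ 2 * r := by
          have e : μ * ρ = (1 - Real.sin x) * ρ / Real.sin x := by
            rw [hμ]; field_simp
          rw [e, div_le_iff₀ hsinpos]
          linarith
        nlinarith [abs_nonneg (prj v φ)]
      · obtain ⟨pvt', hpvt'I, hpvt'b⟩ := median_point_exists hodd hab
        rw [inner_dirv'] at hpvt'b
        subst hpvt'b
        have hne : pvt' ≠ pvt₀ := fun h => hb (by rw [h])
        have hmed : Med I pvt' φ := hab
        obtain ⟨d, u, hdφ, hφu, hdu, hpers, hLd, hLu, hnc⟩ := bracket hn2 hpvt'I hmed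
        obtain ⟨k, hk1, hk2⟩ := gap hodd hMedLong (by linarith) hne hpvt₀I hdφ hφu hdu hpers hnc hb
        push_cast at hk2
        have hud : u - d ≤ Real.pi - (t - s) := by linarith
        have h1 := hlp' pvt' d hLd
        have h2 := hlp' pvt' u hLu
        have h3 := interp (c' - pvt') hdφ hφu (by linarith) h1 h2 hr
        have hcosA : Real.sin x ≤ Real.cos ((u - d)/2) := by
          have hm2 : Real.cos ((Real.pi - (t - s))/2) ≤ Real.cos ((u - d)/2) :=
            Real.cos_le_cos_of_nonneg_of_le_pi (by linarith) (by linarith) (by linarith)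
          have e : (Real.pi - (t - s))/2 = Real.pi/2 - x := by rw [hx]; ring
          rw [e, Real.cos_pi_div_two_sub] at hm2
          exact hm2
        have h4 : |prj (c' - pvt') φ| ≤ r / Real.sin x := by
          calc |prj (c' - pvt') φ| ≤ r / Real.cos ((u - d)/2) := h3
          _ ≤ r / Real.sin x := by
            apply div_le_div_of_nonneg_left hr hsinpos hcosA
        have h5 : |prj v φ| ≤ r := hII φ k (by linarith) (by linarith)
        rw [inner_dirv', ← prj_sub, hcdecomp pvt']
        have h6 : |prj (c' - pvt') φ - (1 - μ) * prj v φ| ≤ r / Real.sin x + (1 - μ) * r := by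
          have ha := abs_sub (prj (c' - pvt') φ) ((1 - μ) * prj v φ)
          have hb2 : |(1 - μ) * prj v φ| ≤ (1 - μ) * r := by
            rw [abs_mul, abs_of_nonneg (show (0:ℝ) ≤ 1 - μ by linarith)]
            exact mul_le_mul_of_nonneg_left h5 (by linarith)
          linarith [h4]
        have h7 : r / Real.sin x + (1 - μ) * r = 2 * r := by
          rw [hμ]; field_simp; ring
        linarith
  · -- NO LONG case : center c' works
    refine ⟨c', fun a b hab => ?_⟩
    obtain ⟨φ, rfl⟩ := exists_angle a hab.1
    obtain ⟨pvt, hpvtI, hpvtb⟩ := median_point_exists hodd hab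
    rw [inner_dirv'] at hpvtb
    subst hpvtb
    have hmed : Med I pvt φ := hab
    obtain ⟨d, u, hdφ, hφu, hdu, hpers, hLd, hLu, hnc⟩ := bracket hn2 hpvtI hmed
    have hcase : u - d ≤ 2 * Real.pi / 3 := by
      by_contra hcon
      push_neg at hcon
      exact hLong ⟨pvt, hpvtI, d, u, hLd, hLu, hcon, hdu, hpers⟩
    have h1 := hlp' pvt d hLd
    have h2 := hlp' pvt u hLu
    have h3 := interp (c' - pvt) hdφ hφu (by linarith) h1 h2 hr
    have hcos : (1:ℝ)/2 ≤ Real.cos ((u - d)/2) := by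
      have hm := Real.cos_le_cos_of_nonneg_of_le_pi
        (by linarith : (0:ℝ) ≤ (u-d)/2) (by linarith : Real.pi/3 ≤ Real.pi)
        (by linarith : (u-d)/2 ≤ Real.pi/3)
      rw [Real.cos_pi_div_three] at hm
      exact hm
    rw [inner_dirv', ← prj_sub]
    calc |prj (c' - pvt) φ| ≤ r / Real.cos ((u - d)/2) := h3
    _ ≤ 2 * r := by rw [div_le_iff₀ (by linarith)]; nlinarith

end YolkAux

/-- For a finite set `I ⊆ ℝ²` with `|I|` odd, the LP yolk radius of `I`
is at least one half of the yolk radius of `I`. -/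
theorem lp_yolk_radius_ge_half_yolk_radius (I : Finset (Pt 2)) (hodd : Odd I.card) :
    yolkRadius I / 2 ≤ lpYolkRadius I := by
  have hne : I.Nonempty := by
    rcases hodd with ⟨m, hm⟩
    exact Finset.card_pos.mp (by omega)
  obtain ⟨x₀, hx₀⟩ := hne
  set M : ℝ := I.sup' ⟨x₀, hx₀⟩ (fun x => ‖x‖) with hM
  have hMmem : M ∈ {r : ℝ | 0 ≤ r ∧ ∃ c : Pt 2, ∀ a b,
      IsLimitingMedianHyperplane I a b → |⟪a, c⟫ - b| ≤ r} := by
    constructor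
    · exact le_trans (norm_nonneg x₀) (Finset.le_sup' _ hx₀)
    · refine ⟨0, fun a b hab => ?_⟩
      obtain ⟨hmed, hcard⟩ := hab
      have : (I.filter fun x => ⟪a, x⟫ = b).Nonempty := by
        rw [← Finset.card_pos]; omega
      obtain ⟨y, hy⟩ := this
      rw [Finset.mem_filter] at hy
      have h1 : |⟪a, (0:Pt 2)⟫ - b| = |⟪a, y⟫| := by rw [inner_zero_right, hy.2]; simp
      rw [h1]
      calc |⟪a, y⟫| ≤ ‖a‖ * ‖y‖ := abs_real_inner_le_norm _ _
      _ = ‖y‖ := by rw [hmed.1]; ring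
      _ ≤ M := Finset.le_sup' _ hy.1
  have hlow : ∀ r ∈ {r : ℝ | 0 ≤ r ∧ ∃ c : Pt 2, ∀ a b,
      IsLimitingMedianHyperplane I a b → |⟪a, c⟫ - b| ≤ r}, yolkRadius I / 2 ≤ r := by
    rintro r ⟨hr0, c', hc'⟩
    have hyolk : yolkRadius I ≤ 2 * r := by
      obtain ⟨c, hc⟩ := YolkAux.core I hodd c' r hr0 hc'
      apply csInf_le
      · exact ⟨0, fun y hy => hy.1⟩
      · exact ⟨by linarith, c, hc⟩
    linarith
  exact le_csInf ⟨M, hMmem⟩ hlow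
end
end

section
/- Fix ε > 0 and let I = {(2,ε), (2,−ε), (−2,ε), (−2,−ε), (1,0), (−1,0)} ⊆ ℝ². Then the yolk radius of I is at least 1, and the LP yolk radius of I is at most ε/√(1+ε²); in particular, the closed ball centered at the origin with radius ε/√(1+ε²) intersects every limiting median hyperplane of I. -/
open scoped RealInnerProductSpace
open Real

noncomputable section

lemma inner_eval (a : Pt 2) (u v : ℝ) : ⟪a, (!₂[u, v] : Pt 2)⟫ = a 0 * u + a 1 * v := by
  simp [PiLp.inner_apply, Fin.sum_univ_two, RCLike.inner_apply, mul_comm]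

lemma norm_eval (a : Pt 2) (h : ‖a‖ = 1) : a 0 ^ 2 + a 1 ^ 2 = 1 := by
  have h2 : ⟪a, a⟫ = 1 := by rw [real_inner_self_eq_norm_sq, h]; norm_num
  rw [PiLp.inner_apply, Fin.sum_univ_two] at h2
  simpa [RCLike.inner_apply, sq] using h2

lemma pt_ne_fst {u v u' v' : ℝ} (h : u ≠ u') : (!₂[u, v] : Pt 2) ≠ !₂[u', v'] := by
  intro he
  exact h (by simpa using congrArg (fun w : Pt 2 => w 0) he)

lemma pt_ne_snd {u v u' v' : ℝ} (h : v ≠ v') : (!₂[u, v] : Pt 2) ≠ !₂[u', v'] := by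
  intro he
  exact h (by simpa using congrArg (fun w : Pt 2 => w 1) he)

lemma key (ε b : ℝ) (hε : 0 < ε) (h : b ^ 2 * (1 + ε ^ 2) ≤ ε ^ 2) :
    |b| ≤ ε / Real.sqrt (1 + ε ^ 2) := by
  have h1 : (0:ℝ) < 1 + ε ^ 2 := by positivity
  rw [le_div_iff₀ (Real.sqrt_pos.mpr h1)]
  calc |b| * Real.sqrt (1 + ε ^ 2) = Real.sqrt (b ^ 2) * Real.sqrt (1 + ε ^ 2) := by
        rw [Real.sqrt_sq_eq_abs]
    _ = Real.sqrt (b ^ 2 * (1 + ε ^ 2)) := (Real.sqrt_mul (sq_nonneg b) _).symm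
    _ ≤ Real.sqrt (ε ^ 2) := Real.sqrt_le_sqrt h
    _ = ε := Real.sqrt_sq hε.le

lemma norm_eval2 (w : Pt 2) (h : w 0 ^ 2 + w 1 ^ 2 = 1) : ‖w‖ = 1 := by
  have h1 : ⟪w, w⟫ = 1 := by
    simp only [PiLp.inner_apply, Fin.sum_univ_two, RCLike.inner_apply, conj_trivial]
    linear_combination h
  have h2 : ‖w‖ ^ 2 = 1 := by rw [← real_inner_self_eq_norm_sq]; exact h1
  rw [pow_two] at h2
  rcases mul_self_eq_one_iff.mp h2 with h3 | h3
  · exact h3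
  · linarith [norm_nonneg w]

lemma card3 {α : Type*} (inst : DecidableEq α) {p1 p2 p3 : α}
    (h12 : p1 ≠ p2) (h13 : p1 ≠ p3) (h23 : p2 ≠ p3) :
    ({p1, p2, p3} : Finset α).card = 3 := by
  have n2 : p2 ∉ ({p3} : Finset α) := by simp [h23]
  have n1 : p1 ∉ ({p2, p3} : Finset α) := by simp [h12, h13]
  rw [Finset.card_insert_of_notMem n1, Finset.card_insert_of_notMem n2,
    Finset.card_singleton]

lemma card6 {α : Type*} (inst : DecidableEq α) {p1 p2 p3 p4 p5 p6 : α}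
    (h12 : p1 ≠ p2) (h13 : p1 ≠ p3) (h14 : p1 ≠ p4) (h15 : p1 ≠ p5) (h16 : p1 ≠ p6)
    (h23 : p2 ≠ p3) (h24 : p2 ≠ p4) (h25 : p2 ≠ p5) (h26 : p2 ≠ p6)
    (h34 : p3 ≠ p4) (h35 : p3 ≠ p5) (h36 : p3 ≠ p6)
    (h45 : p4 ≠ p5) (h46 : p4 ≠ p6) (h56 : p5 ≠ p6) :
    ({p1, p2, p3, p4, p5, p6} : Finset α).card = 6 := by
  have n5 : p5 ∉ ({p6} : Finset α) := by simp [h56]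
  have n4 : p4 ∉ ({p5, p6} : Finset α) := by simp [h45, h46]
  have n3 : p3 ∉ ({p4, p5, p6} : Finset α) := by simp [h34, h35, h36]
  have n2 : p2 ∉ ({p3, p4, p5, p6} : Finset α) := by simp [h23, h24, h25, h26]
  have n1 : p1 ∉ ({p2, p3, p4, p5, p6} : Finset α) := by simp [h12, h13, h14, h15, h16]
  rw [Finset.card_insert_of_notMem n1, Finset.card_insert_of_notMem n2,
    Finset.card_insert_of_notMem n3, Finset.card_insert_of_notMem n4,
    Finset.card_insert_of_notMem n5, Finset.card_singleton]

open scoped Classical in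
lemma contra_of {I f : Finset (Pt 2)} (hcard6 : I.card = 6) (x y : Pt 2)
    (hge : (I.card : ℝ) / 2 ≤ (f.card : ℝ)) (hsub : f ⊆ {x, y}) : False := by
  have h1 := Finset.card_le_card hsub
  have h2 : ({x, y} : Finset (Pt 2)).card ≤ 2 := (Finset.card_insert_le _ _).trans (by simp)
  rw [hcard6] at hge
  have h3 : (3 : ℝ) ≤ (f.card : ℝ) := by linarith
  have h4 : 3 ≤ f.card := by exact_mod_cast h3
  omega

set_option maxHeartbeats 2000000 in
lemma lp_bound (ε : ℝ) (hε : 0 < ε) (I : Finset (Pt 2)) (hcard6 : I.card = 6)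
    (hIelem : ∀ x ∈ I, x = !₂[2, ε] ∨ x = !₂[2, -ε] ∨ x = !₂[-2, ε] ∨ x = !₂[-2, -ε] ∨
      x = !₂[1, 0] ∨ x = !₂[-1, 0]) :
    ∀ a b, IsLimitingMedianHyperplane I a b →
      |⟪a, (0 : Pt 2)⟫ - b| ≤ ε / Real.sqrt (1 + ε ^ 2) := by
  rintro a b ⟨⟨hnorm, hle, hge⟩, hk⟩
  have hpq : a 0 ^ 2 + a 1 ^ 2 = 1 := norm_eval a hnorm
  rw [inner_zero_right, zero_sub, abs_neg]
  obtain ⟨x, hx, y, hy, hxy⟩ := Finset.one_lt_card.mp (lt_of_lt_of_le one_lt_two hk)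
  rw [Finset.mem_filter] at hx hy
  obtain ⟨hxI', hxb⟩ := hx
  obtain ⟨hyI', hyb⟩ := hy
  have hxI := hIelem x hxI'
  have hyI := hIelem y hyI'
  rcases hxI with rfl | rfl | rfl | rfl | rfl | rfl
  · rcases hyI with rfl | rfl | rfl | rfl | rfl | rfl
    · exact absurd rfl hxy
    · rw [inner_eval] at hxb hyb
      exfalso
      have hz0 : a 1 * ε = 0 := by linarith
      have hq : a 1 = 0 := (mul_eq_zero.mp hz0).resolve_right hε.ne'
      have hq2 : a 1 ^ 2 = 0 := by rw [hq]; ring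
      have hp2 : a 0 * a 0 = 1 := by nlinarith [hpq]
      rcases mul_self_eq_one_iff.mp hp2 with hp | hp
      · have hb : b = 2 := by rw [hp, hq] at hxb; linarith
        refine contra_of hcard6 (!₂[2, ε]) (!₂[2, -ε]) hge ?_
        intro z hz
        rw [Finset.mem_filter] at hz
        obtain ⟨hzI, hzb⟩ := hz
        simp only [Finset.mem_insert, Finset.mem_singleton]
        rcases hIelem z hzI with rfl | rfl | rfl | rfl | rfl | rfl
        · exact Or.inl rfl
        · exact Or.inr rfl
        · rw [inner_eval, hp, hq] at hzb
          exfalso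
          linarith
        · rw [inner_eval, hp, hq] at hzb
          exfalso
          linarith
        · rw [inner_eval, hp, hq] at hzb
          exfalso
          linarith
        · rw [inner_eval, hp, hq] at hzb
          exfalso
          linarith
      · have hb : b = -2 := by rw [hp, hq] at hxb; linarith
        refine contra_of hcard6 (!₂[2, ε]) (!₂[2, -ε]) hle ?_
        intro z hz
        rw [Finset.mem_filter] at hz
        obtain ⟨hzI, hzb⟩ := hz
        simp only [Finset.mem_insert, Finset.mem_singleton]
        rcases hIelem z hzI with rfl | rfl | rfl | rfl | rfl | rfl
        · exact Or.inl rfl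
        · exact Or.inr rfl
        · rw [inner_eval, hp, hq] at hzb
          exfalso
          linarith
        · rw [inner_eval, hp, hq] at hzb
          exfalso
          linarith
        · rw [inner_eval, hp, hq] at hzb
          exfalso
          linarith
        · rw [inner_eval, hp, hq] at hzb
          exfalso
          linarith
    · rw [inner_eval] at hxb hyb
      exfalso
      have hp : a 0 = 0 := by linarith
      have hqq : a 1 * a 1 = 1 := by nlinarith [hpq]
      rcases mul_self_eq_one_iff.mp hqq with hq1 | hq1
      · have hb : b = ε := by rw [hp, hq1] at hxb; linarith
        refine contra_of hcard6 (!₂[2, ε]) (!₂[-2, ε]) hge ?_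
        intro z hz
        rw [Finset.mem_filter] at hz
        obtain ⟨hzI, hzb⟩ := hz
        simp only [Finset.mem_insert, Finset.mem_singleton]
        rcases hIelem z hzI with rfl | rfl | rfl | rfl | rfl | rfl
        · exact Or.inl rfl
        · rw [inner_eval, hp, hq1] at hzb
          exfalso
          linarith
        · exact Or.inr rfl
        · rw [inner_eval, hp, hq1] at hzb
          exfalso
          linarith
        · rw [inner_eval, hp, hq1] at hzb
          exfalso
          linarith
        · rw [inner_eval, hp, hq1] at hzb
          exfalso
          linarith
      · have hb : b = -ε := by rw [hp, hq1] at hxb; linarith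
        refine contra_of hcard6 (!₂[2, ε]) (!₂[-2, ε]) hle ?_
        intro z hz
        rw [Finset.mem_filter] at hz
        obtain ⟨hzI, hzb⟩ := hz
        simp only [Finset.mem_insert, Finset.mem_singleton]
        rcases hIelem z hzI with rfl | rfl | rfl | rfl | rfl | rfl
        · exact Or.inl rfl
        · rw [inner_eval, hp, hq1] at hzb
          exfalso
          linarith
        · exact Or.inr rfl
        · rw [inner_eval, hp, hq1] at hzb
          exfalso
          linarith
        · rw [inner_eval, hp, hq1] at hzb
          exfalso
          linarith
        · rw [inner_eval, hp, hq1] at hzb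
          exfalso
          linarith
    · rw [inner_eval] at hxb hyb
      apply key ε b hε
      have hb : b = 0 := by linarith
      rw [hb]
      nlinarith [sq_nonneg ε]
    · rw [inner_eval] at hxb hyb
      apply key ε b hε
      have e1 : a 0 = -(ε * a 1) := by linarith
      have e2 : a 0 ^ 2 = ε ^ 2 * a 1 ^ 2 := by rw [e1]; try ring
      have hb : b = (a 0) := by linarith
      have hb2 : b ^ 2 = a 0 ^ 2 := by rw [hb]; try ring
      nlinarith [e2, hb2, hpq, sq_nonneg ε]
    · rw [inner_eval] at hxb hyb
      apply key ε b hε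
      have e1 : ε * a 1 = -(3 * a 0) := by linarith
      have e2 : (ε * a 1) ^ 2 = (3 * a 0) ^ 2 := by rw [e1]; try ring
      have hb : b = -(a 0) := by linarith
      have hb2 : b ^ 2 = a 0 ^ 2 := by rw [hb]; try ring
      nlinarith [e2, hb2, hpq, sq_nonneg ε, sq_nonneg (a 0)]
  · rcases hyI with rfl | rfl | rfl | rfl | rfl | rfl
    · rw [inner_eval] at hxb hyb
      exfalso
      have hz0 : a 1 * ε = 0 := by linarith
      have hq : a 1 = 0 := (mul_eq_zero.mp hz0).resolve_right hε.ne'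
      have hq2 : a 1 ^ 2 = 0 := by rw [hq]; ring
      have hp2 : a 0 * a 0 = 1 := by nlinarith [hpq]
      rcases mul_self_eq_one_iff.mp hp2 with hp | hp
      · have hb : b = 2 := by rw [hp, hq] at hxb; linarith
        refine contra_of hcard6 (!₂[2, ε]) (!₂[2, -ε]) hge ?_
        intro z hz
        rw [Finset.mem_filter] at hz
        obtain ⟨hzI, hzb⟩ := hz
        simp only [Finset.mem_insert, Finset.mem_singleton]
        rcases hIelem z hzI with rfl | rfl | rfl | rfl | rfl | rfl
        · exact Or.inl rfl
        · exact Or.inr rfl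
        · rw [inner_eval, hp, hq] at hzb
          exfalso
          linarith
        · rw [inner_eval, hp, hq] at hzb
          exfalso
          linarith
        · rw [inner_eval, hp, hq] at hzb
          exfalso
          linarith
        · rw [inner_eval, hp, hq] at hzb
          exfalso
          linarith
      · have hb : b = -2 := by rw [hp, hq] at hxb; linarith
        refine contra_of hcard6 (!₂[2, ε]) (!₂[2, -ε]) hle ?_
        intro z hz
        rw [Finset.mem_filter] at hz
        obtain ⟨hzI, hzb⟩ := hz
        simp only [Finset.mem_insert, Finset.mem_singleton]
        rcases hIelem z hzI with rfl | rfl | rfl | rfl | rfl | rfl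
        · exact Or.inl rfl
        · exact Or.inr rfl
        · rw [inner_eval, hp, hq] at hzb
          exfalso
          linarith
        · rw [inner_eval, hp, hq] at hzb
          exfalso
          linarith
        · rw [inner_eval, hp, hq] at hzb
          exfalso
          linarith
        · rw [inner_eval, hp, hq] at hzb
          exfalso
          linarith
    · exact absurd rfl hxy
    · rw [inner_eval] at hxb hyb
      apply key ε b hε
      have hb : b = 0 := by linarith
      rw [hb]
      nlinarith [sq_nonneg ε]
    · rw [inner_eval] at hxb hyb
      exfalso
      have hp : a 0 = 0 := by linarith
      have hqq : a 1 * a 1 = 1 := by nlinarith [hpq]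
      rcases mul_self_eq_one_iff.mp hqq with hq1 | hq1
      · have hb : b = -ε := by rw [hp, hq1] at hxb; linarith
        refine contra_of hcard6 (!₂[2, -ε]) (!₂[-2, -ε]) hle ?_
        intro z hz
        rw [Finset.mem_filter] at hz
        obtain ⟨hzI, hzb⟩ := hz
        simp only [Finset.mem_insert, Finset.mem_singleton]
        rcases hIelem z hzI with rfl | rfl | rfl | rfl | rfl | rfl
        · rw [inner_eval, hp, hq1] at hzb
          exfalso
          linarith
        · exact Or.inl rfl
        · rw [inner_eval, hp, hq1] at hzb
          exfalso
          linarith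
        · exact Or.inr rfl
        · rw [inner_eval, hp, hq1] at hzb
          exfalso
          linarith
        · rw [inner_eval, hp, hq1] at hzb
          exfalso
          linarith
      · have hb : b = ε := by rw [hp, hq1] at hxb; linarith
        refine contra_of hcard6 (!₂[2, -ε]) (!₂[-2, -ε]) hge ?_
        intro z hz
        rw [Finset.mem_filter] at hz
        obtain ⟨hzI, hzb⟩ := hz
        simp only [Finset.mem_insert, Finset.mem_singleton]
        rcases hIelem z hzI with rfl | rfl | rfl | rfl | rfl | rfl
        · rw [inner_eval, hp, hq1] at hzb
          exfalso
          linarith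
        · exact Or.inl rfl
        · rw [inner_eval, hp, hq1] at hzb
          exfalso
          linarith
        · exact Or.inr rfl
        · rw [inner_eval, hp, hq1] at hzb
          exfalso
          linarith
        · rw [inner_eval, hp, hq1] at hzb
          exfalso
          linarith
    · rw [inner_eval] at hxb hyb
      apply key ε b hε
      have e1 : a 0 = (ε * a 1) := by linarith
      have e2 : a 0 ^ 2 = ε ^ 2 * a 1 ^ 2 := by rw [e1]; try ring
      have hb : b = (a 0) := by linarith
      have hb2 : b ^ 2 = a 0 ^ 2 := by rw [hb]; try ring
      nlinarith [e2, hb2, hpq, sq_nonneg ε]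
    · rw [inner_eval] at hxb hyb
      apply key ε b hε
      have e1 : ε * a 1 = (3 * a 0) := by linarith
      have e2 : (ε * a 1) ^ 2 = (3 * a 0) ^ 2 := by rw [e1]; try ring
      have hb : b = -(a 0) := by linarith
      have hb2 : b ^ 2 = a 0 ^ 2 := by rw [hb]; try ring
      nlinarith [e2, hb2, hpq, sq_nonneg ε, sq_nonneg (a 0)]
  · rcases hyI with rfl | rfl | rfl | rfl | rfl | rfl
    · rw [inner_eval] at hxb hyb
      exfalso
      have hp : a 0 = 0 := by linarith
      have hqq : a 1 * a 1 = 1 := by nlinarith [hpq]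
      rcases mul_self_eq_one_iff.mp hqq with hq1 | hq1
      · have hb : b = ε := by rw [hp, hq1] at hxb; linarith
        refine contra_of hcard6 (!₂[2, ε]) (!₂[-2, ε]) hge ?_
        intro z hz
        rw [Finset.mem_filter] at hz
        obtain ⟨hzI, hzb⟩ := hz
        simp only [Finset.mem_insert, Finset.mem_singleton]
        rcases hIelem z hzI with rfl | rfl | rfl | rfl | rfl | rfl
        · exact Or.inl rfl
        · rw [inner_eval, hp, hq1] at hzb
          exfalso
          linarith
        · exact Or.inr rfl
        · rw [inner_eval, hp, hq1] at hzb
          exfalso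
          linarith
        · rw [inner_eval, hp, hq1] at hzb
          exfalso
          linarith
        · rw [inner_eval, hp, hq1] at hzb
          exfalso
          linarith
      · have hb : b = -ε := by rw [hp, hq1] at hxb; linarith
        refine contra_of hcard6 (!₂[2, ε]) (!₂[-2, ε]) hle ?_
        intro z hz
        rw [Finset.mem_filter] at hz
        obtain ⟨hzI, hzb⟩ := hz
        simp only [Finset.mem_insert, Finset.mem_singleton]
        rcases hIelem z hzI with rfl | rfl | rfl | rfl | rfl | rfl
        · exact Or.inl rfl
        · rw [inner_eval, hp, hq1] at hzb
          exfalso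
          linarith
        · exact Or.inr rfl
        · rw [inner_eval, hp, hq1] at hzb
          exfalso
          linarith
        · rw [inner_eval, hp, hq1] at hzb
          exfalso
          linarith
        · rw [inner_eval, hp, hq1] at hzb
          exfalso
          linarith
    · rw [inner_eval] at hxb hyb
      apply key ε b hε
      have hb : b = 0 := by linarith
      rw [hb]
      nlinarith [sq_nonneg ε]
    · exact absurd rfl hxy
    · rw [inner_eval] at hxb hyb
      exfalso
      have hz0 : a 1 * ε = 0 := by linarith
      have hq : a 1 = 0 := (mul_eq_zero.mp hz0).resolve_right hε.ne'
      have hq2 : a 1 ^ 2 = 0 := by rw [hq]; ring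
      have hp2 : a 0 * a 0 = 1 := by nlinarith [hpq]
      rcases mul_self_eq_one_iff.mp hp2 with hp | hp
      · have hb : b = -2 := by rw [hp, hq] at hxb; linarith
        refine contra_of hcard6 (!₂[-2, ε]) (!₂[-2, -ε]) hle ?_
        intro z hz
        rw [Finset.mem_filter] at hz
        obtain ⟨hzI, hzb⟩ := hz
        simp only [Finset.mem_insert, Finset.mem_singleton]
        rcases hIelem z hzI with rfl | rfl | rfl | rfl | rfl | rfl
        · rw [inner_eval, hp, hq] at hzb
          exfalso
          linarith
        · rw [inner_eval, hp, hq] at hzb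
          exfalso
          linarith
        · exact Or.inl rfl
        · exact Or.inr rfl
        · rw [inner_eval, hp, hq] at hzb
          exfalso
          linarith
        · rw [inner_eval, hp, hq] at hzb
          exfalso
          linarith
      · have hb : b = 2 := by rw [hp, hq] at hxb; linarith
        refine contra_of hcard6 (!₂[-2, ε]) (!₂[-2, -ε]) hge ?_
        intro z hz
        rw [Finset.mem_filter] at hz
        obtain ⟨hzI, hzb⟩ := hz
        simp only [Finset.mem_insert, Finset.mem_singleton]
        rcases hIelem z hzI with rfl | rfl | rfl | rfl | rfl | rfl
        · rw [inner_eval, hp, hq] at hzb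
          exfalso
          linarith
        · rw [inner_eval, hp, hq] at hzb
          exfalso
          linarith
        · exact Or.inl rfl
        · exact Or.inr rfl
        · rw [inner_eval, hp, hq] at hzb
          exfalso
          linarith
        · rw [inner_eval, hp, hq] at hzb
          exfalso
          linarith
    · rw [inner_eval] at hxb hyb
      apply key ε b hε
      have e1 : ε * a 1 = (3 * a 0) := by linarith
      have e2 : (ε * a 1) ^ 2 = (3 * a 0) ^ 2 := by rw [e1]; try ring
      have hb : b = (a 0) := by linarith
      have hb2 : b ^ 2 = a 0 ^ 2 := by rw [hb]; try ring
      nlinarith [e2, hb2, hpq, sq_nonneg ε, sq_nonneg (a 0)]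
    · rw [inner_eval] at hxb hyb
      apply key ε b hε
      have e1 : a 0 = (ε * a 1) := by linarith
      have e2 : a 0 ^ 2 = ε ^ 2 * a 1 ^ 2 := by rw [e1]; try ring
      have hb : b = -(a 0) := by linarith
      have hb2 : b ^ 2 = a 0 ^ 2 := by rw [hb]; try ring
      nlinarith [e2, hb2, hpq, sq_nonneg ε]
  · rcases hyI with rfl | rfl | rfl | rfl | rfl | rfl
    · rw [inner_eval] at hxb hyb
      apply key ε b hε
      have hb : b = 0 := by linarith
      rw [hb]
      nlinarith [sq_nonneg ε]
    · rw [inner_eval] at hxb hyb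
      exfalso
      have hp : a 0 = 0 := by linarith
      have hqq : a 1 * a 1 = 1 := by nlinarith [hpq]
      rcases mul_self_eq_one_iff.mp hqq with hq1 | hq1
      · have hb : b = -ε := by rw [hp, hq1] at hxb; linarith
        refine contra_of hcard6 (!₂[2, -ε]) (!₂[-2, -ε]) hle ?_
        intro z hz
        rw [Finset.mem_filter] at hz
        obtain ⟨hzI, hzb⟩ := hz
        simp only [Finset.mem_insert, Finset.mem_singleton]
        rcases hIelem z hzI with rfl | rfl | rfl | rfl | rfl | rfl
        · rw [inner_eval, hp, hq1] at hzb
          exfalso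
          linarith
        · exact Or.inl rfl
        · rw [inner_eval, hp, hq1] at hzb
          exfalso
          linarith
        · exact Or.inr rfl
        · rw [inner_eval, hp, hq1] at hzb
          exfalso
          linarith
        · rw [inner_eval, hp, hq1] at hzb
          exfalso
          linarith
      · have hb : b = ε := by rw [hp, hq1] at hxb; linarith
        refine contra_of hcard6 (!₂[2, -ε]) (!₂[-2, -ε]) hge ?_
        intro z hz
        rw [Finset.mem_filter] at hz
        obtain ⟨hzI, hzb⟩ := hz
        simp only [Finset.mem_insert, Finset.mem_singleton]
        rcases hIelem z hzI with rfl | rfl | rfl | rfl | rfl | rfl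
        · rw [inner_eval, hp, hq1] at hzb
          exfalso
          linarith
        · exact Or.inl rfl
        · rw [inner_eval, hp, hq1] at hzb
          exfalso
          linarith
        · exact Or.inr rfl
        · rw [inner_eval, hp, hq1] at hzb
          exfalso
          linarith
        · rw [inner_eval, hp, hq1] at hzb
          exfalso
          linarith
    · rw [inner_eval] at hxb hyb
      exfalso
      have hz0 : a 1 * ε = 0 := by linarith
      have hq : a 1 = 0 := (mul_eq_zero.mp hz0).resolve_right hε.ne'
      have hq2 : a 1 ^ 2 = 0 := by rw [hq]; ring
      have hp2 : a 0 * a 0 = 1 := by nlinarith [hpq]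
      rcases mul_self_eq_one_iff.mp hp2 with hp | hp
      · have hb : b = -2 := by rw [hp, hq] at hxb; linarith
        refine contra_of hcard6 (!₂[-2, ε]) (!₂[-2, -ε]) hle ?_
        intro z hz
        rw [Finset.mem_filter] at hz
        obtain ⟨hzI, hzb⟩ := hz
        simp only [Finset.mem_insert, Finset.mem_singleton]
        rcases hIelem z hzI with rfl | rfl | rfl | rfl | rfl | rfl
        · rw [inner_eval, hp, hq] at hzb
          exfalso
          linarith
        · rw [inner_eval, hp, hq] at hzb
          exfalso
          linarith
        · exact Or.inl rfl
        · exact Or.inr rfl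
        · rw [inner_eval, hp, hq] at hzb
          exfalso
          linarith
        · rw [inner_eval, hp, hq] at hzb
          exfalso
          linarith
      · have hb : b = 2 := by rw [hp, hq] at hxb; linarith
        refine contra_of hcard6 (!₂[-2, ε]) (!₂[-2, -ε]) hge ?_
        intro z hz
        rw [Finset.mem_filter] at hz
        obtain ⟨hzI, hzb⟩ := hz
        simp only [Finset.mem_insert, Finset.mem_singleton]
        rcases hIelem z hzI with rfl | rfl | rfl | rfl | rfl | rfl
        · rw [inner_eval, hp, hq] at hzb
          exfalso
          linarith
        · rw [inner_eval, hp, hq] at hzb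
          exfalso
          linarith
        · exact Or.inl rfl
        · exact Or.inr rfl
        · rw [inner_eval, hp, hq] at hzb
          exfalso
          linarith
        · rw [inner_eval, hp, hq] at hzb
          exfalso
          linarith
    · exact absurd rfl hxy
    · rw [inner_eval] at hxb hyb
      apply key ε b hε
      have e1 : ε * a 1 = -(3 * a 0) := by linarith
      have e2 : (ε * a 1) ^ 2 = (3 * a 0) ^ 2 := by rw [e1]; try ring
      have hb : b = (a 0) := by linarith
      have hb2 : b ^ 2 = a 0 ^ 2 := by rw [hb]; try ring
      nlinarith [e2, hb2, hpq, sq_nonneg ε, sq_nonneg (a 0)]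
    · rw [inner_eval] at hxb hyb
      apply key ε b hε
      have e1 : a 0 = -(ε * a 1) := by linarith
      have e2 : a 0 ^ 2 = ε ^ 2 * a 1 ^ 2 := by rw [e1]; try ring
      have hb : b = -(a 0) := by linarith
      have hb2 : b ^ 2 = a 0 ^ 2 := by rw [hb]; try ring
      nlinarith [e2, hb2, hpq, sq_nonneg ε]
  · rcases hyI with rfl | rfl | rfl | rfl | rfl | rfl
    · rw [inner_eval] at hxb hyb
      apply key ε b hε
      have e1 : a 0 = -(ε * a 1) := by linarith
      have e2 : a 0 ^ 2 = ε ^ 2 * a 1 ^ 2 := by rw [e1]; try ring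
      have hb : b = (a 0) := by linarith
      have hb2 : b ^ 2 = a 0 ^ 2 := by rw [hb]; try ring
      nlinarith [e2, hb2, hpq, sq_nonneg ε]
    · rw [inner_eval] at hxb hyb
      apply key ε b hε
      have e1 : a 0 = (ε * a 1) := by linarith
      have e2 : a 0 ^ 2 = ε ^ 2 * a 1 ^ 2 := by rw [e1]; try ring
      have hb : b = (a 0) := by linarith
      have hb2 : b ^ 2 = a 0 ^ 2 := by rw [hb]; try ring
      nlinarith [e2, hb2, hpq, sq_nonneg ε]
    · rw [inner_eval] at hxb hyb
      apply key ε b hε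
      have e1 : ε * a 1 = (3 * a 0) := by linarith
      have e2 : (ε * a 1) ^ 2 = (3 * a 0) ^ 2 := by rw [e1]; try ring
      have hb : b = (a 0) := by linarith
      have hb2 : b ^ 2 = a 0 ^ 2 := by rw [hb]; try ring
      nlinarith [e2, hb2, hpq, sq_nonneg ε, sq_nonneg (a 0)]
    · rw [inner_eval] at hxb hyb
      apply key ε b hε
      have e1 : ε * a 1 = -(3 * a 0) := by linarith
      have e2 : (ε * a 1) ^ 2 = (3 * a 0) ^ 2 := by rw [e1]; try ring
      have hb : b = (a 0) := by linarith
      have hb2 : b ^ 2 = a 0 ^ 2 := by rw [hb]; try ring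
      nlinarith [e2, hb2, hpq, sq_nonneg ε, sq_nonneg (a 0)]
    · exact absurd rfl hxy
    · rw [inner_eval] at hxb hyb
      apply key ε b hε
      have hb : b = 0 := by linarith
      rw [hb]
      nlinarith [sq_nonneg ε]
  · rcases hyI with rfl | rfl | rfl | rfl | rfl | rfl
    · rw [inner_eval] at hxb hyb
      apply key ε b hε
      have e1 : ε * a 1 = -(3 * a 0) := by linarith
      have e2 : (ε * a 1) ^ 2 = (3 * a 0) ^ 2 := by rw [e1]; try ring
      have hb : b = -(a 0) := by linarith
      have hb2 : b ^ 2 = a 0 ^ 2 := by rw [hb]; try ring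
      nlinarith [e2, hb2, hpq, sq_nonneg ε, sq_nonneg (a 0)]
    · rw [inner_eval] at hxb hyb
      apply key ε b hε
      have e1 : ε * a 1 = (3 * a 0) := by linarith
      have e2 : (ε * a 1) ^ 2 = (3 * a 0) ^ 2 := by rw [e1]; try ring
      have hb : b = -(a 0) := by linarith
      have hb2 : b ^ 2 = a 0 ^ 2 := by rw [hb]; try ring
      nlinarith [e2, hb2, hpq, sq_nonneg ε, sq_nonneg (a 0)]
    · rw [inner_eval] at hxb hyb
      apply key ε b hε
      have e1 : a 0 = (ε * a 1) := by linarith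
      have e2 : a 0 ^ 2 = ε ^ 2 * a 1 ^ 2 := by rw [e1]; try ring
      have hb : b = -(a 0) := by linarith
      have hb2 : b ^ 2 = a 0 ^ 2 := by rw [hb]; try ring
      nlinarith [e2, hb2, hpq, sq_nonneg ε]
    · rw [inner_eval] at hxb hyb
      apply key ε b hε
      have e1 : a 0 = -(ε * a 1) := by linarith
      have e2 : a 0 ^ 2 = ε ^ 2 * a 1 ^ 2 := by rw [e1]; try ring
      have hb : b = -(a 0) := by linarith
      have hb2 : b ^ 2 = a 0 ^ 2 := by rw [hb]; try ring
      nlinarith [e2, hb2, hpq, sq_nonneg ε]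
    · rw [inner_eval] at hxb hyb
      apply key ε b hε
      have hb : b = 0 := by linarith
      rw [hb]
      nlinarith [sq_nonneg ε]
    · exact absurd rfl hxy

set_option maxHeartbeats 1000000 in
lemma witness_bound (ε : ℝ) (hε : 0 < ε) (I : Finset (Pt 2)) (hcard6 : I.card = 6)
    (hIelem : ∀ x ∈ I, x = !₂[2, ε] ∨ x = !₂[2, -ε] ∨ x = !₂[-2, ε] ∨ x = !₂[-2, -ε] ∨
      x = !₂[1, 0] ∨ x = !₂[-1, 0]) :
    ∀ a b, IsMedianHyperplane I a b → |⟪a, (0 : Pt 2)⟫ - b| ≤ 2 + ε := by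
  rintro a b ⟨hnorm, hle, hge⟩
  have hpq : a 0 ^ 2 + a 1 ^ 2 = 1 := norm_eval a hnorm
  have hp := abs_le.mp ((sq_le_one_iff_abs_le_one (a 0)).mp (by nlinarith [sq_nonneg (a 1)]))
  have hq := abs_le.mp ((sq_le_one_iff_abs_le_one (a 1)).mp (by nlinarith [sq_nonneg (a 0)]))
  have hbound : ∀ z ∈ I, -(2 + ε) ≤ ⟪a, z⟫ ∧ ⟪a, z⟫ ≤ 2 + ε := by
    intro z hz
    rcases hIelem z hz with rfl | rfl | rfl | rfl | rfl | rfl <;>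
      (rw [inner_eval]; constructor) <;>
      nlinarith [hp.1, hp.2, hq.1, hq.2, hε]
  have hle' := hle
  have hge' := hge
  rw [hcard6] at hle' hge'
  obtain ⟨x, hx⟩ := Finset.card_pos.mp
    (by exact_mod_cast lt_of_lt_of_le (by norm_num : (0:ℝ) < 6 / 2) hle')
  obtain ⟨y, hy⟩ := Finset.card_pos.mp
    (by exact_mod_cast lt_of_lt_of_le (by norm_num : (0:ℝ) < 6 / 2) hge')
  rw [Finset.mem_filter] at hx hy
  have h1 := hbound x hx.1
  have h2 := hbound y hy.1
  rw [inner_zero_right, zero_sub, abs_neg, abs_le]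
  exact ⟨by linarith [hx.2, h1.1], by linarith [hy.2, h2.2]⟩

open scoped Classical in
set_option maxHeartbeats 1000000 in
lemma median_vert (ε : ℝ) (hε : 0 < ε) (I : Finset (Pt 2)) (hcard6 : I.card = 6)
    (p1 p2 p3 p4 p5 p6 v : Pt 2)
    (hp1 : p1 = !₂[2, ε]) (hp2 : p2 = !₂[2, -ε]) (hp3 : p3 = !₂[-2, ε]) (hp4 : p4 = !₂[-2, -ε])
    (hp5 : p5 = !₂[1, 0]) (hp6 : p6 = !₂[-1, 0]) (hv : v = !₂[1, 0])
    (mem1 : p1 ∈ I) (mem2 : p2 ∈ I) (mem3 : p3 ∈ I) (mem4 : p4 ∈ I) (mem5 : p5 ∈ I)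
    (mem6 : p6 ∈ I) (b' : ℝ) (hb' : b' = 1 ∨ b' = -1) : IsMedianHyperplane I v b' := by
  have εne : ε ≠ -ε := by intro h; linarith
  have hv0 : v 0 = 1 := by rw [hv]; simp
  have hv1 : v 1 = 0 := by rw [hv]; simp
  have hn1' : ‖v‖ = 1 := norm_eval2 v (by rw [hv0, hv1]; norm_num)
  refine ⟨hn1', ?_, ?_⟩
  · have hlow : ({p3, p4, p6} : Finset (Pt 2)) ⊆ I.filter fun x => ⟪v, x⟫ ≤ b' := by
      intro z hz
      simp only [Finset.mem_insert, Finset.mem_singleton] at hz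
      rw [Finset.mem_filter]
      rcases hz with rfl | rfl | rfl
      · refine ⟨mem3, ?_⟩
        rw [hp3, inner_eval, hv0, hv1]
        rcases hb' with rfl | rfl <;> norm_num
      · refine ⟨mem4, ?_⟩
        rw [hp4, inner_eval, hv0, hv1]
        rcases hb' with rfl | rfl <;> norm_num
      · refine ⟨mem6, ?_⟩
        rw [hp6, inner_eval, hv0, hv1]
        rcases hb' with rfl | rfl <;> norm_num
    have hc3 : ({p3, p4, p6} : Finset (Pt 2)).card = 3 :=
      card3 _ (by rw [hp3, hp4]; exact pt_ne_snd εne)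
        (by rw [hp3, hp6]; exact pt_ne_fst (by norm_num))
        (by rw [hp4, hp6]; exact pt_ne_fst (by norm_num))
    have hcl := le_trans (le_of_eq hc3.symm) (Finset.card_le_card hlow)
    rw [hcard6]
    exact le_trans (by norm_num) (Nat.cast_le.mpr hcl)
  · have hhigh : ({p1, p2, p5} : Finset (Pt 2)) ⊆ I.filter fun x => b' ≤ ⟪v, x⟫ := by
      intro z hz
      simp only [Finset.mem_insert, Finset.mem_singleton] at hz
      rw [Finset.mem_filter]
      rcases hz with rfl | rfl | rfl
      · refine ⟨mem1, ?_⟩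
        rw [hp1, inner_eval, hv0, hv1]
        rcases hb' with rfl | rfl <;> norm_num
      · refine ⟨mem2, ?_⟩
        rw [hp2, inner_eval, hv0, hv1]
        rcases hb' with rfl | rfl <;> norm_num
      · refine ⟨mem5, ?_⟩
        rw [hp5, inner_eval, hv0, hv1]
        rcases hb' with rfl | rfl <;> norm_num
    have hc3 : ({p1, p2, p5} : Finset (Pt 2)).card = 3 :=
      card3 _ (by rw [hp1, hp2]; exact pt_ne_snd εne)
        (by rw [hp1, hp5]; exact pt_ne_fst (by norm_num))
        (by rw [hp2, hp5]; exact pt_ne_fst (by norm_num))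
    have hch := le_trans (le_of_eq hc3.symm) (Finset.card_le_card hhigh)
    rw [hcard6]
    exact le_trans (by norm_num) (Nat.cast_le.mpr hch)

set_option maxHeartbeats 1000000 in
open scoped Classical in
/-- For the six ideal points `(±2, ±ε), (±1, 0)` in `ℝ²`, the yolk radius is
at least `1`, the LP yolk radius is at most `ε/√(1+ε²)`, and in particular the closed ball
centered at the origin with radius `ε/√(1+ε²)` intersects every limiting median
hyperplane. -/
theorem six_point_example (ε : ℝ) (hε : 0 < ε) :
    ∀ I : Finset (Pt 2),
      I = ({!₂[2, ε], !₂[2, -ε], !₂[-2, ε], !₂[-2, -ε], !₂[1, 0], !₂[-1, 0]} : Finset (Pt 2)) →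
      1 ≤ yolkRadius I ∧
      lpYolkRadius I ≤ ε / Real.sqrt (1 + ε ^ 2) ∧
      ∀ a b, IsLimitingMedianHyperplane I a b →
        |⟪a, (0 : Pt 2)⟫ - b| ≤ ε / Real.sqrt (1 + ε ^ 2) := by
  intro I hI
  have εne : ε ≠ -ε := by intro h; linarith
  have hIelem : ∀ x ∈ I, x = !₂[2, ε] ∨ x = !₂[2, -ε] ∨ x = !₂[-2, ε] ∨ x = !₂[-2, -ε] ∨
      x = !₂[1, 0] ∨ x = !₂[-1, 0] := by
    intro x hx
    rw [hI] at hx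
    simpa only [Finset.mem_insert, Finset.mem_singleton] using hx
  obtain ⟨p1, hp1⟩ : ∃ w : Pt 2, w = !₂[2, ε] := ⟨_, rfl⟩
  obtain ⟨p2, hp2⟩ : ∃ w : Pt 2, w = !₂[2, -ε] := ⟨_, rfl⟩
  obtain ⟨p3, hp3⟩ : ∃ w : Pt 2, w = !₂[-2, ε] := ⟨_, rfl⟩
  obtain ⟨p4, hp4⟩ : ∃ w : Pt 2, w = !₂[-2, -ε] := ⟨_, rfl⟩
  obtain ⟨p5, hp5⟩ : ∃ w : Pt 2, w = !₂[1, 0] := ⟨_, rfl⟩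
  obtain ⟨p6, hp6⟩ : ∃ w : Pt 2, w = !₂[-1, 0] := ⟨_, rfl⟩
  have mem1 : p1 ∈ I := by
    rw [hp1, hI]; exact Finset.mem_insert_self _ _
  have mem2 : p2 ∈ I := by
    rw [hp2, hI]; exact Finset.mem_insert_of_mem (Finset.mem_insert_self _ _)
  have mem3 : p3 ∈ I := by
    rw [hp3, hI]
    exact Finset.mem_insert_of_mem (Finset.mem_insert_of_mem (Finset.mem_insert_self _ _))
  have mem4 : p4 ∈ I := by
    rw [hp4, hI]
    exact Finset.mem_insert_of_mem (Finset.mem_insert_of_mem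
      (Finset.mem_insert_of_mem (Finset.mem_insert_self _ _)))
  have mem5 : p5 ∈ I := by
    rw [hp5, hI]
    exact Finset.mem_insert_of_mem (Finset.mem_insert_of_mem (Finset.mem_insert_of_mem
      (Finset.mem_insert_of_mem (Finset.mem_insert_self _ _))))
  have mem6 : p6 ∈ I := by
    rw [hp6, hI]
    exact Finset.mem_insert_of_mem (Finset.mem_insert_of_mem (Finset.mem_insert_of_mem
      (Finset.mem_insert_of_mem (Finset.mem_insert_of_mem (Finset.mem_singleton_self _)))))
  obtain ⟨S, hS⟩ : ∃ S : Finset (Pt 2), S = {p1, p2, p3, p4, p5, p6} := ⟨_, rfl⟩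
  have hsub1 : S ⊆ I := by
    rw [hS]
    intro z hz
    simp only [Finset.mem_insert, Finset.mem_singleton] at hz
    rcases hz with rfl | rfl | rfl | rfl | rfl | rfl
    exacts [mem1, mem2, mem3, mem4, mem5, mem6]
  have hsub2 : I ⊆ S := by
    intro z hz
    rw [hS]
    simp only [Finset.mem_insert, Finset.mem_singleton]
    rcases hIelem z hz with rfl | rfl | rfl | rfl | rfl | rfl
    · exact Or.inl hp1.symm
    · exact Or.inr (Or.inl hp2.symm)
    · exact Or.inr (Or.inr (Or.inl hp3.symm))
    · exact Or.inr (Or.inr (Or.inr (Or.inl hp4.symm)))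
    · exact Or.inr (Or.inr (Or.inr (Or.inr (Or.inl hp5.symm))))
    · exact Or.inr (Or.inr (Or.inr (Or.inr (Or.inr hp6.symm))))
  have hScard : S.card = 6 := by
    rw [hS]
    exact card6 _ (by rw [hp1, hp2]; exact pt_ne_snd εne)
      (by rw [hp1, hp3]; exact pt_ne_fst (by norm_num))
      (by rw [hp1, hp4]; exact pt_ne_fst (by norm_num))
      (by rw [hp1, hp5]; exact pt_ne_fst (by norm_num))
      (by rw [hp1, hp6]; exact pt_ne_fst (by norm_num))
      (by rw [hp2, hp3]; exact pt_ne_fst (by norm_num))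
      (by rw [hp2, hp4]; exact pt_ne_fst (by norm_num))
      (by rw [hp2, hp5]; exact pt_ne_fst (by norm_num))
      (by rw [hp2, hp6]; exact pt_ne_fst (by norm_num))
      (by rw [hp3, hp4]; exact pt_ne_snd εne)
      (by rw [hp3, hp5]; exact pt_ne_fst (by norm_num))
      (by rw [hp3, hp6]; exact pt_ne_fst (by norm_num))
      (by rw [hp4, hp5]; exact pt_ne_fst (by norm_num))
      (by rw [hp4, hp6]; exact pt_ne_fst (by norm_num))
      (by rw [hp5, hp6]; exact pt_ne_fst (by norm_num))
  have hcard6 : I.card = 6 := by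
    have h1 := Finset.card_le_card hsub1
    have h2 := Finset.card_le_card hsub2
    omega
  have hmain := lp_bound ε hε I hcard6 hIelem
  refine ⟨?_, ?_, hmain⟩
  · apply le_csInf
    · exact ⟨2 + ε, by positivity, 0, witness_bound ε hε I hcard6 hIelem⟩
    · rintro r ⟨hr0, c, hc⟩
      have med := median_vert ε hε I hcard6 p1 p2 p3 p4 p5 p6 _ hp1 hp2 hp3 hp4 hp5 hp6 rfl
        mem1 mem2 mem3 mem4 mem5 mem6
      have m1 := hc _ 1 (med 1 (Or.inl rfl))
      have m2 := hc _ (-1) (med (-1) (Or.inr rfl))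
      rw [abs_le] at m1 m2
      linarith [m1.1, m2.2]
  · apply csInf_le
    · exact ⟨0, fun r hr => hr.1⟩
    · exact ⟨by positivity, 0, hmain⟩
end
end

section
/- Let I ⊆ ℝ^k be a finite set of ideal points and let B(c,r) be a yolk of I. Then there exists a set ℋ' of at most k+1 median hyperplanes of I such that B(c,r) intersects every hyperplane in ℋ' and every closed ball intersecting every hyperplane in ℋ' has radius at least r (i.e., B(c,r) is a smallest ball intersecting every hyperplane in ℋ'). -/
open scoped RealInnerProductSpace
open Real

noncomputable section

section Aux

open Finset

variable {k : ℕ}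

lemma sum_extend_eq {ι α M : Type*} [Fintype ι] [Fintype α] [AddCommMonoid M]
    (e : ι ↪ α) (v : ι → M) :
    ∑ j, Function.extend e v (fun _ => 0) j = ∑ i, v i := by
  classical
  have h1 : ∑ j ∈ Finset.univ.image e, Function.extend e v (fun _ => 0) j = ∑ i, v i := by
    rw [Finset.sum_image (fun a _ b _ h => e.injective h)]
    exact Finset.sum_congr rfl fun i _ => e.injective.extend_apply v _ i
  rw [← h1]
  refine (Finset.sum_subset (Finset.subset_univ _) fun j _ hj => ?_).symm
  have : ¬∃ i, e i = j := by simpa [Finset.mem_image] using hj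
  exact Function.extend_apply' v _ j this

lemma isClosed_medcond (I : Finset (Pt k)) (m : ℝ) (F : (Pt k × ℝ) → Pt k → ℝ)
    (hF : ∀ x, Continuous fun p => F p x) :
    IsClosed {p : Pt k × ℝ | m ≤ (((I.filter fun x => F p x ≤ 0).card : ℕ) : ℝ)} := by
  classical
  have hset : {p : Pt k × ℝ | m ≤ (((I.filter fun x => F p x ≤ 0).card : ℕ) : ℝ)} =
      ⋃ S ∈ (I.powerset.filter fun S => m ≤ (S.card : ℝ)),
        {p : Pt k × ℝ | ∀ x ∈ S, F p x ≤ 0} := by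
    ext p
    simp only [Set.mem_iUnion, Set.mem_setOf_eq, Finset.mem_filter, Finset.mem_powerset,
      exists_prop]
    constructor
    · intro h
      exact ⟨I.filter fun x => F p x ≤ 0, ⟨Finset.filter_subset _ _, h⟩,
        fun x hx => (Finset.mem_filter.mp hx).2⟩
    · rintro ⟨S, ⟨hSI, hcard⟩, hall⟩
      refine le_trans hcard ?_
      exact_mod_cast Finset.card_le_card
        (fun x hx => Finset.mem_filter.mpr ⟨hSI hx, hall x hx⟩)
  rw [hset]
  refine isClosed_biUnion_finset fun S _ => ?_
  have : {p : Pt k × ℝ | ∀ x ∈ S, F p x ≤ 0} = ⋂ x ∈ S, {p : Pt k × ℝ | F p x ≤ 0} := by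
    ext p; simp
  rw [this]
  exact isClosed_biInter fun x _ => isClosed_le (hF x) continuous_const

lemma isClosed_medianSet (I : Finset (Pt k)) :
    IsClosed {p : Pt k × ℝ | IsMedianHyperplane I p.1 p.2} := by
  classical
  have e1 : ∀ p : Pt k × ℝ,
      (I.filter fun x => ⟪p.1, x⟫ ≤ p.2) = (I.filter fun x => ⟪p.1, x⟫ - p.2 ≤ 0) := by
    intro p
    apply Finset.filter_congr
    intro x _
    simp [sub_nonpos]
  have e2 : ∀ p : Pt k × ℝ,
      (I.filter fun x => p.2 ≤ ⟪p.1, x⟫) = (I.filter fun x => p.2 - ⟪p.1, x⟫ ≤ 0) := by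
    intro p
    apply Finset.filter_congr
    intro x _
    simp [sub_nonpos]
  have hset : {p : Pt k × ℝ | IsMedianHyperplane I p.1 p.2} =
      {p : Pt k × ℝ | ‖p.1‖ = 1} ∩
      ({p : Pt k × ℝ | (I.card : ℝ) / 2 ≤
          (((I.filter fun x => ⟪p.1, x⟫ - p.2 ≤ 0).card : ℕ) : ℝ)} ∩
       {p : Pt k × ℝ | (I.card : ℝ) / 2 ≤
          (((I.filter fun x => p.2 - ⟪p.1, x⟫ ≤ 0).card : ℕ) : ℝ)}) := by
    ext p
    simp only [IsMedianHyperplane, Set.mem_setOf_eq, Set.mem_inter_iff]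
    rw [e1 p, e2 p]
  rw [hset]
  refine IsClosed.inter (isClosed_eq (continuous_fst.norm) continuous_const) ?_
  refine IsClosed.inter ?_ ?_
  · exact isClosed_medcond I _ _ fun x =>
      (Continuous.inner continuous_fst continuous_const).sub continuous_snd
  · exact isClosed_medcond I _ _ fun x =>
      continuous_snd.sub (Continuous.inner continuous_fst continuous_const)

end Aux

/-- If `B(c,r)` is a yolk of a finite `I ⊆ ℝ^k`, then some set `ℋ'` of at most
`k+1` median hyperplanes of `I` is intersected by `B(c,r)` and already forces radius `r`:
every closed ball intersecting all hyperplanes of `ℋ'` has radius at least `r`. -/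
theorem yolk_defined_by_k_plus_one_hyperplanes {k : ℕ} (I : Finset (Pt k))
    (c : Pt k) (r : ℝ) (hyolk : IsYolk I c r) :
    ∃ H' : Finset (Pt k × ℝ), H'.card ≤ k + 1 ∧
      (∀ p ∈ H', IsMedianHyperplane I p.1 p.2) ∧
      (∀ p ∈ H', |⟪p.1, c⟫ - p.2| ≤ r) ∧
      ∀ (c' : Pt k) (r' : ℝ), (∀ p ∈ H', |⟪p.1, c'⟫ - p.2| ≤ r') → r ≤ r' := by
  classical
  obtain ⟨hy1, hy2⟩ := hyolk
  set M : Set (Pt k × ℝ) := {p | IsMedianHyperplane I p.1 p.2} with hMdef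
  -- M is nonempty, otherwise the minimality clause is contradictory
  rcases Set.eq_empty_or_nonempty M with hMe | hMne
  · exfalso
    have hbound : ∀ a b, IsMedianHyperplane I a b → |⟪a, c⟫ - b| ≤ r - 1 := by
      intro a b hab
      exact ((Set.eq_empty_iff_forall_notMem.mp hMe) (a, b) hab).elim
    have := hy2 c (r - 1) hbound
    linarith
  obtain ⟨p0, hp0⟩ := hMne
  have hp0' : IsMedianHyperplane I p0.1 p0.2 := hp0
  have hr0 : 0 ≤ r := le_trans (abs_nonneg _) (hy1 p0.1 p0.2 hp0')
  -- I is nonempty, otherwise we can translate a median hyperplane arbitrarily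
  rcases Finset.eq_empty_or_nonempty I with hIe | hIne
  · exfalso
    have hmed : IsMedianHyperplane I p0.1 (⟪p0.1, c⟫ + (r + 1)) := by
      refine ⟨hp0'.1, ?_, ?_⟩ <;> simp [hIe]
    have h := hy1 _ _ hmed
    rw [show ⟪p0.1, c⟫ - (⟪p0.1, c⟫ + (r + 1)) = -(r + 1) by ring, abs_neg,
      abs_of_nonneg (by linarith)] at h
    linarith
  -- M is compact
  have hMclosed : IsClosed M := isClosed_medianSet I
  set R : ℝ := I.sup' hIne fun x => ‖x‖ with hRdef
  have hMsub : M ⊆ (Metric.closedBall (0 : Pt k) 1) ×ˢ (Set.Icc (-R) R) := by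
    rintro ⟨a, b⟩ hab
    have hab' : IsMedianHyperplane I a b := hab
    obtain ⟨hnorm, hc1, hc2⟩ := hab'
    have hcardpos : (0 : ℝ) < (I.card : ℝ) / 2 := by
      have h1 : (1 : ℝ) ≤ (I.card : ℝ) := by exact_mod_cast Finset.card_pos.mpr hIne
      linarith
    refine ⟨?_, ?_⟩
    · simp [Metric.mem_closedBall, dist_eq_norm, hnorm]
    · have h1 : ∃ x ∈ I, ⟪a, x⟫ ≤ b := by
        have hpos : 0 < (I.filter fun x => ⟪a, x⟫ ≤ b).card := by
          exact_mod_cast lt_of_lt_of_le hcardpos hc1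
        obtain ⟨x, hx⟩ := Finset.card_pos.mp hpos
        exact ⟨x, (Finset.mem_filter.mp hx).1, (Finset.mem_filter.mp hx).2⟩
      have h2 : ∃ x ∈ I, b ≤ ⟪a, x⟫ := by
        have hpos : 0 < (I.filter fun x => b ≤ ⟪a, x⟫).card := by
          exact_mod_cast lt_of_lt_of_le hcardpos hc2
        obtain ⟨x, hx⟩ := Finset.card_pos.mp hpos
        exact ⟨x, (Finset.mem_filter.mp hx).1, (Finset.mem_filter.mp hx).2⟩
      obtain ⟨x, hxI, hxb⟩ := h1
      obtain ⟨y, hyI, hyb⟩ := h2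
      have hxR : |⟪a, x⟫| ≤ R :=
        le_trans (by simpa [hnorm] using abs_real_inner_le_norm a x)
          (Finset.le_sup' (f := fun x => ‖x‖) hxI)
      have hyR : |⟪a, y⟫| ≤ R :=
        le_trans (by simpa [hnorm] using abs_real_inner_le_norm a y)
          (Finset.le_sup' (f := fun x => ‖x‖) hyI)
      constructor
      · have := neg_abs_le ⟪a, x⟫
        linarith
      · have := le_abs_self ⟪a, y⟫
        linarith
  have hMcomp : IsCompact M :=
    IsCompact.of_isClosed_subset ((isCompact_closedBall (0 : Pt k) 1).prod isCompact_Icc)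
      hMclosed hMsub
  -- The set of "active" signed hyperplanes and the set of active gradients
  set Act : Set ((Pt k × ℝ) × ℝ) :=
    {q | q.1 ∈ M ∧ (q.2 = 1 ∨ q.2 = -1) ∧ q.2 * (⟪q.1.1, c⟫ - q.1.2) = r} with hActdef
  set G : Set (Pt k) := (fun q : (Pt k × ℝ) × ℝ => q.2 • q.1.1) '' Act with hGdef
  have hActclosed : IsClosed Act := by
    have hrepr : Act = (Prod.fst ⁻¹' M) ∩ ((Prod.snd ⁻¹' ({1, -1} : Set ℝ)) ∩
        {q : (Pt k × ℝ) × ℝ | q.2 * (⟪q.1.1, c⟫ - q.1.2) = r}) := by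
      ext q
      simp only [hActdef, Set.mem_setOf_eq, Set.mem_inter_iff, Set.mem_preimage,
        Set.mem_insert_iff, Set.mem_singleton_iff]
    rw [hrepr]
    refine (hMclosed.preimage continuous_fst).inter (IsClosed.inter ?_ ?_)
    · exact (((Set.finite_singleton (-1)).insert 1).isClosed).preimage continuous_snd
    · exact isClosed_eq (continuous_snd.mul
        ((Continuous.inner continuous_fst.fst continuous_const).sub continuous_fst.snd))
        continuous_const
  have hActcomp : IsCompact Act :=
    IsCompact.of_isClosed_subset
      (hMcomp.prod (((Set.finite_singleton ((-1:ℝ))).insert 1).isCompact))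
      hActclosed (fun q hq => ⟨hq.1, show q.2 ∈ ({1, -1} : Set ℝ) by
        rcases hq.2.1 with h | h <;> simp [h]⟩)
  have hGcomp : IsCompact G := hActcomp.image (continuous_snd.smul continuous_fst.fst)
  -- Main step: 0 is in the closed convex hull of the active gradients
  have h0cl : (0 : Pt k) ∈ closure (convexHull ℝ G) := by
    by_contra h0
    obtain ⟨f, u, hfu, hsep⟩ := geometric_hahn_banach_point_closed
      ((convex_convexHull ℝ G).closure) isClosed_closure h0
    rw [map_zero] at hfu
    set v : Pt k := (InnerProductSpace.toDual ℝ (Pt k)).symm f with hvdef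
    have hvy : ∀ y : Pt k, ⟪v, y⟫ = f y := fun y => InnerProductSpace.toDual_symm_apply
    set d : Pt k := -v with hddef
    have hGd : ∀ g ∈ G, ⟪g, d⟫ < -u := by
      intro g hg
      have h1 : u < f g := hsep g (subset_closure (subset_convexHull ℝ G hg))
      have h2 : ⟪g, d⟫ = -(f g) := by
        rw [hddef, inner_neg_right, real_inner_comm, hvy]
      rw [h2]; linarith
    have hkey : ∃ t : ℝ, 0 < t ∧ ∀ p ∈ M, |⟪p.1, c + t • d⟫ - p.2| ≤ r - t * (u / 2) := by
      by_contra hcon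
      push_neg at hcon
      set t : ℕ → ℝ := fun n => 1 / ((n : ℝ) + 1) with htdef
      have ht : ∀ n, 0 < t n := fun n => by positivity
      choose p hpM hplt using fun n => hcon (t n) (ht n)
      have hmed : ∀ n, IsMedianHyperplane I (p n).1 (p n).2 := fun n => hpM n
      set s : ℕ → ℝ := fun n => if 0 ≤ ⟪(p n).1, c + t n • d⟫ - (p n).2 then 1 else -1
        with hsdef
      have hs1 : ∀ n, s n = 1 ∨ s n = -1 := by
        intro n; rw [hsdef]; dsimp only; split <;> simp
      have hsabs : ∀ n, s n * (⟪(p n).1, c + t n • d⟫ - (p n).2)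
          = |⟪(p n).1, c + t n • d⟫ - (p n).2| := by
        intro n; rw [hsdef]; dsimp only; split
        · rw [one_mul, abs_of_nonneg ‹_›]
        · rw [neg_one_mul, abs_of_neg (not_le.mp ‹_›)]
      have hexp : ∀ n, ⟪(p n).1, c + t n • d⟫ = ⟪(p n).1, c⟫ + t n * ⟪(p n).1, d⟫ :=
        fun n => by rw [inner_add_right, real_inner_smul_right]
      have hAB : ∀ n, r - t n * (u / 2)
          < s n * (⟪(p n).1, c⟫ - (p n).2) + t n * (s n * ⟪(p n).1, d⟫) := by
        intro n
        have h := hplt n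
        rw [← hsabs n, hexp n] at h
        calc r - t n * (u / 2) < s n * (⟪(p n).1, c⟫ + t n * ⟪(p n).1, d⟫ - (p n).2) := h
          _ = s n * (⟪(p n).1, c⟫ - (p n).2) + t n * (s n * ⟪(p n).1, d⟫) := by ring
      have hAle : ∀ n, s n * (⟪(p n).1, c⟫ - (p n).2) ≤ r := by
        intro n
        have habs : |⟪(p n).1, c⟫ - (p n).2| ≤ r := hy1 _ _ (hmed n)
        rcases hs1 n with h | h <;> rw [h]
        · rw [one_mul]; exact le_trans (le_abs_self _) habs
        · rw [neg_one_mul]; exact le_trans (neg_le_abs _) habs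
      have hBlb : ∀ n, -(u / 2) < s n * ⟪(p n).1, d⟫ := by
        intro n
        by_contra hle
        push_neg at hle
        have h2 := mul_le_mul_of_nonneg_left hle (ht n).le
        have h3 := hAle n
        have h := hAB n
        nlinarith
      have hBub : ∀ n, t n * (s n * ⟪(p n).1, d⟫) ≤ t n * ‖d‖ := by
        intro n
        refine mul_le_mul_of_nonneg_left ?_ (ht n).le
        have h1 : |⟪(p n).1, d⟫| ≤ ‖d‖ := by
          simpa [(hmed n).1] using abs_real_inner_le_norm (p n).1 d
        rcases hs1 n with h | h <;> rw [h]
        · rw [one_mul]; exact le_trans (le_abs_self _) h1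
        · rw [neg_one_mul]; exact le_trans (neg_le_abs _) h1
      have hAlb : ∀ n, r - t n * (u / 2) - t n * ‖d‖ < s n * (⟪(p n).1, c⟫ - (p n).2) := by
        intro n
        have h := hAB n
        have h2 := hBub n
        linarith
      have hK2 : IsCompact (M ×ˢ ({1, -1} : Set ℝ)) :=
        hMcomp.prod (((Set.finite_singleton ((-1:ℝ))).insert 1).isCompact)
      have hq : ∀ n, ((p n, s n) : (Pt k × ℝ) × ℝ) ∈ M ×ˢ ({1, -1} : Set ℝ) := fun n =>
        ⟨hpM n, by rcases hs1 n with h | h <;> simp [h]⟩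
      obtain ⟨L, hL, φ, hφ, hlim⟩ := hK2.tendsto_subseq hq
      have hLM : IsMedianHyperplane I L.1.1 L.1.2 := hL.1
      have hLs : L.2 = 1 ∨ L.2 = -1 := by
        have h := hL.2
        simpa [Set.mem_insert_iff] using h
      have ht0' : Filter.Tendsto (fun n => t (φ n)) Filter.atTop (nhds 0) :=
        tendsto_one_div_add_atTop_nhds_zero_nat.comp hφ.tendsto_atTop
      have hcontF : Continuous fun q : (Pt k × ℝ) × ℝ => q.2 * (⟪q.1.1, c⟫ - q.1.2) :=
        continuous_snd.mul
          ((Continuous.inner continuous_fst.fst continuous_const).sub continuous_fst.snd)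
      have hcontG : Continuous fun q : (Pt k × ℝ) × ℝ => q.2 * ⟪q.1.1, d⟫ :=
        continuous_snd.mul (Continuous.inner continuous_fst.fst continuous_const)
      have hlimA : Filter.Tendsto (fun n => s (φ n) * (⟪(p (φ n)).1, c⟫ - (p (φ n)).2))
          Filter.atTop (nhds (L.2 * (⟪L.1.1, c⟫ - L.1.2))) :=
        (hcontF.tendsto L).comp hlim
      have hlimB : Filter.Tendsto (fun n => s (φ n) * ⟪(p (φ n)).1, d⟫)
          Filter.atTop (nhds (L.2 * ⟪L.1.1, d⟫)) :=
        (hcontG.tendsto L).comp hlim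
      have hAinfge : r ≤ L.2 * (⟪L.1.1, c⟫ - L.1.2) := by
        have hlhs : Filter.Tendsto (fun n => r - t (φ n) * (u / 2) - t (φ n) * ‖d‖)
            Filter.atTop (nhds r) := by
          have h := ((tendsto_const_nhds (x := r)).sub (ht0'.mul_const (u / 2))).sub
            (ht0'.mul_const ‖d‖)
          simpa using h
        exact le_of_tendsto_of_tendsto' hlhs hlimA fun n => (hAlb (φ n)).le
      have hAinfle : L.2 * (⟪L.1.1, c⟫ - L.1.2) ≤ r := by
        have habs := hy1 _ _ hLM
        rcases hLs with h | h <;> rw [h]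
        · rw [one_mul]; exact le_trans (le_abs_self _) habs
        · rw [neg_one_mul]; exact le_trans (neg_le_abs _) habs
      have hgG : L.2 • L.1.1 ∈ G := ⟨L, ⟨hL.1, hLs, le_antisymm hAinfle hAinfge⟩, rfl⟩
      have h2' : L.2 * ⟪L.1.1, d⟫ < -u := by
        have h := hGd _ hgG
        rwa [real_inner_smul_left] at h
      have h3' : -(u / 2) ≤ L.2 * ⟪L.1.1, d⟫ :=
        ge_of_tendsto hlimB (Filter.Eventually.of_forall fun n => (hBlb (φ n)).le)
      linarith
    obtain ⟨t0, ht0, hkey⟩ := hkey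
    have h := hy2 (c + t0 • d) (r - t0 * (u / 2)) (fun a b hab => hkey (a, b) hab)
    nlinarith
  -- G is nonempty
  rcases Set.eq_empty_or_nonempty G with hGe | hGne
  · exfalso
    rw [hGe] at h0cl
    simp at h0cl
  obtain ⟨g0, hg0⟩ := hGne
  -- the set of convex combinations of k+1 points of G is compact and contains the hull
  set W : Set (Pt k) := {x | ∃ w : Fin (k + 1) → ℝ, ∃ z : Fin (k + 1) → Pt k,
      (∀ i, 0 ≤ w i) ∧ (∑ i, w i) = 1 ∧ (∀ i, z i ∈ G) ∧ (∑ i, w i • z i) = x} with hWdef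
  have hWcomp : IsCompact W := by
    have himg : W = (fun pr : (Fin (k + 1) → ℝ) × (Fin (k + 1) → Pt k) =>
        ∑ i, pr.1 i • pr.2 i) ''
        ((stdSimplex ℝ (Fin (k + 1))) ×ˢ (Set.univ.pi fun _ => G)) := by
      ext x
      constructor
      · rintro ⟨w, z, h0, h1, hGz, hs⟩
        exact ⟨(w, z), ⟨⟨h0, h1⟩, fun i _ => hGz i⟩, hs⟩
      · rintro ⟨⟨w, z⟩, ⟨⟨h0, h1⟩, hz⟩, hs⟩
        exact ⟨w, z, h0, h1, fun i => hz i (Set.mem_univ i), hs⟩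
    rw [himg]
    refine (IsCompact.prod (isCompact_stdSimplex _ _) (isCompact_univ_pi fun _ => hGcomp)).image ?_
    exact continuous_finset_sum _ fun i _ =>
      ((continuous_apply i).comp continuous_fst).smul ((continuous_apply i).comp continuous_snd)
  have hhull : convexHull ℝ G ⊆ W := by
    intro x hx
    obtain ⟨ι, hfin, z, w, hrange, hai, hwpos, hwsum, hsum⟩ :=
      eq_pos_convex_span_of_mem_convexHull hx
    have hcard : Fintype.card ι ≤ k + 1 := by
      have h1 := hai.card_le_finrank_succ
      have h2 : Module.finrank ℝ (vectorSpan ℝ (Set.range z)) ≤ Module.finrank ℝ (Pt k) :=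
        Submodule.finrank_le _
      have h3 : Module.finrank ℝ (Pt k) = k := finrank_euclideanSpace_fin
      omega
    obtain ⟨e⟩ : Nonempty (ι ↪ Fin (k + 1)) :=
      Function.Embedding.nonempty_of_card_le (by simpa using hcard)
    refine ⟨Function.extend e w fun _ => 0, Function.extend e z fun _ => g0, ?_, ?_, ?_, ?_⟩
    · intro j
      by_cases h : ∃ i, e i = j
      · obtain ⟨i, rfl⟩ := h
        rw [e.injective.extend_apply]
        exact (hwpos i).le
      · rw [Function.extend_apply' _ _ _ h]
    · rw [sum_extend_eq e w]; exact hwsum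
    · intro j
      by_cases h : ∃ i, e i = j
      · obtain ⟨i, rfl⟩ := h
        rw [e.injective.extend_apply]
        exact hrange (Set.mem_range_self i)
      · rw [Function.extend_apply' _ _ _ h]; exact hg0
    · have heach : ∀ j, Function.extend e w (fun _ => 0) j • Function.extend e z (fun _ => g0) j
          = Function.extend e (fun i => w i • z i) (fun _ => 0) j := by
        intro j
        by_cases h : ∃ i, e i = j
        · obtain ⟨i, rfl⟩ := h
          rw [e.injective.extend_apply, e.injective.extend_apply, e.injective.extend_apply]
        · rw [Function.extend_apply' _ _ _ h, Function.extend_apply' _ _ _ h,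
            Function.extend_apply' _ _ _ h, zero_smul]
      rw [Finset.sum_congr rfl fun j _ => heach j, sum_extend_eq e _]
      exact hsum
  have h0W : (0 : Pt k) ∈ W := closure_minimal hhull hWcomp.isClosed h0cl
  obtain ⟨w, z, hw0, hw1, hzG, hsum0⟩ := h0W
  have hzG' : ∀ i, ∃ q, q ∈ Act ∧ q.2 • q.1.1 = z i := fun i => hzG i
  choose Q hQmem hQz using hzG'
  have hQM : ∀ i, IsMedianHyperplane I (Q i).1.1 (Q i).1.2 := fun i => (hQmem i).1
  have hQs : ∀ i, (Q i).2 = 1 ∨ (Q i).2 = -1 := fun i => (hQmem i).2.1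
  have hQr : ∀ i, (Q i).2 * (⟪(Q i).1.1, c⟫ - (Q i).1.2) = r := fun i => (hQmem i).2.2
  refine ⟨Finset.image (fun i => (Q i).1) Finset.univ, ?_, ?_, ?_, ?_⟩
  · exact le_trans Finset.card_image_le (by simp)
  · intro pq hpq
    obtain ⟨i, _, rfl⟩ := Finset.mem_image.mp hpq
    exact hQM i
  · intro pq hpq
    obtain ⟨i, _, rfl⟩ := Finset.mem_image.mp hpq
    exact hy1 _ _ (hQM i)
  · intro c' r' hball
    have hball' : ∀ i, |⟪(Q i).1.1, c'⟫ - (Q i).1.2| ≤ r' := fun i =>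
      hball _ (Finset.mem_image.mpr ⟨i, Finset.mem_univ i, rfl⟩)
    have key0 : ∑ i, w i * ⟪z i, c' - c⟫ = 0 := by
      have h1 : ∑ i, w i * ⟪z i, c' - c⟫ = ∑ i, ⟪w i • z i, c' - c⟫ :=
        Finset.sum_congr rfl fun i _ => (real_inner_smul_left _ _ _).symm
      rw [h1, ← sum_inner, hsum0, inner_zero_left]
    have keyr : r = ∑ i, w i * ((Q i).2 * (⟪(Q i).1.1, c'⟫ - (Q i).1.2)) := by
      have hsplit : ∀ i, w i * ((Q i).2 * (⟪(Q i).1.1, c'⟫ - (Q i).1.2))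
          = w i * r + w i * ⟪z i, c' - c⟫ := by
        intro i
        have hz2 : ⟪z i, c' - c⟫ = (Q i).2 * ⟪(Q i).1.1, c' - c⟫ := by
          rw [← hQz i, real_inner_smul_left]
        have hc' : ⟪(Q i).1.1, c'⟫ = ⟪(Q i).1.1, c⟫ + ⟪(Q i).1.1, c' - c⟫ := by
          rw [← inner_add_right, show c + (c' - c) = c' by abel]
        rw [hz2, hc', ← hQr i]
        ring
      rw [Finset.sum_congr rfl fun i _ => hsplit i, Finset.sum_add_distrib,
        ← Finset.sum_mul, hw1, one_mul, key0, add_zero]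
    have step1 : ∑ i, w i * ((Q i).2 * (⟪(Q i).1.1, c'⟫ - (Q i).1.2)) ≤ ∑ i, w i * r' := by
      refine Finset.sum_le_sum fun i _ => ?_
      refine mul_le_mul_of_nonneg_left ?_ (hw0 i)
      refine le_trans ?_ (hball' i)
      rcases hQs i with h | h <;> rw [h]
      · rw [one_mul]; exact le_abs_self _
      · rw [neg_one_mul]; exact neg_le_abs _
    calc r = ∑ i, w i * ((Q i).2 * (⟪(Q i).1.1, c'⟫ - (Q i).1.2)) := keyr
      _ ≤ ∑ i, w i * r' := step1
      _ = r' := by rw [← Finset.sum_mul, hw1, one_mul]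
end
end

section
/- Let ℋ be a nonempty compact set of hyperplanes in ℝ^k, let c ∈ ℝ^k and r ≥ 0, and suppose the closed ball B(c,r) intersects every hyperplane in ℋ. Then the following are equivalent: (i) every closed ball intersecting every hyperplane in ℋ has radius at least r (i.e., B(c,r) is a smallest ball intersecting every hyperplane in ℋ); (ii) for every unit vector α ∈ ℝ^k there exists a hyperplane (a,b) ∈ ℋ tangent to the α-hemisphere He(α,c,r). -/
open scoped RealInnerProductSpace
open Real

noncomputable section

private lemma myaux_shrink {r δ ε s t : ℝ} (hrpos : 0 < r) (hδpos : 0 < δ)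
    (hεpos : 0 < ε) (hε1 : ε ≤ 1) (hεδ2 : ε ≤ δ / 2) (hε4 : ε * (4 * (r + 1)) ≤ δ)
    (hs : -r ≤ s) (hs' : s ≤ r) (ht : -1 ≤ t) (ht' : t ≤ 1)
    (hF : δ ≤ (r ^ 2 - s ^ 2) + max (s * t) 0) : |s - ε * t| < r := by
  have ht2 : t ^ 2 ≤ 1 := by nlinarith
  have hs2 : s ^ 2 ≤ r ^ 2 := by nlinarith
  have key : (s - ε * t) ^ 2 < r ^ 2 := by
    rcases le_or_gt (δ / 2) (r ^ 2 - s ^ 2) with hA | hA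
    · have hstl : -r ≤ s * t := by nlinarith
      have h2 : 2 * ε * r + ε ^ 2 < δ / 2 := by
        nlinarith [mul_le_mul_of_nonneg_left hε1 hεpos.le]
      nlinarith [mul_nonneg hεpos.le (show (0:ℝ) ≤ s * t + r by linarith),
        mul_le_mul_of_nonneg_left ht2 (sq_nonneg ε)]
    · have hB : δ / 2 ≤ s * t := by
        rcases le_total (s * t) 0 with h | h
        · rw [max_eq_right h] at hF; linarith
        · rw [max_eq_left h] at hF; linarith
      nlinarith [mul_le_mul_of_nonneg_left ht2 (sq_nonneg ε),
        mul_le_mul_of_nonneg_left hB hεpos.le,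
        mul_le_mul_of_nonneg_left hεδ2 hεpos.le]
  refine abs_lt.mpr ⟨?_, ?_⟩
  · nlinarith [sq_nonneg (s - ε * t + r)]
  · nlinarith [sq_nonneg (s - ε * t - r)]

private lemma myaux_far {r r' T s u : ℝ} (hr : 0 ≤ r) (hT : 0 < T)
    (hsu : s * u ≤ 0) (hsr : |s| = r) (hb : |s - T * u| ≤ r') : r ≤ r' := by
  have h1 := abs_le.mp hb
  have h2 : s ^ 2 = r ^ 2 := by rw [← sq_abs s, hsr]
  have hr' : 0 ≤ r' := le_trans (abs_nonneg _) hb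
  have hv2 : r ^ 2 ≤ (s - T * u) ^ 2 := by
    nlinarith [mul_nonneg hT.le (neg_nonneg.mpr hsu), sq_nonneg (T * u)]
  have hv2' : (s - T * u) ^ 2 ≤ r' ^ 2 := by nlinarith [h1.1, h1.2]
  exact le_of_pow_le_pow_left₀ (by norm_num) hr' (hv2.trans hv2')

/-- Let `ℋ` be a nonempty compact set of hyperplanes (pairs `(a,b)` with
`‖a‖ = 1`) in `ℝ^k`, and suppose `B(c,r)` intersects every hyperplane of `ℋ`. Then `B(c,r)`
is a smallest ball intersecting every hyperplane of `ℋ` iff every `α`-hemisphere of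
`B(c,r)` (for unit `α`) has a tangent hyperplane in `ℋ`, i.e. some `(a,b) ∈ ℋ` with
`|⟪a,c⟫ - b| = r` whose point of tangency `c + (b - ⟪a,c⟫)·a` lies in `He(α,c,r)`. -/
theorem smallest_ball_iff_hemispheres_covered {k : ℕ} (H : Set (Pt k × ℝ))
    (hne : H.Nonempty) (hunit : ∀ p ∈ H, ‖p.1‖ = 1) (hcomp : IsCompact H)
    (c : Pt k) (r : ℝ) (hr : 0 ≤ r)
    (hmeets : ∀ p ∈ H, |⟪p.1, c⟫ - p.2| ≤ r) :
    (∀ (c' : Pt k) (r' : ℝ), (∀ p ∈ H, |⟪p.1, c'⟫ - p.2| ≤ r') → r ≤ r') ↔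
      (∀ α : Pt k, ‖α‖ = 1 → ∃ p ∈ H, |⟪p.1, c⟫ - p.2| = r ∧
        ⟪α, c⟫ ≤ ⟪α, c + (p.2 - ⟪p.1, c⟫) • p.1⟫) := by
  constructor
  · -- (i) → (ii)
    intro hmin α hα
    by_contra hcon
    push_neg at hcon
    rcases eq_or_lt_of_le hr with hr0 | hrpos
    · obtain ⟨p, hp⟩ := hne
      have hs0 : ⟪p.1, c⟫ - p.2 = 0 := by
        have := hmeets p hp
        rw [← hr0] at this
        exact abs_eq_zero.mp (le_antisymm this (abs_nonneg _))
      have htan : |⟪p.1, c⟫ - p.2| = r := by rw [hs0, abs_zero, hr0]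
      have h2 : (p.2 - ⟪p.1, c⟫) = 0 := by linarith
      have := hcon p hp htan
      rw [h2, zero_smul, add_zero] at this
      exact lt_irrefl _ this
    · -- r > 0
      have htle : ∀ p ∈ H, |(⟪p.1, α⟫ : ℝ)| ≤ 1 := by
        intro p hp
        have := abs_real_inner_le_norm p.1 α
        rw [hunit p hp, hα, one_mul] at this
        exact this
      have hkey : ∀ p ∈ H, |⟪p.1, c⟫ - p.2| = r → 0 < (⟪p.1, c⟫ - p.2) * ⟪p.1, α⟫ := by
        intro p hp hps
        have h1 := hcon p hp hps
        have h2 : ⟪α, c + (p.2 - ⟪p.1, c⟫) • p.1⟫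
            = ⟪α, c⟫ + (p.2 - ⟪p.1, c⟫) * ⟪α, p.1⟫ := by
          rw [inner_add_right, real_inner_smul_right]
        rw [h2] at h1
        have h3 : (p.2 - ⟪p.1, c⟫) * ⟪α, p.1⟫ < 0 := by linarith
        rw [real_inner_comm p.1 α] at h3
        nlinarith [h3]
      -- the auxiliary positive function F
      have hscont : Continuous fun p : Pt k × ℝ => (⟪p.1, c⟫ : ℝ) - p.2 :=
        (Continuous.inner continuous_fst continuous_const).sub continuous_snd
      have htcont : Continuous fun p : Pt k × ℝ => (⟪p.1, α⟫ : ℝ) :=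
        Continuous.inner continuous_fst continuous_const
      have hFcont : Continuous fun p : Pt k × ℝ =>
          (r ^ 2 - (⟪p.1, c⟫ - p.2) ^ 2) + max ((⟪p.1, c⟫ - p.2) * ⟪p.1, α⟫) 0 :=
        (continuous_const.sub (hscont.pow 2)).add ((hscont.mul htcont).max continuous_const)
      obtain ⟨δ, hδpos, hδle⟩ : ∃ δ : ℝ, 0 < δ ∧ ∀ p ∈ H,
          δ ≤ (r ^ 2 - (⟪p.1, c⟫ - p.2) ^ 2) + max ((⟪p.1, c⟫ - p.2) * ⟪p.1, α⟫) 0 := by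
        obtain ⟨p₀, hp₀, hp₀min⟩ := hcomp.exists_isMinOn hne hFcont.continuousOn
        refine ⟨_, ?_, fun p hp => hp₀min hp⟩
        rcases lt_or_eq_of_le (hmeets p₀ hp₀) with h | h
        · have h1 := abs_lt.mp h
          have : (⟪p₀.1, c⟫ - p₀.2) ^ 2 < r ^ 2 := by nlinarith [h1.1, h1.2]
          exact lt_add_of_lt_of_nonneg (by linarith) (le_max_right _ _)
        · have hst := hkey p₀ hp₀ h
          have h2 : (⟪p₀.1, c⟫ - p₀.2) ^ 2 = r ^ 2 := by rw [← sq_abs, h]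
          have h3 : max ((⟪p₀.1, c⟫ - p₀.2) * ⟪p₀.1, α⟫) 0
              = (⟪p₀.1, c⟫ - p₀.2) * ⟪p₀.1, α⟫ := max_eq_left hst.le
          show 0 < r ^ 2 - (⟪p₀.1, c⟫ - p₀.2) ^ 2
            + max ((⟪p₀.1, c⟫ - p₀.2) * ⟪p₀.1, α⟫) 0
          rw [h3, h2]
          linarith
      obtain ⟨ε, hεpos, hε1, hεδ2, hε4⟩ :
          ∃ ε : ℝ, 0 < ε ∧ ε ≤ 1 ∧ ε ≤ δ / 2 ∧ ε * (4 * (r + 1)) ≤ δ := by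
        refine ⟨min 1 (min (δ / 2) (δ / (4 * (r + 1)))), ?_, min_le_left _ _,
          le_trans (min_le_right _ _) (min_le_left _ _), ?_⟩
        · exact lt_min one_pos (lt_min (by linarith) (by positivity))
        · have h : min 1 (min (δ / 2) (δ / (4 * (r + 1)))) ≤ δ / (4 * (r + 1)) :=
            le_trans (min_le_right _ _) (min_le_right _ _)
          rw [le_div_iff₀ (by positivity)] at h
          exact h
      -- pointwise strict bound for the shifted center
      have hstrict : ∀ p ∈ H, |(⟪p.1, c⟫ - p.2) - ε * ⟪p.1, α⟫| < r := by
        intro p hp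
        have hsr := abs_le.mp (hmeets p hp)
        have htr := abs_le.mp (htle p hp)
        exact myaux_shrink hrpos hδpos hεpos hε1 hεδ2 hε4 hsr.1 hsr.2 htr.1 htr.2
          (hδle p hp)
      have hval : ∀ p : Pt k × ℝ, (⟪p.1, c - ε • α⟫ : ℝ) - p.2
          = (⟪p.1, c⟫ - p.2) - ε * ⟪p.1, α⟫ := by
        intro p
        rw [inner_sub_right, real_inner_smul_right]
        ring
      have hgcont : Continuous fun p : Pt k × ℝ => |(⟪p.1, c - ε • α⟫ : ℝ) - p.2| :=
        ((Continuous.inner continuous_fst continuous_const).sub continuous_snd).abs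
      obtain ⟨q₀, hq₀, hq₀max⟩ := hcomp.exists_isMaxOn hne hgcont.continuousOn
      have hlt : |(⟪q₀.1, c - ε • α⟫ : ℝ) - q₀.2| < r := by
        rw [hval]; exact hstrict q₀ hq₀
      have := hmin (c - ε • α) (|(⟪q₀.1, c - ε • α⟫ : ℝ) - q₀.2|) (fun p hp => hq₀max hp)
      linarith
  · -- (ii) → (i)
    intro hcov c' r' hball
    by_cases hcc : c' = c
    · obtain ⟨p, hp⟩ := hne
      obtain ⟨q, hq, hqtan, _⟩ := hcov p.1 (hunit p hp)
      have := hball q hq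
      rw [hcc, hqtan] at this
      exact this
    · have hTpos : 0 < ‖c - c'‖ := by
        rw [norm_pos_iff, sub_ne_zero]
        exact fun h => hcc h.symm
      have hαnorm : ‖(‖c - c'‖⁻¹ : ℝ) • (c - c')‖ = 1 := by
        rw [norm_smul, norm_inv, Real.norm_eq_abs, abs_of_pos hTpos]
        exact inv_mul_cancel₀ hTpos.ne'
      obtain ⟨p, hp, hptan, hphem⟩ := hcov _ hαnorm
      have hsu : (⟪p.1, c⟫ - p.2) * ⟪p.1, (‖c - c'‖⁻¹ : ℝ) • (c - c')⟫ ≤ 0 := by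
        have h2 : ⟪(‖c - c'‖⁻¹ : ℝ) • (c - c'), c + (p.2 - ⟪p.1, c⟫) • p.1⟫
            = ⟪(‖c - c'‖⁻¹ : ℝ) • (c - c'), c⟫
              + (p.2 - ⟪p.1, c⟫) * ⟪(‖c - c'‖⁻¹ : ℝ) • (c - c'), p.1⟫ := by
          rw [inner_add_right, real_inner_smul_right]
        rw [h2] at hphem
        have h3 : 0 ≤ (p.2 - ⟪p.1, c⟫) * ⟪(‖c - c'‖⁻¹ : ℝ) • (c - c'), p.1⟫ := by
          linarith
        rw [real_inner_comm p.1 ((‖c - c'‖⁻¹ : ℝ) • (c - c'))] at h3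
        nlinarith [h3]
      have hc' : c' = c - ‖c - c'‖ • ((‖c - c'‖⁻¹ : ℝ) • (c - c')) := by
        rw [smul_smul, mul_inv_cancel₀ hTpos.ne', one_smul]
        abel
      have hval : (⟪p.1, c'⟫ : ℝ) - p.2
          = (⟪p.1, c⟫ - p.2) - ‖c - c'‖ * ⟪p.1, (‖c - c'‖⁻¹ : ℝ) • (c - c')⟫ := by
        conv_lhs => rw [hc']
        rw [inner_sub_right, real_inner_smul_right]
        ring
      have hb := hball p hp
      rw [hval] at hb
      exact myaux_far hr hTpos hsu hptan hb
end
end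

section
/- Let I ⊆ ℝ^k be a finite set of ideal points and let B(c,r) be a yolk of I. Then for every vector α ∈ ℝ^k there exists a unit vector a ∈ ℝ^k such that (a, ⟪a,c⟫ + r) is a median hyperplane of I (hence a hyperplane tangent to B(c,r)) and ⟪a,α⟫ ≥ 0. -/
open scoped RealInnerProductSpace
open Real

noncomputable section

lemma isClosed_card_left {k : ℕ} (I : Finset (Pt k)) (m : ℝ) : IsClosed {p : Pt k × ℝ |
      m ≤ ((I.filter fun x => ⟪p.1, x⟫ ≤ p.2).card : ℝ)} := by
  have h : {p : Pt k × ℝ | m ≤ ((I.filter fun x => ⟪p.1, x⟫ ≤ p.2).card : ℝ)} =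
      ⋃ S ∈ {S : Finset (Pt k) | S ⊆ I ∧ m ≤ (S.card : ℝ)},
        {p : Pt k × ℝ | ∀ i ∈ S, ⟪p.1, i⟫ ≤ p.2} := by
    ext p
    simp only [Set.mem_setOf_eq, Set.mem_iUnion, exists_prop]
    constructor
    · intro h
      exact ⟨I.filter fun x => ⟪p.1, x⟫ ≤ p.2, ⟨Finset.filter_subset _ _, h⟩,
        fun i hi => (Finset.mem_filter.mp hi).2⟩
    · rintro ⟨S, ⟨hSI, hm⟩, hall⟩
      refine hm.trans ?_
      exact_mod_cast Finset.card_le_card fun i hi => Finset.mem_filter.mpr ⟨hSI hi, hall i hi⟩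
  rw [h]
  refine Set.Finite.isClosed_biUnion ?_ ?_
  · exact (I.powerset.finite_toSet).subset fun S hS =>
      Finset.mem_coe.mpr (Finset.mem_powerset.mpr hS.1)
  · intro S _
    have h2 : {p : Pt k × ℝ | ∀ i ∈ S, ⟪p.1, i⟫ ≤ p.2}
        = ⋂ i ∈ S, {p : Pt k × ℝ | ⟪p.1, i⟫ ≤ p.2} := by ext p; simp
    rw [h2]
    exact isClosed_biInter fun i _ =>
      isClosed_le (Continuous.inner continuous_fst continuous_const) continuous_snd

lemma isClosed_card_right {k : ℕ} (I : Finset (Pt k)) (m : ℝ) : IsClosed {p : Pt k × ℝ |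
      m ≤ ((I.filter fun x => p.2 ≤ ⟪p.1, x⟫).card : ℝ)} := by
  have h : {p : Pt k × ℝ | m ≤ ((I.filter fun x => p.2 ≤ ⟪p.1, x⟫).card : ℝ)} =
      ⋃ S ∈ {S : Finset (Pt k) | S ⊆ I ∧ m ≤ (S.card : ℝ)},
        {p : Pt k × ℝ | ∀ i ∈ S, p.2 ≤ ⟪p.1, i⟫} := by
    ext p
    simp only [Set.mem_setOf_eq, Set.mem_iUnion, exists_prop]
    constructor
    · intro h
      exact ⟨I.filter fun x => p.2 ≤ ⟪p.1, x⟫, ⟨Finset.filter_subset _ _, h⟩,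
        fun i hi => (Finset.mem_filter.mp hi).2⟩
    · rintro ⟨S, ⟨hSI, hm⟩, hall⟩
      refine hm.trans ?_
      exact_mod_cast Finset.card_le_card fun i hi => Finset.mem_filter.mpr ⟨hSI hi, hall i hi⟩
  rw [h]
  refine Set.Finite.isClosed_biUnion ?_ ?_
  · exact (I.powerset.finite_toSet).subset fun S hS =>
      Finset.mem_coe.mpr (Finset.mem_powerset.mpr hS.1)
  · intro S _
    have h2 : {p : Pt k × ℝ | ∀ i ∈ S, p.2 ≤ ⟪p.1, i⟫}
        = ⋂ i ∈ S, {p : Pt k × ℝ | p.2 ≤ ⟪p.1, i⟫} := by ext p; simp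
    rw [h2]
    exact isClosed_biInter fun i _ =>
      isClosed_le continuous_snd (Continuous.inner continuous_fst continuous_const)

lemma isClosed_median {k : ℕ} (I : Finset (Pt k)) :
    IsClosed {p : Pt k × ℝ | IsMedianHyperplane I p.1 p.2} := by
  have h1 : IsClosed {p : Pt k × ℝ | ‖p.1‖ = 1} :=
    isClosed_eq continuous_fst.norm continuous_const
  have heq : {p : Pt k × ℝ | IsMedianHyperplane I p.1 p.2}
      = {p : Pt k × ℝ | ‖p.1‖ = 1} ∩
        ({p : Pt k × ℝ | (I.card : ℝ)/2 ≤ ((I.filter fun x => ⟪p.1, x⟫ ≤ p.2).card : ℝ)} ∩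
         {p : Pt k × ℝ | (I.card : ℝ)/2 ≤ ((I.filter fun x => p.2 ≤ ⟪p.1, x⟫).card : ℝ)}) := rfl
  rw [heq]
  exact h1.inter ((isClosed_card_left I _).inter (isClosed_card_right I _))

lemma median_neg {k : ℕ} {I : Finset (Pt k)} {a : Pt k} {b : ℝ}
    (h : IsMedianHyperplane I a b) : IsMedianHyperplane I (-a) (-b) := by
  obtain ⟨h1, h2, h3⟩ := h
  refine ⟨by simpa using h1, ?_, ?_⟩
  · have he : (I.filter fun x => ⟪-a, x⟫ ≤ -b) = I.filter fun x => b ≤ ⟪a, x⟫ :=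
      Finset.filter_congr fun x _ => by rw [inner_neg_left]; constructor <;> intro <;> linarith
    rw [he]; exact h3
  · have he : (I.filter fun x => -b ≤ ⟪-a, x⟫) = I.filter fun x => ⟪a, x⟫ ≤ b :=
      Finset.filter_congr fun x _ => by rw [inner_neg_left]; constructor <;> intro <;> linarith
    rw [he]; exact h2

/-- If `B(c,r)` is a yolk of a finite `I ⊆ ℝ^k`, then for every `α ∈ ℝ^k`
there is a unit vector `a` with `(a, ⟪a,c⟫ + r)` a median hyperplane of `I` (hence tangent
to `B(c,r)`) and `⟪a, α⟫ ≥ 0`. -/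
theorem tangent_median_hyperplane_every_hemisphere {k : ℕ} (I : Finset (Pt k))
    (c : Pt k) (r : ℝ) (hyolk : IsYolk I c r) (α : Pt k) :
    ∃ a : Pt k, ‖a‖ = 1 ∧ IsMedianHyperplane I a (⟪a, c⟫ + r) ∧ 0 ≤ ⟪a, α⟫ := by
  by_contra hcon
  push_neg at hcon
  set M : Set (Pt k × ℝ) := {p | IsMedianHyperplane I p.1 p.2} with hMdef
  by_cases hM : M.Nonempty
  swap
  · have h := hyolk.2 c (r - 1)
      (fun a b hab => absurd ⟨(a, b), hab⟩ hM)
    linarith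
  obtain ⟨p₀, hp₀⟩ := hM
  have hp₀m : IsMedianHyperplane I p₀.1 p₀.2 := hp₀
  have hr0 : 0 ≤ r := le_trans (abs_nonneg _) (hyolk.1 p₀.1 p₀.2 hp₀m)
  rcases eq_or_lt_of_le hr0 with hr | hr
  · -- r = 0
    have hb : ⟪p₀.1, c⟫ = p₀.2 := by
      have := hyolk.1 p₀.1 p₀.2 hp₀m
      have h2 := abs_nonneg (⟪p₀.1, c⟫ - p₀.2)
      have : |⟪p₀.1, c⟫ - p₀.2| = 0 := le_antisymm (by linarith) h2
      have := abs_eq_zero.mp this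
      linarith
    have e1 : ⟪p₀.1, c⟫ + r = p₀.2 := by rw [← hr, add_zero, hb]
    have hm1 : IsMedianHyperplane I p₀.1 (⟪p₀.1, c⟫ + r) := by rw [e1]; exact hp₀m
    have h1 : ⟪p₀.1, α⟫ < 0 := hcon p₀.1 hp₀m.1 hm1
    have hm2 : IsMedianHyperplane I (-p₀.1) (-p₀.2) := median_neg hp₀m
    have e2 : ⟪-p₀.1, c⟫ + r = -p₀.2 := by rw [inner_neg_left, ← hr, add_zero, hb]
    have hm2' : IsMedianHyperplane I (-p₀.1) (⟪-p₀.1, c⟫ + r) := by rw [e2]; exact hm2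
    have h2 : ⟪-p₀.1, α⟫ < 0 := hcon (-p₀.1) hm2.1 hm2'
    rw [inner_neg_left] at h2
    linarith
  · -- r > 0
    have hcomp : IsCompact M := by
      apply Metric.isCompact_of_isClosed_isBounded (isClosed_median I)
      apply Bornology.IsBounded.subset (Metric.isBounded_closedBall (x := (0 : Pt k × ℝ))
        (r := 1 + ‖c‖ + r))
      intro p hp
      have hpm : IsMedianHyperplane I p.1 p.2 := hp
      have h1 : |⟪p.1, c⟫ - p.2| ≤ r := hyolk.1 p.1 p.2 hpm
      have h2 : |⟪p.1, c⟫| ≤ ‖c‖ := by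
        have := abs_real_inner_le_norm p.1 c
        rw [hpm.1, one_mul] at this
        exact this
      have h3 : |p.2| ≤ ‖c‖ + r := by
        have ha := abs_sub_abs_le_abs_sub p.2 ⟪p.1, c⟫
        rw [abs_sub_comm] at ha
        linarith
      rw [Metric.mem_closedBall, dist_zero_right, Prod.norm_def]
      apply max_le
      · rw [hpm.1]; linarith [norm_nonneg c]
      · rw [Real.norm_eq_abs]; linarith
    have key : ∀ p ∈ M, ∃ ε κ : ℝ, 0 < ε ∧ 0 < κ ∧ ∃ U : Set (Pt k × ℝ), IsOpen U ∧ p ∈ U ∧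
        ∀ q ∈ U ∩ M, |(⟪q.1, c⟫ - q.2) - ε * ⟪q.1, α⟫| ≤ r - ε * κ := by
      intro p hp
      have hpm : IsMedianHyperplane I p.1 p.2 := hp
      have hb : |⟪p.1, c⟫ - p.2| ≤ r := hyolk.1 p.1 p.2 hpm
      have hcont : Continuous fun q : Pt k × ℝ => ⟪q.1, c⟫ - q.2 :=
        (Continuous.inner continuous_fst continuous_const).sub continuous_snd
      have hcontα : Continuous fun q : Pt k × ℝ => ⟪q.1, α⟫ :=
        Continuous.inner continuous_fst continuous_const
      have hgbound : ∀ q : Pt k × ℝ, q ∈ M → |⟪q.1, α⟫| ≤ ‖α‖ := by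
        intro q hq
        have hqm : IsMedianHyperplane I q.1 q.2 := hq
        have := abs_real_inner_le_norm q.1 α
        rw [hqm.1, one_mul] at this
        exact this
      rcases lt_or_eq_of_le hb with hlt | heqr
      · -- interior
        set δ := (r - |⟪p.1, c⟫ - p.2|) / 2 with hδ
        have hδpos : 0 < δ := by rw [hδ]; linarith
        have hd : (0:ℝ) < 2 * (‖α‖ + 1) := by positivity
        refine ⟨δ / (2 * (‖α‖ + 1)), ‖α‖ + 1, by positivity, by positivity,
          {q : Pt k × ℝ | |⟪q.1, c⟫ - q.2| < r - δ}, isOpen_lt hcont.abs continuous_const, ?_, ?_⟩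
        · show |⟪p.1, c⟫ - p.2| < r - δ
          rw [hδ]; linarith
        · intro q ⟨hqU, hqM⟩
          have hgq := hgbound q hqM
          set ε := δ / (2 * (‖α‖ + 1)) with hε
          have hεpos : 0 < ε := by positivity
          have hεeq : ε * (‖α‖ + 1) = δ / 2 := by rw [hε]; field_simp
          have h1 : |(⟪q.1, c⟫ - q.2) - ε * ⟪q.1, α⟫| ≤ |⟪q.1, c⟫ - q.2| + ε * |⟪q.1, α⟫| := by
            refine (abs_sub _ _).trans ?_
            rw [abs_mul, abs_of_pos hεpos]
          have h2 : ε * |⟪q.1, α⟫| ≤ ε * (‖α‖ + 1) :=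
            mul_le_mul_of_nonneg_left (by linarith) hεpos.le
          have hqU' : |⟪q.1, c⟫ - q.2| < r - δ := hqU
          linarith
      · -- tangent
        rcases (abs_eq hr0).mp heqr with h | h
        · -- ⟪p.1,c⟫ - p.2 = r, i.e. p.2 = ⟪p.1,c⟫ - r; use -p
          have hm2 : IsMedianHyperplane I (-p.1) (-p.2) := median_neg hpm
          have e2 : ⟪-p.1, c⟫ + r = -p.2 := by rw [inner_neg_left]; linarith
          have hm2' : IsMedianHyperplane I (-p.1) (⟪-p.1, c⟫ + r) := by rw [e2]; exact hm2
          have hgp : 0 < ⟪p.1, α⟫ := by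
            have := hcon (-p.1) hm2.1 hm2'
            rw [inner_neg_left] at this; linarith
          set m := ⟪p.1, α⟫ / 2 with hm
          have hmpos : 0 < m := by rw [hm]; linarith
          set ε := r / (2 * (‖α‖ + m + 1)) with hε
          have hεpos : 0 < ε := by positivity
          have hεeq : ε * (‖α‖ + m + 1) = r / 2 := by rw [hε]; field_simp
          refine ⟨ε, m, hεpos, hmpos,
            {q : Pt k × ℝ | r / 2 < ⟪q.1, c⟫ - q.2} ∩ {q | m < ⟪q.1, α⟫},
            (isOpen_lt continuous_const hcont).inter (isOpen_lt continuous_const hcontα),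
            ⟨by show r / 2 < ⟪p.1, c⟫ - p.2; linarith, by show m < ⟪p.1, α⟫; rw [hm]; linarith⟩, ?_⟩
          intro q ⟨⟨hq1, hq2⟩, hqM⟩
          have hq1' : r / 2 < ⟪q.1, c⟫ - q.2 := hq1
          have hq2' : m < ⟪q.1, α⟫ := hq2
          have hgq := hgbound q hqM
          have hqr : |⟪q.1, c⟫ - q.2| ≤ r := by
            have hqm : IsMedianHyperplane I q.1 q.2 := hqM
            exact hyolk.1 q.1 q.2 hqm
          rw [abs_le] at hqr ⊢
          constructor
          · -- lower bound: h₀ - εg ≥ r/2 - ε‖α‖ ≥ 0 ≥ -(r - εm)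
            have h5 : ε * ⟪q.1, α⟫ ≤ ε * ‖α‖ :=
              mul_le_mul_of_nonneg_left (le_trans (le_abs_self _) hgq) hεpos.le
            have h6 : ε * m ≤ ε * (‖α‖ + m + 1) :=
              mul_le_mul_of_nonneg_left (by linarith [norm_nonneg α]) hεpos.le
            have h7 : ε * ‖α‖ ≤ ε * (‖α‖ + m + 1) :=
              mul_le_mul_of_nonneg_left (by linarith) hεpos.le
            linarith
          · -- upper: h₀ - εg ≤ r - εm
            have h5 : ε * m ≤ ε * ⟪q.1, α⟫ := mul_le_mul_of_nonneg_left hq2'.le hεpos.le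
            linarith
        · -- ⟪p.1,c⟫ - p.2 = -r, i.e. p.2 = ⟪p.1,c⟫ + r
          have e1 : ⟪p.1, c⟫ + r = p.2 := by linarith
          have hm1 : IsMedianHyperplane I p.1 (⟪p.1, c⟫ + r) := by rw [e1]; exact hpm
          have hgp : ⟪p.1, α⟫ < 0 := hcon p.1 hpm.1 hm1
          set m := -⟪p.1, α⟫ / 2 with hm
          have hmpos : 0 < m := by rw [hm]; linarith
          set ε := r / (2 * (‖α‖ + m + 1)) with hε
          have hεpos : 0 < ε := by positivity
          have hεeq : ε * (‖α‖ + m + 1) = r / 2 := by rw [hε]; field_simp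
          refine ⟨ε, m, hεpos, hmpos,
            {q : Pt k × ℝ | ⟪q.1, c⟫ - q.2 < -(r / 2)} ∩ {q | ⟪q.1, α⟫ < -m},
            (isOpen_lt hcont continuous_const).inter (isOpen_lt hcontα continuous_const),
            ⟨by show ⟪p.1, c⟫ - p.2 < -(r / 2); linarith,
             by show ⟪p.1, α⟫ < -m; rw [hm]; linarith⟩, ?_⟩
          intro q ⟨⟨hq1, hq2⟩, hqM⟩
          have hq1' : ⟪q.1, c⟫ - q.2 < -(r / 2) := hq1
          have hq2' : ⟪q.1, α⟫ < -m := hq2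
          have hgq := hgbound q hqM
          have hqr : |⟪q.1, c⟫ - q.2| ≤ r := by
            have hqm : IsMedianHyperplane I q.1 q.2 := hqM
            exact hyolk.1 q.1 q.2 hqm
          rw [abs_le] at hqr ⊢
          constructor
          · have h5 : ε * ⟪q.1, α⟫ ≤ ε * (-m) := mul_le_mul_of_nonneg_left hq2'.le hεpos.le
            linarith
          · have h5 : ε * (-‖α‖) ≤ ε * ⟪q.1, α⟫ :=
              mul_le_mul_of_nonneg_left (by have := (abs_le.mp hgq).1; linarith) hεpos.le
            have h6 : ε * m ≤ ε * (‖α‖ + m + 1) :=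
              mul_le_mul_of_nonneg_left (by linarith [norm_nonneg α]) hεpos.le
            have h7 : ε * ‖α‖ ≤ ε * (‖α‖ + m + 1) :=
              mul_le_mul_of_nonneg_left (by linarith) hεpos.le
            linarith
    -- extract data
    choose! ε κ hε hκ U hUo hUm hU using key
    have hcover : M ⊆ ⋃ i : M, U i.1 := fun q hq => Set.mem_iUnion.mpr ⟨⟨q, hq⟩, hUm q hq⟩
    obtain ⟨t, ht⟩ := hcomp.elim_finite_subcover (fun i : M => U i.1)
      (fun i => hUo i.1 i.2) hcover
    have htne : t.Nonempty := by
      obtain ⟨i, hi, -⟩ := Set.mem_iUnion₂.mp (ht hp₀)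
      exact ⟨i, hi⟩
    set ε₀ := t.inf' htne (fun i => ε i.1) with hε₀def
    set κ₀ := t.inf' htne (fun i => κ i.1) with hκ₀def
    have hε₀ : 0 < ε₀ := (Finset.lt_inf'_iff htne).mpr fun i hi => hε i.1 i.2
    have hκ₀ : 0 < κ₀ := (Finset.lt_inf'_iff htne).mpr fun i hi => hκ i.1 i.2
    have hbound : ∀ a b, IsMedianHyperplane I a b → |⟪a, c - ε₀ • α⟫ - b| ≤ r - ε₀ * κ₀ := by
      intro a b hab
      have hq : (a, b) ∈ M := hab
      obtain ⟨i, hit, hqU⟩ := Set.mem_iUnion₂.mp (ht hq)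
      have h1 : |(⟪a, c⟫ - b) - ε i.1 * ⟪a, α⟫| ≤ r - ε i.1 * κ i.1 := hU i.1 i.2 (a, b) ⟨hqU, hq⟩
      have h2 : |⟪a, c⟫ - b| ≤ r := hyolk.1 a b hab
      have hle : ε₀ ≤ ε i.1 := Finset.inf'_le _ hit
      have hκle : κ₀ ≤ κ i.1 := Finset.inf'_le _ hit
      have hεi : 0 < ε i.1 := hε i.1 i.2
      have hin : ⟪a, c - ε₀ • α⟫ = ⟪a, c⟫ - ε₀ * ⟪a, α⟫ := by
        rw [inner_sub_right, real_inner_smul_right]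
      rw [hin]
      have e3 : ⟪a, c⟫ - ε₀ * ⟪a, α⟫ - b = (⟪a, c⟫ - b) - ε₀ * ⟪a, α⟫ := by ring
      rw [e3]
      have hid : ε i.1 * ((⟪a, c⟫ - b) - ε₀ * ⟪a, α⟫)
          = (ε i.1 - ε₀) * (⟪a, c⟫ - b) + ε₀ * ((⟪a, c⟫ - b) - ε i.1 * ⟪a, α⟫) := by ring
      have h3 : ε i.1 * |(⟪a, c⟫ - b) - ε₀ * ⟪a, α⟫|
          ≤ (ε i.1 - ε₀) * |⟪a, c⟫ - b| + ε₀ * |(⟪a, c⟫ - b) - ε i.1 * ⟪a, α⟫| := by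
        calc ε i.1 * |(⟪a, c⟫ - b) - ε₀ * ⟪a, α⟫|
            = |ε i.1 * ((⟪a, c⟫ - b) - ε₀ * ⟪a, α⟫)| := by rw [abs_mul, abs_of_pos hεi]
          _ = |(ε i.1 - ε₀) * (⟪a, c⟫ - b) + ε₀ * ((⟪a, c⟫ - b) - ε i.1 * ⟪a, α⟫)| := by
              rw [hid]
          _ ≤ |(ε i.1 - ε₀) * (⟪a, c⟫ - b)| + |ε₀ * ((⟪a, c⟫ - b) - ε i.1 * ⟪a, α⟫)| :=
              abs_add_le _ _
          _ = (ε i.1 - ε₀) * |⟪a, c⟫ - b| + ε₀ * |(⟪a, c⟫ - b) - ε i.1 * ⟪a, α⟫| := by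
              rw [abs_mul, abs_mul, abs_of_nonneg (by linarith : (0:ℝ) ≤ ε i.1 - ε₀),
                abs_of_nonneg hε₀.le]
      have h8 : ε i.1 * |(⟪a, c⟫ - b) - ε₀ * ⟪a, α⟫| ≤ ε i.1 * (r - ε₀ * κ i.1) := by
        nlinarith [mul_le_mul_of_nonneg_left h1 hε₀.le,
          mul_le_mul_of_nonneg_left h2 (by linarith : (0:ℝ) ≤ ε i.1 - ε₀)]
      have h9 : |(⟪a, c⟫ - b) - ε₀ * ⟪a, α⟫| ≤ r - ε₀ * κ i.1 :=
        le_of_mul_le_mul_left h8 hεi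
      have h10 : ε₀ * κ₀ ≤ ε₀ * κ i.1 := mul_le_mul_of_nonneg_left hκle hε₀.le
      linarith
    have hfin := hyolk.2 (c - ε₀ • α) (r - ε₀ * κ₀) hbound
    nlinarith [mul_pos hε₀ hκ₀]
end
end

section
/- Let I ⊆ ℝ² be a finite set of ideal points with |I| odd and let B(c,r) be a yolk of I with r > 0. Then there exist three unit vectors a₁, a₂, a₃ ∈ ℝ² such that each (aᵢ, ⟪aᵢ,c⟫ + r) is a median hyperplane of I (hence tangent to B(c,r)), and for every α ∈ ℝ² there is some i ∈ {1,2,3} with ⟪aᵢ,α⟫ ≥ 0. -/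
open scoped RealInnerProductSpace
open Real

noncomputable section

namespace ThreeTangentAux

lemma half_le_iff {n k : ℕ} (h : Odd n) : (n : ℝ) / 2 ≤ (k : ℝ) ↔ (n + 1) / 2 ≤ k := by
  obtain ⟨j, rfl⟩ := h
  constructor
  · intro hle
    have h2 : (2 * j + 1 : ℕ) ≤ 2 * k := by
      have : ((2 * j + 1 : ℕ) : ℝ) ≤ ((2 * k : ℕ) : ℝ) := by push_cast at hle ⊢; linarith
      exact_mod_cast this
    omega
  · intro hle
    have h2 : (2 * j + 1 : ℕ) ≤ 2 * k := by omega
    have : ((2 * j + 1 : ℕ) : ℝ) ≤ ((2 * k : ℕ) : ℝ) := by exact_mod_cast h2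
    push_cast at this ⊢
    linarith

lemma card_filter_le_iff (s : Finset (Pt 2)) (P : Pt 2 → Prop) [DecidablePred P] (m : ℕ) :
    m ≤ (s.filter P).card ↔ ∃ T ∈ s.powersetCard m, ∀ x ∈ T, P x := by
  constructor
  · intro h
    obtain ⟨T, hTsub, hTcard⟩ := Finset.exists_subset_card_eq h
    exact ⟨T, Finset.mem_powersetCard.2 ⟨hTsub.trans (s.filter_subset P), hTcard⟩,
      fun x hx => (Finset.mem_filter.1 (hTsub hx)).2⟩
  · rintro ⟨T, hT, hP⟩
    obtain ⟨hTs, hTc⟩ := Finset.mem_powersetCard.1 hT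
    calc m = T.card := hTc.symm
    _ ≤ _ := Finset.card_le_card (fun x hx => Finset.mem_filter.2 ⟨hTs hx, hP x hx⟩)

variable {I : Finset (Pt 2)}

lemma median_iff (hodd : Odd I.card) {a : Pt 2} {b : ℝ} :
    IsMedianHyperplane I a b ↔ ‖a‖ = 1 ∧
      (I.card + 1) / 2 ≤ (I.filter fun x => ⟪a, x⟫ ≤ b).card ∧
      (I.card + 1) / 2 ≤ (I.filter fun x => b ≤ ⟪a, x⟫).card := by
  unfold IsMedianHyperplane
  rw [half_le_iff hodd, half_le_iff hodd]

def Mset (I : Finset (Pt 2)) : Set (Pt 2 × ℝ) := {p | IsMedianHyperplane I p.1 p.2}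

lemma isClosed_Mset (hodd : Odd I.card) : IsClosed (Mset I) := by
  have h1 : Mset I =
      {p : Pt 2 × ℝ | ‖p.1‖ = 1} ∩
      ((⋃ T ∈ I.powersetCard ((I.card + 1) / 2), ⋂ x ∈ T, {p : Pt 2 × ℝ | ⟪p.1, x⟫ ≤ p.2}) ∩
       (⋃ T ∈ I.powersetCard ((I.card + 1) / 2), ⋂ x ∈ T, {p : Pt 2 × ℝ | p.2 ≤ ⟪p.1, x⟫})) := by
    ext p
    simp only [Mset, Set.mem_setOf_eq, median_iff hodd, card_filter_le_iff, Set.mem_inter_iff,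
      Set.mem_iUnion, Set.mem_iInter, exists_prop]
  rw [h1]
  have hcont : ∀ x : Pt 2, Continuous fun p : Pt 2 × ℝ => ⟪p.1, x⟫ := fun x =>
    continuous_fst.inner continuous_const
  refine IsClosed.inter (isClosed_eq continuous_fst.norm continuous_const) (IsClosed.inter ?_ ?_)
  · exact isClosed_biUnion_finset fun T _ =>
      isClosed_biInter fun x _ => isClosed_le (hcont x) continuous_snd
  · exact isClosed_biUnion_finset fun T _ =>
      isClosed_biInter fun x _ => isClosed_le continuous_snd (hcont x)

lemma isCompact_Mset (hodd : Odd I.card) : IsCompact (Mset I) := by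
  obtain ⟨R, hR⟩ : ∃ R : ℝ, ∀ x ∈ I, ‖x‖ ≤ R :=
    ⟨∑ x ∈ I, ‖x‖, fun x hx => Finset.single_le_sum (fun y _ => norm_nonneg y) hx⟩
  have hsub : Mset I ⊆ Metric.closedBall (0 : Pt 2) 1 ×ˢ Set.Icc (-R) R := by
    rintro ⟨a, b⟩ hp
    obtain ⟨hn, h2, h3⟩ := (median_iff hodd).1 hp
    have hm : 1 ≤ (I.card + 1) / 2 := by
      have : I.card ≠ 0 := by
        rintro hc
        rw [hc] at hodd
        exact (Nat.not_odd_iff_even.2 Even.zero) hodd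
      omega
    have habs : ∀ x ∈ I, |⟪a, x⟫| ≤ R := by
      intro x hx
      calc |⟪a, x⟫| ≤ ‖a‖ * ‖x‖ := abs_real_inner_le_norm a x
      _ = ‖x‖ := by rw [hn, one_mul]
      _ ≤ R := hR x hx
    obtain ⟨x₁, hx₁⟩ := Finset.card_pos.1 (lt_of_lt_of_le hm h2)
    obtain ⟨x₂, hx₂⟩ := Finset.card_pos.1 (lt_of_lt_of_le hm h3)
    rw [Finset.mem_filter] at hx₁ hx₂
    have hb1 : -R ≤ b := by
      have := abs_le.1 (habs x₁ hx₁.1)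
      linarith [hx₁.2]
    have hb2 : b ≤ R := by
      have := abs_le.1 (habs x₂ hx₂.1)
      linarith [hx₂.2]
    exact ⟨mem_closedBall_zero_iff.2 (le_of_eq hn), hb1, hb2⟩
  exact Metric.isCompact_of_isClosed_isBounded (isClosed_Mset hodd)
    ((Metric.isBounded_closedBall.prod (Metric.isBounded_Icc (-R) R)).subset hsub)

lemma median_neg {a : Pt 2} {b : ℝ} (h : IsMedianHyperplane I a b) :
    IsMedianHyperplane I (-a) (-b) := by
  obtain ⟨h1, h2, h3⟩ := h
  have e1 : (I.filter fun x => ⟪-a, x⟫ ≤ -b) = I.filter fun x => b ≤ ⟪a, x⟫ := by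
    apply Finset.filter_congr
    intro x _
    rw [inner_neg_left]
    constructor <;> intro h' <;> linarith
  have e2 : (I.filter fun x => -b ≤ ⟪-a, x⟫) = I.filter fun x => ⟪a, x⟫ ≤ b := by
    apply Finset.filter_congr
    intro x _
    rw [inner_neg_left]
    constructor <;> intro h' <;> linarith
  refine ⟨by simpa using h1, ?_, ?_⟩
  · rw [e1]; exact h3
  · rw [e2]; exact h2

def Sset (I : Finset (Pt 2)) (c : Pt 2) (r : ℝ) : Set (Pt 2) :=
  {a | IsMedianHyperplane I a (⟪a, c⟫ + r)}

lemma isCompact_Sset (hodd : Odd I.card) (c : Pt 2) (r : ℝ) : IsCompact (Sset I c r) := by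
  have hpre : Sset I c r = (fun a : Pt 2 => (a, ⟪a, c⟫ + r)) ⁻¹' Mset I := rfl
  have hclosed : IsClosed (Sset I c r) := by
    rw [hpre]
    exact (isClosed_Mset hodd).preimage
      (continuous_id.prodMk ((continuous_id.inner continuous_const).add continuous_const))
  have hb : Sset I c r ⊆ Metric.closedBall 0 1 := fun a ha =>
    mem_closedBall_zero_iff.2 (le_of_eq ha.1)
  exact Metric.isCompact_of_isClosed_isBounded hclosed (Metric.isBounded_closedBall.subset hb)

lemma exists_inner_nonpos (hodd : Odd I.card) {c : Pt 2} {r : ℝ}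
    (hyolk : IsYolk I c r) (hr : 0 < r) (v : Pt 2) :
    ∃ a ∈ Sset I c r, ⟪a, v⟫ ≤ 0 := by
  by_contra hcon
  push_neg at hcon
  have hM := isCompact_Mset hodd
  have hMne : (Mset I).Nonempty := by
    by_contra hne
    rw [Set.not_nonempty_iff_eq_empty] at hne
    have h0 := hyolk.2 c 0 (fun a b hab => by
      exact absurd (show (a, b) ∈ Mset I from hab) (by simp [hne]))
    linarith
  set X : Pt 2 × ℝ → ℝ := fun p => ⟪p.1, c⟫ - p.2 with hX
  set D : Pt 2 × ℝ → ℝ := fun p => ⟪p.1, v⟫ with hD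
  have hXcont : Continuous X := (continuous_fst.inner continuous_const).sub continuous_snd
  have hDcont : Continuous D := continuous_fst.inner continuous_const
  have hmem : ∀ p ∈ Mset I, |X p| ≤ r := fun p hp => hyolk.1 p.1 p.2 hp
  have habs : ∀ p ∈ Mset I, |D p| ≤ ‖v‖ := by
    intro p hp
    calc |D p| ≤ ‖p.1‖ * ‖v‖ := abs_real_inner_le_norm _ _
    _ = ‖v‖ := by rw [hp.1, one_mul]
  have hTplus : ∀ p ∈ Mset I, X p = -r → 0 < D p := by
    intro p hp hx
    have hb : p.2 = ⟪p.1, c⟫ + r := by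
      have : ⟪p.1, c⟫ - p.2 = -r := hx
      linarith
    have hS : p.1 ∈ Sset I c r := by
      show IsMedianHyperplane I p.1 (⟪p.1, c⟫ + r)
      rw [← hb]; exact hp
    exact hcon p.1 hS
  have hTminus : ∀ p ∈ Mset I, X p = r → D p < 0 := by
    intro p hp hx
    have hb : p.2 = ⟪p.1, c⟫ - r := by
      have : ⟪p.1, c⟫ - p.2 = r := hx
      linarith
    have hS : (-p.1) ∈ Sset I c r := by
      show IsMedianHyperplane I (-p.1) (⟪-p.1, c⟫ + r)
      have he : ⟪-p.1, c⟫ + r = -p.2 := by rw [inner_neg_left, hb]; ring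
      rw [he]
      exact median_neg hp
    have h0 := hcon _ hS
    rw [inner_neg_left] at h0
    simp only [hD]
    linarith
  obtain ⟨ε₁, hε₁pos, hε₁⟩ : ∃ ε, 0 < ε ∧ ∀ p ∈ Mset I, X p = -r → ε ≤ D p := by
    by_cases hne : (Mset I ∩ {p | X p = -r}).Nonempty
    · obtain ⟨p₀, hp₀, hmin⟩ := (hM.inter_right (isClosed_eq hXcont continuous_const)).exists_isMinOn
        hne hDcont.continuousOn
      exact ⟨D p₀, hTplus p₀ hp₀.1 hp₀.2, fun p hp hx => hmin (Set.mem_inter hp hx)⟩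
    · exact ⟨1, one_pos, fun p hp hx => absurd ⟨p, Set.mem_inter hp hx⟩ hne⟩
  obtain ⟨ε₂, hε₂pos, hε₂⟩ : ∃ ε, 0 < ε ∧ ∀ p ∈ Mset I, X p = r → D p ≤ -ε := by
    by_cases hne : (Mset I ∩ {p | X p = r}).Nonempty
    · obtain ⟨p₀, hp₀, hmax⟩ := (hM.inter_right (isClosed_eq hXcont continuous_const)).exists_isMaxOn
        hne hDcont.continuousOn
      refine ⟨-(D p₀), by simpa using hTminus p₀ hp₀.1 hp₀.2, fun p hp hx => ?_⟩
      have h5 : D p ≤ D p₀ := hmax (Set.mem_inter hp hx)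
      linarith
    · exact ⟨1, one_pos, fun p hp hx => absurd ⟨p, Set.mem_inter hp hx⟩ hne⟩
  obtain ⟨η₁, hη₁pos, hη₁⟩ : ∃ η, 0 < η ∧ ∀ p ∈ Mset I, D p ≤ ε₁ / 2 → η ≤ X p + r := by
    have hA : IsCompact (Mset I ∩ {p | D p ≤ ε₁ / 2}) :=
      hM.inter_right (isClosed_le hDcont continuous_const)
    have hpos : ∀ p ∈ Mset I ∩ {p | D p ≤ ε₁ / 2}, 0 < X p + r := by
      rintro p ⟨hp, hd⟩
      have hd' : D p ≤ ε₁ / 2 := hd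
      have hge : -r ≤ X p := (abs_le.1 (hmem p hp)).1
      rcases eq_or_lt_of_le hge with he | hlt
      · exfalso
        have := hε₁ p hp he.symm
        linarith
      · linarith
    by_cases hne : (Mset I ∩ {p | D p ≤ ε₁ / 2}).Nonempty
    · obtain ⟨p₀, hp₀, hmin⟩ := hA.exists_isMinOn hne
        ((hXcont.add continuous_const).continuousOn)
      exact ⟨X p₀ + r, hpos p₀ hp₀, fun p hp hd => hmin (Set.mem_inter hp hd)⟩
    · exact ⟨1, one_pos, fun p hp hd => absurd ⟨p, Set.mem_inter hp hd⟩ hne⟩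
  obtain ⟨η₂, hη₂pos, hη₂⟩ : ∃ η, 0 < η ∧ ∀ p ∈ Mset I, -(ε₂ / 2) ≤ D p → η ≤ r - X p := by
    have hA : IsCompact (Mset I ∩ {p | -(ε₂ / 2) ≤ D p}) :=
      hM.inter_right (isClosed_le continuous_const hDcont)
    have hpos : ∀ p ∈ Mset I ∩ {p | -(ε₂ / 2) ≤ D p}, 0 < r - X p := by
      rintro p ⟨hp, hd⟩
      have hge : X p ≤ r := (abs_le.1 (hmem p hp)).2
      rcases eq_or_lt_of_le hge with he | hlt
      · exfalso
        have := hε₂ p hp he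
        have hd' : -(ε₂ / 2) ≤ D p := hd
        linarith
      · linarith
    by_cases hne : (Mset I ∩ {p | -(ε₂ / 2) ≤ D p}).Nonempty
    · obtain ⟨p₀, hp₀, hmin⟩ := hA.exists_isMinOn hne
        ((continuous_const.sub hXcont).continuousOn)
      exact ⟨r - X p₀, hpos p₀ hp₀, fun p hp hd => hmin (Set.mem_inter hp hd)⟩
    · exact ⟨1, one_pos, fun p hp hd => absurd ⟨p, Set.mem_inter hp hd⟩ hne⟩
  set t : ℝ := min η₁ η₂ / (2 * ‖v‖ + 2) with ht_def
  have hminpos : 0 < min η₁ η₂ := lt_min hη₁pos hη₂pos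
  have hden : (0 : ℝ) < 2 * ‖v‖ + 2 := by positivity
  have ht : 0 < t := div_pos hminpos hden
  have htv : t * ‖v‖ < min η₁ η₂ := by
    rw [ht_def, div_mul_eq_mul_div, div_lt_iff₀ hden]
    have hv0 : (0 : ℝ) ≤ ‖v‖ := norm_nonneg v
    nlinarith
  set c' : Pt 2 := c + t • v with hc'
  have hinner : ∀ a : Pt 2, ⟪a, c'⟫ = ⟪a, c⟫ + t * ⟪a, v⟫ := by
    intro a
    rw [hc', inner_add_right, real_inner_smul_right]
  have hkey : ∀ p ∈ Mset I, |⟪p.1, c'⟫ - p.2| < r := by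
    intro p hp
    have hXb := abs_le.1 (hmem p hp)
    have hDb := abs_le.1 (habs p hp)
    have he : ⟪p.1, c'⟫ - p.2 = X p + t * D p := by
      rw [hinner]; simp only [hX, hD]; ring
    rw [he, abs_lt]
    constructor
    · by_cases hD2 : D p ≤ ε₁ / 2
      · have h1 := hη₁ p hp hD2
        have h2 : -(t * ‖v‖) ≤ t * D p := by nlinarith [hDb.1]
        have h3 : t * ‖v‖ < η₁ := lt_of_lt_of_le htv (min_le_left _ _)
        linarith
      · push_neg at hD2
        have h4 : 0 < t * D p := mul_pos ht (lt_trans (half_pos hε₁pos) hD2)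
        linarith [hXb.1]
    · by_cases hD2 : -(ε₂ / 2) ≤ D p
      · have h1 := hη₂ p hp hD2
        have h2 : t * D p ≤ t * ‖v‖ := by nlinarith [hDb.2]
        have h3 : t * ‖v‖ < η₂ := lt_of_lt_of_le htv (min_le_right _ _)
        linarith
      · push_neg at hD2
        have h4 : t * D p < 0 := mul_neg_of_pos_of_neg ht (by linarith)
        linarith [hXb.2]
  obtain ⟨q, hq, hmax⟩ := hM.exists_isMaxOn hMne
    (((continuous_fst.inner continuous_const).sub continuous_snd).abs.continuousOn :
      ContinuousOn (fun p : Pt 2 × ℝ => |⟪p.1, c'⟫ - p.2|) (Mset I))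
  have hle := hyolk.2 c' (|⟪q.1, c'⟫ - q.2|)
    (fun a b hab => hmax (show (a, b) ∈ Mset I from hab))
  exact absurd (lt_of_le_of_lt hle (hkey q hq)) (lt_irrefl r)

lemma zero_mem_closure (hodd : Odd I.card) {c : Pt 2} {r : ℝ}
    (hyolk : IsYolk I c r) (hr : 0 < r) :
    (0 : Pt 2) ∈ closure (convexHull ℝ (Sset I c r)) := by
  by_contra h0
  obtain ⟨f, u, hfu, hub⟩ := geometric_hahn_banach_point_closed
    ((convex_convexHull ℝ _).closure) isClosed_closure h0
  set v := (InnerProductSpace.toDual ℝ (Pt 2)).symm f with hv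
  obtain ⟨a, haS, hav⟩ := exists_inner_nonpos hodd hyolk hr v
  have hfa : f a = ⟪v, a⟫ := (InnerProductSpace.toDual_symm_apply).symm
  have h1 : u < f a := hub a (subset_closure (subset_convexHull ℝ _ haS))
  have h2 : f 0 = 0 := map_zero f
  rw [hfa, real_inner_comm] at h1
  rw [h2] at hfu
  linarith

lemma exists_triple (hodd : Odd I.card) {c : Pt 2} {r : ℝ}
    (hyolk : IsYolk I c r) (hr : 0 < r) :
    ∃ a₁ a₂ a₃, a₁ ∈ Sset I c r ∧ a₂ ∈ Sset I c r ∧ a₃ ∈ Sset I c r ∧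
    ∃ w₁ w₂ w₃ : ℝ, 0 ≤ w₁ ∧ 0 ≤ w₂ ∧ 0 ≤ w₃ ∧ w₁ + w₂ + w₃ = 1 ∧
      w₁ • a₁ + w₂ • a₂ + w₃ • a₃ = 0 := by
  classical
  set S := Sset I c r with hSdef
  set φ : (Fin 3 → ℝ) × (Fin 3 → Pt 2) → Pt 2 := fun p => ∑ i, p.1 i • p.2 i with hφ
  set K : Set (Pt 2) := φ '' (stdSimplex ℝ (Fin 3) ×ˢ Set.univ.pi fun _ => S) with hK
  have hmemK : ∀ (w₁ w₂ w₃ : ℝ) (x₁ x₂ x₃ : Pt 2), 0 ≤ w₁ → 0 ≤ w₂ → 0 ≤ w₃ →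
      w₁ + w₂ + w₃ = 1 → x₁ ∈ S → x₂ ∈ S → x₃ ∈ S →
      w₁ • x₁ + w₂ • x₂ + w₃ • x₃ ∈ K := by
    intro w₁ w₂ w₃ x₁ x₂ x₃ h₁ h₂ h₃ hsum hx₁ hx₂ hx₃
    refine ⟨(![w₁, w₂, w₃], ![x₁, x₂, x₃]), ⟨⟨fun i => ?_, ?_⟩, fun i _ => ?_⟩, ?_⟩
    · fin_cases i <;> simpa
    · simp [Fin.sum_univ_three]
      try linarith
    · fin_cases i <;> simpa
    · simp [hφ, Fin.sum_univ_three]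
      try abel
  have hKcomp : IsCompact K := by
    apply IsCompact.image
    · exact (isCompact_stdSimplex _ _).prod
        (isCompact_univ_pi fun _ => isCompact_Sset hodd c r)
    · apply continuous_finset_sum
      intro i _
      exact ((continuous_apply i).comp continuous_fst).smul
        ((continuous_apply i).comp continuous_snd)
  have hsub : convexHull ℝ S ⊆ K := by
    intro y hy
    rw [convexHull_eq_union] at hy
    simp only [Set.mem_iUnion] at hy
    obtain ⟨tf, hts, hai, hyt⟩ := hy
    have hcard : tf.card ≤ 3 := by
      have h1 := hai.card_le_finrank_succ
      rw [Fintype.card_coe] at h1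
      have h2 : Module.finrank ℝ (vectorSpan ℝ (Set.range ((↑) : tf → Pt 2))) ≤
          Module.finrank ℝ (Pt 2) := Submodule.finrank_le _
      rw [finrank_euclideanSpace_fin] at h2
      omega
    have htne : tf.Nonempty := by
      rcases tf.eq_empty_or_nonempty with h | h
      · exfalso; rw [h] at hyt; simp at hyt
      · exact h
    have hcard1 : 1 ≤ tf.card := Finset.card_pos.2 htne
    have hc : tf.card = 1 ∨ tf.card = 2 ∨ tf.card = 3 := by omega
    rcases hc with h | h | h
    · obtain ⟨aa, rfl⟩ := Finset.card_eq_one.1 h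
      rw [Finset.coe_singleton, convexHull_singleton] at hyt
      have ha : aa ∈ S := hts (by simp)
      rw [Set.mem_singleton_iff] at hyt
      rw [hyt]
      have := hmemK 1 0 0 aa aa aa zero_le_one le_rfl le_rfl (by ring) ha ha ha
      simpa using this
    · obtain ⟨a, b, hab, rfl⟩ := Finset.card_eq_two.1 h
      have ha : a ∈ S := hts (by simp)
      have hb : b ∈ S := hts (by simp)
      rw [Finset.coe_insert, Finset.coe_singleton, convexHull_pair] at hyt
      obtain ⟨u, w, hu, hw, huw, hy⟩ := hyt
      subst hy
      have := hmemK u w 0 a b b hu hw le_rfl (by linarith) ha hb hb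
      simpa using this
    · obtain ⟨a, b, d, hab, had, hbd, rfl⟩ := Finset.card_eq_three.1 h
      have ha : a ∈ S := hts (by simp)
      have hb : b ∈ S := hts (by simp)
      have hd : d ∈ S := hts (by simp)
      rw [Finset.convexHull_eq] at hyt
      obtain ⟨w, hw0, hw1, hwc⟩ := hyt
      rw [Finset.centerMass_eq_of_sum_1 _ _ hw1] at hwc
      have hsum3 : w a + w b + w d = 1 := by
        rw [Finset.sum_insert (by simp [hab, had]), Finset.sum_insert (by simp [hbd]),
          Finset.sum_singleton] at hw1
        linarith
      have hcomb : w a • a + w b • b + w d • d = y := by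
        rw [Finset.sum_insert (by simp [hab, had]), Finset.sum_insert (by simp [hbd]),
          Finset.sum_singleton] at hwc
        simp only [id] at hwc
        rw [← hwc]; abel
      rw [← hcomb]
      exact hmemK _ _ _ a b d (hw0 a (by simp)) (hw0 b (by simp)) (hw0 d (by simp))
        hsum3 ha hb hd
  have h0K : (0 : Pt 2) ∈ K := by
    have := zero_mem_closure hodd hyolk hr
    have hcl : closure (convexHull ℝ S) ⊆ K := by
      rw [← hKcomp.isClosed.closure_eq]
      exact closure_mono hsub
    exact hcl this
  obtain ⟨⟨ws, xs⟩, ⟨hwss, hxs⟩, hsum⟩ := h0K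
  refine ⟨xs 0, xs 1, xs 2, hxs 0 (Set.mem_univ _), hxs 1 (Set.mem_univ _),
    hxs 2 (Set.mem_univ _), ws 0, ws 1, ws 2, hwss.1 0, hwss.1 1, hwss.1 2, ?_, ?_⟩
  · have := hwss.2
    rw [Fin.sum_univ_three] at this
    exact this
  · have : φ (ws, xs) = 0 := hsum
    rw [hφ] at this
    simp only at this
    rw [Fin.sum_univ_three] at this
    exact this

lemma final_prop (a₁ a₂ a₃ : Pt 2) (w₁ w₂ w₃ : ℝ) (h₁ : 0 ≤ w₁) (h₂ : 0 ≤ w₂) (h₃ : 0 ≤ w₃)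
    (hsum : w₁ + w₂ + w₃ = 1) (hcomb : w₁ • a₁ + w₂ • a₂ + w₃ • a₃ = 0) :
    ∀ α : Pt 2, 0 ≤ ⟪a₁, α⟫ ∨ 0 ≤ ⟪a₂, α⟫ ∨ 0 ≤ ⟪a₃, α⟫ := by
  intro α
  by_contra hcon
  push_neg at hcon
  obtain ⟨n1, n2, n3⟩ := hcon
  have hz : w₁ * ⟪a₁, α⟫ + w₂ * ⟪a₂, α⟫ + w₃ * ⟪a₃, α⟫ = 0 := by
    have h0 := congrArg (fun y : Pt 2 => ⟪y, α⟫) hcomb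
    simp only [inner_add_left, real_inner_smul_left, inner_zero_left] at h0
    exact h0
  have e1 : w₁ * ⟪a₁, α⟫ ≤ 0 := mul_nonpos_of_nonneg_of_nonpos h₁ n1.le
  have e2 : w₂ * ⟪a₂, α⟫ ≤ 0 := mul_nonpos_of_nonneg_of_nonpos h₂ n2.le
  have e3 : w₃ * ⟪a₃, α⟫ ≤ 0 := mul_nonpos_of_nonneg_of_nonpos h₃ n3.le
  have z1 : w₁ * ⟪a₁, α⟫ = 0 := by linarith
  have z2 : w₂ * ⟪a₂, α⟫ = 0 := by linarith
  have z3 : w₃ * ⟪a₃, α⟫ = 0 := by linarith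
  have hw1 : w₁ = 0 := by
    rcases mul_eq_zero.1 z1 with h | h
    · exact h
    · exact absurd h n1.ne
  have hw2 : w₂ = 0 := by
    rcases mul_eq_zero.1 z2 with h | h
    · exact h
    · exact absurd h n2.ne
  have hw3 : w₃ = 0 := by
    rcases mul_eq_zero.1 z3 with h | h
    · exact h
    · exact absurd h n3.ne
  rw [hw1, hw2, hw3] at hsum
  norm_num at hsum

end ThreeTangentAux

/-- If `|I|` is odd and `B(c,r)` is a yolk of `I ⊆ ℝ²` with `r > 0`, then
there are three unit vectors `a₁, a₂, a₃` such that each `(aᵢ, ⟪aᵢ,c⟫ + r)` is a median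
hyperplane of `I` (hence tangent to `B(c,r)`), and every `α ∈ ℝ²` satisfies `⟪aᵢ,α⟫ ≥ 0`
for some `i`. -/
theorem three_tangent_median_hyperplanes (I : Finset (Pt 2)) (hodd : Odd I.card)
    (c : Pt 2) (r : ℝ) (hyolk : IsYolk I c r) (hr : 0 < r) :
    ∃ a₁ a₂ a₃ : Pt 2, ‖a₁‖ = 1 ∧ ‖a₂‖ = 1 ∧ ‖a₃‖ = 1 ∧
      IsMedianHyperplane I a₁ (⟪a₁, c⟫ + r) ∧
      IsMedianHyperplane I a₂ (⟪a₂, c⟫ + r) ∧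
      IsMedianHyperplane I a₃ (⟪a₃, c⟫ + r) ∧
      ∀ α : Pt 2, 0 ≤ ⟪a₁, α⟫ ∨ 0 ≤ ⟪a₂, α⟫ ∨ 0 ≤ ⟪a₃, α⟫ := by
  obtain ⟨a₁, a₂, a₃, h1, h2, h3, w₁, w₂, w₃, hw1, hw2, hw3, hsum, hcomb⟩ :=
    ThreeTangentAux.exists_triple hodd hyolk hr
  exact ⟨a₁, a₂, a₃, h1.1, h2.1, h3.1, h1, h2, h3,
    ThreeTangentAux.final_prop a₁ a₂ a₃ w₁ w₂ w₃ hw1 hw2 hw3 hsum hcomb⟩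
end
end
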